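/- arXiv:1608.02242 — 5 statements merged into one kernel-verified Lean document; each statement's English description precedes it below -/
import Mathlib

section
/- The map Θ : Z × Γ → Ultrafilter X × Ultrafilter X defined by Θ(η, g) = (η, σ̄(g)(η)) is injective, and for every n ∈ ℕ its restriction to Z × {g ∈ Γ : |g|_S ≤ n} (where Z carries the subspace topology from Ultrafilter X and {g : |g|_S ≤ n} the discrete topology) is a homeomorphism onto cl(E_n) ∩ (Z × Z) with its subspace topology. -/
open scoped BigOperators symmDiff Classical

universe u v

/-- A sofic approximation of a group `Γ` generated by a finite symmetric set `S`. -/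
structure SoficApprox (Γ : Type u) [Group Γ] (S : Finset Γ) where
  F : ℕ → Finset Γ
  F_mono : Monotone F
  F_one : ∀ i, (1 : Γ) ∈ F i
  F_exhausts : ∀ g : Γ, ∃ i, g ∈ F i
  eps : ℕ → ℝ
  eps_pos : ∀ i, 0 < eps i
  eps_lim : Filter.Tendsto eps Filter.atTop (nhds 0)
  X : ℕ → Type
  finX : ∀ i, Finite (X i)
  neX : ∀ i, Nonempty (X i)
  sigma : (i : ℕ) → Γ → Equiv.Perm (X i)
  Y : (i : ℕ) → Set (X i)
  Y_large : ∀ i, (1 - eps i) * (Nat.card (X i) : ℝ) ≤ ((Y i).ncard : ℝ)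
  sigma_mul : ∀ i, ∀ g ∈ F i, ∀ h ∈ F i, ∀ y ∈ Y i, sigma i g (sigma i h y) = sigma i (g * h) y
  sigma_free : ∀ i, ∀ g ∈ F i, g ≠ 1 → ∀ y ∈ Y i, sigma i g y ≠ y

namespace SoficApprox

variable {Γ : Type u} [Group Γ] {S : Finset Γ}

/-- The total space (space of graphs) `X = ⨆ i, X i`. -/
abbrev Total (A : SoficApprox Γ S) : Type := Σ i, A.X i

/-- The bijection `σ(g)` of the total space acting as `σ_i(g)` on each `X i`. -/
def perm (A : SoficApprox Γ S) (g : Γ) : Equiv.Perm A.Total :=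
  Equiv.sigmaCongrRight fun i => A.sigma i g

/-- The continuous extension `σ̄(g)` of `σ(g)` to the Stone–Čech compactification. -/
def permBar (A : SoficApprox Γ S) (g : Γ) : Ultrafilter A.Total → Ultrafilter A.Total :=
  Ultrafilter.map (A.perm g)

/-- The union `Y = ⨆ i, Y i` inside the total space. -/
def Ytot (A : SoficApprox Γ S) : Set A.Total := {p | p.2 ∈ A.Y p.1}

/-- `∂Y`: free ultrafilters containing `Y`. -/
def bdY (A : SoficApprox Γ S) : Set (Ultrafilter A.Total) :=
  {η | (∀ p : A.Total, η ≠ pure p) ∧ A.Ytot ∈ η}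

/-- The core `Z = ⋂_{g ∈ Γ} σ̄(g)''(∂Y)` of the sofic boundary. -/
def core (A : SoficApprox Γ S) : Set (Ultrafilter A.Total) :=
  ⋂ g : Γ, A.permBar g '' A.bdY

/-- The `S`-labelled graph structure on `X i`, with edges `{x, σ_i(s)(x)}` for `s ∈ S`. -/
def graph (A : SoficApprox Γ S) (i : ℕ) : SimpleGraph (A.X i) where
  Adj x y := x ≠ y ∧ ∃ s ∈ S, A.sigma i s x = y ∨ A.sigma i s y = x
  symm := ⟨fun x y h => ⟨h.1.symm, by obtain ⟨s, hs, h'⟩ := h.2; exact ⟨s, hs, h'.symm⟩⟩⟩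
  loopless := ⟨fun x h => h.1 rfl⟩

/-- An admissible metric on the total space: a metric restricting to the edge-path
metric on each `X i` and with distances between distinct components tending to `∞`. -/
def Admissible (A : SoficApprox Γ S) (d : A.Total → A.Total → ℝ) : Prop :=
  (∀ p q, d p q = d q p) ∧
  (∀ p q r, d p r ≤ d p q + d q r) ∧
  (∀ p q, d p q = 0 ↔ p = q) ∧
  (∀ p q, 0 ≤ d p q) ∧
  (∀ (i : ℕ) (x y : A.X i), d ⟨i, x⟩ ⟨i, y⟩ = ((A.graph i).dist x y : ℝ)) ∧
  (∀ R : ℝ, ∃ N : ℕ, ∀ i j : ℕ, i ≠ j → N ≤ i + j →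
      ∀ (x : A.X i) (y : A.X j), R < d ⟨i, x⟩ ⟨j, y⟩)

/-- The entourage `E_R` viewed inside `βX × βX`. -/
def ER (A : SoficApprox Γ S) (d : A.Total → A.Total → ℝ) (R : ℝ) :
    Set (Ultrafilter A.Total × Ultrafilter A.Total) :=
  {p | ∃ a b : A.Total, d a b ≤ R ∧ p = (pure a, pure b)}

end SoficApprox

/-- Word length of `g` with respect to the generating set `S`. -/
noncomputable def wordLength {Γ : Type u} [Group Γ] (S : Finset Γ) (g : Γ) : ℕ :=
  sInf {n | ∃ l : List Γ, (∀ x ∈ l, x ∈ S) ∧ l.length = n ∧ l.prod = g}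

/-- Word length of an element of a free group. -/
noncomputable def fgLength {α : Type v} (w : FreeGroup α) : ℕ :=
  sInf {n | ∃ l : List (α × Bool), l.length = n ∧ FreeGroup.mk l = w}

/-- The canonical homomorphism `F_S → Γ` extending the inclusion `S ↪ Γ`. -/
noncomputable def pihom {Γ : Type u} [Group Γ] (S : Finset Γ) : FreeGroup ↥S →* Γ :=
  FreeGroup.lift fun s => (s : Γ)

/-- The homomorphism `τ : F_S → Sym(X)` with `τ(s) = σ(s)` for `s ∈ S`. -/
noncomputable def SoficApprox.tau {Γ : Type u} [Group Γ] {S : Finset Γ}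
    (A : SoficApprox Γ S) : FreeGroup ↥S →* Equiv.Perm A.Total :=
  FreeGroup.lift fun s => A.perm (s : Γ)

section Aux

lemma fin3_exists_ne : ∀ u w : Fin 3, ∃ v : Fin 3, v ≠ u ∧ v ≠ w := by decide

lemma three_coloring {β : Type*} [Finite β] (f : Equiv.Perm β) :
    ∃ c : β → Fin 3, ∀ x, f x ≠ x → c (f x) ≠ c x := by
  classical
  haveI : Fintype β := Fintype.ofFinite _
  suffices h : ∀ s : Finset β, ∃ c : β → Fin 3, ∀ x ∈ s, f x ∈ s → f x ≠ x → c (f x) ≠ c x by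
    obtain ⟨c, hc⟩ := h Finset.univ
    exact ⟨c, fun x hx => hc x (Finset.mem_univ _) (Finset.mem_univ _) hx⟩
  intro s
  induction s using Finset.induction with
  | empty => exact ⟨fun _ => 0, by simp⟩
  | @insert a t ha ih =>
    obtain ⟨c, hc⟩ := ih
    obtain ⟨v, hv1, hv2⟩ := fin3_exists_ne (c (f a)) (c (f.symm a))
    refine ⟨Function.update c a v, ?_⟩
    intro x hx hfx hne
    rcases Finset.mem_insert.mp hx with rfl | hxt
    · rw [Function.update_of_ne hne, Function.update_self]
      exact fun h => hv1 h.symm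
    · have hxa : x ≠ a := fun h => ha (h ▸ hxt)
      by_cases hfa : f x = a
      · have hxs : x = f.symm a := by rw [← hfa, Equiv.symm_apply_apply]
        rw [hfa, Function.update_self, Function.update_of_ne hxa, hxs]
        exact hv2
      · have hft : f x ∈ t := (Finset.mem_insert.mp hfx).resolve_left hfa
        rw [Function.update_of_ne hfa, Function.update_of_ne hxa]
        exact hc x hxt hft hne

end Aux
namespace SoficApprox

variable {Γ : Type u} [Group Γ] {S : Finset Γ} (A : SoficApprox Γ S)

lemma perm_apply (g : Γ) (i : ℕ) (x : A.X i) : A.perm g ⟨i, x⟩ = ⟨i, A.sigma i g x⟩ := rfl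

lemma mem_Ytot {p : A.Total} : p ∈ A.Ytot ↔ p.2 ∈ A.Y p.1 := Iff.rfl

lemma exists_F_all (gs : List Γ) : ∃ N, ∀ g ∈ gs, g ∈ A.F N := by
  induction gs with
  | nil => exact ⟨0, by simp⟩
  | cons g gs ih =>
    obtain ⟨N1, hN1⟩ := ih
    obtain ⟨N2, hN2⟩ := A.F_exhausts g
    refine ⟨max N1 N2, fun x hx => ?_⟩
    rcases List.mem_cons.mp hx with rfl | hx
    · exact A.F_mono (le_max_right _ _) hN2
    · exact A.F_mono (le_max_left _ _) (hN1 x hx)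

lemma finite_small (N : ℕ) : {p : A.Total | p.1 < N}.Finite := by
  have h : {p : A.Total | p.1 < N} ⊆ ⋃ i ∈ Set.Iio N, Set.range (Sigma.mk i) := by
    rintro ⟨i, x⟩ hi
    exact Set.mem_biUnion hi ⟨x, rfl⟩
  exact Set.Finite.subset
    (Set.Finite.biUnion (Set.finite_Iio N)
      (fun i _ => haveI := A.finX i; Set.finite_range _)) h

lemma tail_mem {η : Ultrafilter A.Total} (hη : ∀ p, η ≠ pure p) (N : ℕ) :
    {p : A.Total | N ≤ p.1} ∈ η := by
  by_contra h
  rw [← Ultrafilter.compl_mem_iff_notMem] at h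
  have hc : {p : A.Total | N ≤ p.1}ᶜ ⊆ {p | p.1 < N} := by
    intro p hp; simpa using hp
  obtain ⟨x, _, hx⟩ := Ultrafilter.eq_pure_of_finite_mem ((A.finite_small N).subset hc) h
  exact hη x hx

lemma sigma_one_fix {i : ℕ} {y : A.X i} (hy : y ∈ A.Y i) : A.sigma i 1 y = y := by
  have h := A.sigma_mul i 1 (A.F_one i) 1 (A.F_one i) y hy
  rw [one_mul] at h
  exact (A.sigma i 1).injective h

lemma perm_one_fix {p : A.Total} (hp : p ∈ A.Ytot) : A.perm 1 p = p := by
  obtain ⟨i, x⟩ := p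
  rw [A.perm_apply, A.sigma_one_fix hp]

lemma map_congr_of_agree {α β : Type*} {η : Ultrafilter α} {f g : α → β} {s : Set α}
    (hs : s ∈ η) (h : ∀ x ∈ s, f x = g x) : Ultrafilter.map f η = Ultrafilter.map g η := by
  apply Ultrafilter.coe_injective
  rw [Ultrafilter.coe_map, Ultrafilter.coe_map]
  exact Filter.map_congr (Filter.eventuallyEq_of_mem hs h)

lemma permBar_comp {η : Ultrafilter A.Total} (hfree : ∀ p, η ≠ pure p) (hY : A.Ytot ∈ η)
    (g h : Γ) : A.permBar g (A.permBar h η) = A.permBar (g * h) η := by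
  obtain ⟨N, hN⟩ := A.exists_F_all [g, h]
  unfold permBar
  rw [Ultrafilter.map_map]
  apply map_congr_of_agree (Filter.inter_mem hY (A.tail_mem hfree N))
  rintro ⟨i, x⟩ ⟨hx, hN'⟩
  have hgi : g ∈ A.F i := A.F_mono hN' (hN g (by simp))
  have hhi : h ∈ A.F i := A.F_mono hN' (hN h (by simp))
  show (⟨i, A.sigma i g (A.sigma i h x)⟩ : A.Total) = ⟨i, A.sigma i (g * h) x⟩
  rw [A.sigma_mul i g hgi h hhi x hx]

lemma permBar_one_fix {η : Ultrafilter A.Total} (hY : A.Ytot ∈ η) : A.permBar 1 η = η := by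
  have h1 : A.permBar 1 η = Ultrafilter.map id η :=
    map_congr_of_agree hY (fun p hp => A.perm_one_fix hp)
  rw [h1]
  exact Ultrafilter.coe_injective (by rw [Ultrafilter.coe_map]; exact Filter.map_id)

lemma map_ne_pure {η : Ultrafilter A.Total} (hfree : ∀ p, η ≠ pure p) (g : Γ) (p : A.Total) :
    A.permBar g η ≠ pure p := by
  intro hp
  have h1 : {p} ∈ A.permBar g η := by rw [hp]; exact rfl
  rw [permBar, Ultrafilter.mem_map] at h1
  have h2 : ((A.perm g) ⁻¹' {p} : Set A.Total).Finite :=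
    Set.Finite.preimage (Set.injOn_of_injective (A.perm g).injective) (Set.finite_singleton p)
  obtain ⟨x, _, hx⟩ := Ultrafilter.eq_pure_of_finite_mem h2 h1
  exact hfree x hx

lemma core_spec {η : Ultrafilter A.Total} (hη : η ∈ A.core) (g : Γ) :
    ∃ ζ ∈ A.bdY, A.permBar g ζ = η := by
  have h := Set.mem_iInter.mp hη g
  obtain ⟨ζ, hζ, hz⟩ := h
  exact ⟨ζ, hζ, hz⟩

lemma core_subset_bdY : A.core ⊆ A.bdY := by
  intro η hη
  obtain ⟨ζ, hζ, rfl⟩ := A.core_spec hη 1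
  refine ⟨A.map_ne_pure hζ.1 1, ?_⟩
  rw [permBar, Ultrafilter.mem_map]
  exact Filter.mem_of_superset hζ.2
    (fun p hp => by rw [Set.mem_preimage, A.perm_one_fix hp]; exact hp)

lemma core_invariant {η : Ultrafilter A.Total} (hη : η ∈ A.core) (g : Γ) :
    A.permBar g η ∈ A.core := by
  rw [core, Set.mem_iInter]
  intro h
  obtain ⟨ζ, hζ, hz⟩ := A.core_spec hη (g⁻¹ * h)
  refine ⟨ζ, hζ, ?_⟩
  rw [← hz, A.permBar_comp hζ.1 hζ.2, mul_inv_cancel_left]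

lemma exists_coloring (g : Γ) :
    ∃ c : A.Total → Fin 3, ∀ p, A.perm g p ≠ p → c (A.perm g p) ≠ c p := by
  have h : ∀ i, ∃ c : A.X i → Fin 3, ∀ x, A.sigma i g x ≠ x → c (A.sigma i g x) ≠ c x := by
    intro i
    haveI := A.finX i
    exact three_coloring (A.sigma i g)
  choose c hc using h
  refine ⟨fun p => c p.1 p.2, ?_⟩
  rintro ⟨i, x⟩ hp
  rw [A.perm_apply] at hp ⊢
  refine hc i x (fun h => hp ?_)
  rw [h]

lemma permBar_free {ζ : Ultrafilter A.Total} (hζ : ζ ∈ A.bdY) {g : Γ} (hg : g ≠ 1) :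
    A.permBar g ζ ≠ ζ := by
  intro heq
  obtain ⟨c, hc⟩ := A.exists_coloring g
  obtain ⟨N, hN⟩ := A.exists_F_all [g]
  have hW : A.Ytot ∩ {p | N ≤ p.1} ∈ ζ := Filter.inter_mem hζ.2 (A.tail_mem hζ.1 N)
  have hjex : ∃ j : Fin 3, c ⁻¹' {j} ∈ ζ := by
    have huniv : c ⁻¹' {0} ∪ (c ⁻¹' {1} ∪ c ⁻¹' {2}) ∈ ζ := by
      have he : c ⁻¹' {0} ∪ (c ⁻¹' {1} ∪ c ⁻¹' {2}) = Set.univ := by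
        ext p
        simp only [Set.mem_union, Set.mem_preimage, Set.mem_singleton_iff, Set.mem_univ,
          iff_true]
        omega
      rw [he]; exact Filter.univ_mem
    rcases Ultrafilter.union_mem_iff.mp huniv with h | h
    · exact ⟨0, h⟩
    · rcases Ultrafilter.union_mem_iff.mp h with h | h
      · exact ⟨1, h⟩
      · exact ⟨2, h⟩
  obtain ⟨j, hj⟩ := hjex
  have hj' : (A.perm g) ⁻¹' (c ⁻¹' {j}) ∈ ζ := by
    have : c ⁻¹' {j} ∈ A.permBar g ζ := by rw [heq]; exact hj
    rwa [permBar, Ultrafilter.mem_map] at this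
  obtain ⟨p, ⟨hpY, hpN⟩, hpj, hpj'⟩ :=
    Ultrafilter.nonempty_of_mem (Filter.inter_mem hW (Filter.inter_mem hj hj'))
  have hgi : g ∈ A.F p.1 := A.F_mono hpN (hN g (by simp))
  have hne : A.perm g p ≠ p := by
    obtain ⟨i, x⟩ := p
    rw [A.perm_apply]
    intro h
    injection h with h1 h2
    exact A.sigma_free i g hgi hg x hpY h2
  refine hc p hne ?_
  rw [Set.mem_preimage, Set.mem_singleton_iff] at hpj
  rw [Set.mem_preimage, Set.mem_preimage, Set.mem_singleton_iff] at hpj'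
  rw [hpj, hpj']

lemma core_inj {η : Ultrafilter A.Total} (hη : η ∈ A.core) {g h : Γ}
    (heq : A.permBar g η = A.permBar h η) : g = h := by
  obtain ⟨ζ, hζ, rfl⟩ := A.core_spec hη g⁻¹
  rw [A.permBar_comp hζ.1 hζ.2, A.permBar_comp hζ.1 hζ.2, mul_inv_cancel,
    A.permBar_one_fix hζ.2] at heq
  by_contra hne
  refine A.permBar_free hζ (g := h * g⁻¹) ?_ heq.symm
  intro h1
  apply hne
  have : (h * g⁻¹) * g = 1 * g := by rw [h1]
  rw [inv_mul_cancel_right, one_mul] at this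
  exact this.symm

end SoficApprox
section Words

variable {Γ : Type u} [Group Γ] {S : Finset Γ}

lemma exists_word_of_gen (hSsymm : ∀ s ∈ S, s⁻¹ ∈ S)
    (hSgen : Subgroup.closure (S : Set Γ) = ⊤) (g : Γ) :
    ∃ l : List Γ, (∀ x ∈ l, x ∈ S) ∧ l.length = wordLength S g ∧ l.prod = g := by
  have hg : g ∈ Subgroup.closure (S : Set Γ) := by rw [hSgen]; exact Subgroup.mem_top g
  have hex : ∃ l : List Γ, (∀ x ∈ l, x ∈ S) ∧ l.prod = g := by
    induction hg using Subgroup.closure_induction with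
    | mem x hx => exact ⟨[x], by simpa using hx, by simp⟩
    | one => exact ⟨[], by simp, by simp⟩
    | mul x y _ _ hx hy =>
      obtain ⟨lx, hx1, hx2⟩ := hx
      obtain ⟨ly, hy1, hy2⟩ := hy
      refine ⟨lx ++ ly, ?_, by rw [List.prod_append, hx2, hy2]⟩
      intro z hz
      rcases List.mem_append.mp hz with h | h
      exacts [hx1 z h, hy1 z h]
    | inv x _ hx =>
      obtain ⟨l, h1, h2⟩ := hx
      refine ⟨(l.map fun y => y⁻¹).reverse, ?_, by rw [← List.prod_inv_reverse, h2]⟩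
      intro z hz
      rw [List.mem_reverse, List.mem_map] at hz
      obtain ⟨y, hy, rfl⟩ := hz
      exact hSsymm y (h1 y hy)
  obtain ⟨l0, hl1, hl2⟩ := hex
  have hne : {n | ∃ l : List Γ, (∀ x ∈ l, x ∈ S) ∧ l.length = n ∧ l.prod = g}.Nonempty :=
    ⟨l0.length, l0, hl1, rfl, hl2⟩
  exact Nat.sInf_mem hne

lemma wordLength_le {g : Γ} {l : List Γ} (h1 : ∀ x ∈ l, x ∈ S) (h2 : l.prod = g) :
    wordLength S g ≤ l.length :=
  Nat.sInf_le ⟨l, h1, rfl, h2⟩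

lemma exists_fg_word {α : Type v} (w : FreeGroup α) :
    ∃ l : List (α × Bool), l.length = fgLength w ∧ FreeGroup.mk l = w := by
  have hne : {n | ∃ l : List (α × Bool), l.length = n ∧ FreeGroup.mk l = w}.Nonempty :=
    ⟨w.toWord.length, w.toWord, rfl, FreeGroup.mk_toWord⟩
  exact Nat.sInf_mem hne

lemma fgLength_mk_le {α : Type v} (l : List (α × Bool)) :
    fgLength (FreeGroup.mk l) ≤ l.length :=
  Nat.sInf_le ⟨l, rfl, rfl⟩

lemma pihom_mk (l : List (↥S × Bool)) :
    pihom S (FreeGroup.mk l) = (l.map fun x => cond x.2 ((x.1 : Γ)) ((x.1 : Γ))⁻¹).prod := by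
  rw [pihom, FreeGroup.lift_mk]

lemma wordLength_pihom_le (hSsymm : ∀ s ∈ S, s⁻¹ ∈ S) (w : FreeGroup ↥S) :
    wordLength S (pihom S w) ≤ fgLength w := by
  obtain ⟨l, hlen, rfl⟩ := exists_fg_word w
  rw [pihom_mk]
  calc wordLength S ((l.map fun x => cond x.2 ((x.1 : Γ)) ((x.1 : Γ))⁻¹).prod)
      ≤ (l.map fun x => cond x.2 ((x.1 : Γ)) ((x.1 : Γ))⁻¹).length := by
        apply wordLength_le ?_ rfl
        intro z hz
        rw [List.mem_map] at hz
        obtain ⟨y, _, rfl⟩ := hz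
        cases y.2
        · exact hSsymm _ y.1.2
        · exact y.1.2
    _ = l.length := List.length_map _
    _ ≤ fgLength (FreeGroup.mk l) := hlen.le

lemma finite_ball (hSsymm : ∀ s ∈ S, s⁻¹ ∈ S)
    (hSgen : Subgroup.closure (S : Set Γ) = ⊤) (n : ℕ) :
    {g : Γ | wordLength S g ≤ n}.Finite := by
  have hsub : {g : Γ | wordLength S g ≤ n} ⊆
      (fun l : List ↥S => (l.map Subtype.val).prod) '' {l | l.length ≤ n} := by
    intro g hg
    obtain ⟨l, h1, h2, h3⟩ := exists_word_of_gen hSsymm hSgen g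
    refine ⟨l.attach.map fun x => (⟨x.1, h1 x.1 x.2⟩ : ↥S), ?_, ?_⟩
    · simpa using h2 ▸ hg
    · show ((l.attach.map fun x => (⟨x.1, h1 x.1 x.2⟩ : ↥S)).map Subtype.val).prod = g
      rw [List.map_map]
      have he : l.attach.map (Subtype.val ∘ fun x => (⟨x.1, h1 x.1 x.2⟩ : ↥S)) = l :=
        List.attach_map_subtype_val l
      rw [he, h3]
  exact Set.Finite.subset (Set.Finite.image _ (List.finite_length_le _ n)) hsub

lemma finite_fg_ball (n : ℕ) : {w : FreeGroup ↥S | fgLength w ≤ n}.Finite := by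
  have hsub : {w : FreeGroup ↥S | fgLength w ≤ n} ⊆
      FreeGroup.mk '' {l : List (↥S × Bool) | l.length ≤ n} := by
    intro w hw
    obtain ⟨l, h1, h2⟩ := exists_fg_word w
    exact ⟨l, by rw [Set.mem_setOf_eq, h1]; exact hw, h2⟩
  exact Set.Finite.subset (Set.Finite.image _ (List.finite_length_le _ n)) hsub

end Words

namespace SoficApprox

variable {Γ : Type u} [Group Γ] {S : Finset Γ} (A : SoficApprox Γ S)
variable {d : A.Total → A.Total → ℝ}

lemma dist_step (hd : A.Admissible d) {s : Γ} (hs : s ∈ S) (i : ℕ) (x : A.X i) :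
    d ⟨i, x⟩ ⟨i, A.sigma i s x⟩ ≤ 1 := by
  obtain ⟨_, _, _, _, hgr, _⟩ := hd
  rw [hgr]
  by_cases h : A.sigma i s x = x
  · rw [h, SimpleGraph.dist_self]; norm_num
  · have hadj : (A.graph i).Adj x (A.sigma i s x) :=
      show x ≠ A.sigma i s x ∧ ∃ t ∈ S, A.sigma i t x = A.sigma i s x ∨
        A.sigma i t (A.sigma i s x) = x from ⟨fun he => h he.symm, s, hs, Or.inl rfl⟩
    have := SimpleGraph.dist_le (SimpleGraph.Walk.cons hadj SimpleGraph.Walk.nil)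
    simp only [SimpleGraph.Walk.length_cons, SimpleGraph.Walk.length_nil] at this
    exact_mod_cast this

lemma dist_word (hd : A.Admissible d) {N : ℕ} (l : List Γ) (hmem : ∀ x ∈ l, x ∈ S)
    (hsuf : ∀ t : List Γ, t <:+ l → t.prod ∈ A.F N) (hlet : ∀ x ∈ l, x ∈ A.F N) :
    ∀ (i : ℕ) (x : A.X i), N ≤ i → x ∈ A.Y i →
      d ⟨i, x⟩ (A.perm l.prod ⟨i, x⟩) ≤ (l.length : ℝ) := by
  induction l with
  | nil =>
    intro i x hNi hx
    rw [List.prod_nil, A.perm_one_fix hx]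
    simp [(hd.2.2.1 _ _).mpr rfl]
  | cons s t ih =>
    intro i x hNi hx
    have hsS : s ∈ S := hmem s (by simp)
    have htF : t.prod ∈ A.F i := A.F_mono hNi (hsuf t (List.suffix_cons s t))
    have hsF : s ∈ A.F i := A.F_mono hNi (hlet s (by simp))
    have hz : A.perm ((s :: t).prod) ⟨i, x⟩ = A.perm s (A.perm t.prod ⟨i, x⟩) := by
      rw [List.prod_cons, A.perm_apply, A.perm_apply, A.perm_apply,
        A.sigma_mul i s hsF t.prod htF x hx]
    rw [hz, A.perm_apply]
    have h1 : d ⟨i, x⟩ ⟨i, A.sigma i t.prod x⟩ ≤ (t.length : ℝ) := by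
      have := ih (fun y hy => hmem y (by simp [hy]))
        (fun u hu => hsuf u (hu.trans (List.suffix_cons s t)))
        (fun y hy => hlet y (by simp [hy])) i x hNi hx
      rwa [A.perm_apply] at this
    have h2 := A.dist_step hd hsS i (A.sigma i t.prod x)
    have h3 := hd.2.1 ⟨i, x⟩ ⟨i, A.sigma i t.prod x⟩ ⟨i, A.sigma i s (A.sigma i t.prod x)⟩
    rw [A.perm_apply, List.length_cons]
    push_cast
    linarith

end SoficApprox
section Fg

variable {Γ : Type u} [Group Γ] {S : Finset Γ}

lemma fgLength_mul_le {α : Type v} (w1 w2 : FreeGroup α) :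
    fgLength (w1 * w2) ≤ fgLength w1 + fgLength w2 := by
  obtain ⟨l1, h1, rfl⟩ := exists_fg_word w1
  obtain ⟨l2, h2, rfl⟩ := exists_fg_word w2
  rw [FreeGroup.mul_mk, ← h1, ← h2, ← List.length_append]
  exact fgLength_mk_le _

lemma fgLength_of_le {α : Type v} (a : α) : fgLength (FreeGroup.of a) ≤ 1 := by
  have h : FreeGroup.of a = FreeGroup.mk [(a, true)] := rfl
  rw [h]
  exact fgLength_mk_le _

lemma fgLength_of_inv_le {α : Type v} (a : α) : fgLength (FreeGroup.of a)⁻¹ ≤ 1 := by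
  have h : FreeGroup.of a = FreeGroup.mk [(a, true)] := rfl
  rw [h, FreeGroup.inv_mk]
  exact le_trans (fgLength_mk_le _) (by simp [FreeGroup.invRev])

lemma fgLength_one {α : Type v} : fgLength (1 : FreeGroup α) ≤ 0 := by
  rw [FreeGroup.one_eq_mk]
  exact fgLength_mk_le _

end Fg

namespace SoficApprox

variable {Γ : Type u} [Group Γ] {S : Finset Γ} (A : SoficApprox Γ S)
variable {d : A.Total → A.Total → ℝ}

lemma theta_mem_closure (hSsymm : ∀ s ∈ S, s⁻¹ ∈ S)
    (hSgen : Subgroup.closure (S : Set Γ) = ⊤) (hd : A.Admissible d)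
    {η : Ultrafilter A.Total} (hη : η ∈ A.core) {g : Γ} {n : ℕ}
    (hg : wordLength S g ≤ n) :
    ((η, A.permBar g η) : Ultrafilter A.Total × Ultrafilter A.Total) ∈
      closure (A.ER d (n : ℝ)) := by
  obtain ⟨l, hlS, hlen, hprod⟩ := exists_word_of_gen hSsymm hSgen g
  obtain ⟨N, hN⟩ := A.exists_F_all (l.tails.map List.prod ++ l)
  have hsuf : ∀ t : List Γ, t <:+ l → t.prod ∈ A.F N := fun t ht =>
    hN _ (List.mem_append.mpr (Or.inl (List.mem_map_of_mem ((List.mem_tails _ _).mpr ht))))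
  have hlet : ∀ x ∈ l, x ∈ A.F N := fun x hx => hN x (List.mem_append.mpr (Or.inr hx))
  have hbd := A.core_subset_bdY hη
  have hG : A.Ytot ∩ {p | N ≤ p.1} ∈ η := Filter.inter_mem hbd.2 (A.tail_mem hbd.1 N)
  have h3 : Filter.Tendsto (A.perm g) ↑η ↑(A.permBar g η) := by
    rw [permBar, Ultrafilter.coe_map]
    exact Filter.tendsto_map
  have htd : Filter.Tendsto
      (fun p => ((pure p : Ultrafilter A.Total), (pure (A.perm g p) : Ultrafilter A.Total)))
      ↑η (nhds (η, A.permBar g η)) :=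
    Filter.Tendsto.prodMk_nhds (Ultrafilter.tendsto_pure_self η)
      ((Ultrafilter.tendsto_pure_self (A.permBar g η)).comp h3)
  refine mem_closure_of_tendsto htd ?_
  filter_upwards [hG] with p hp
  refine ⟨p, A.perm g p, ?_, rfl⟩
  obtain ⟨i, y⟩ := p
  calc d ⟨i, y⟩ (A.perm g ⟨i, y⟩) = d ⟨i, y⟩ (A.perm l.prod ⟨i, y⟩) := by rw [hprod]
    _ ≤ (l.length : ℝ) := A.dist_word hd l hlS hsuf hlet i y hp.2 hp.1
    _ ≤ (n : ℝ) := by exact_mod_cast hlen ▸ hg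

lemma tau_eq_perm_aux {N : ℕ} (l : List (↥S × Bool))
    (hsuf : ∀ t : List (↥S × Bool), t <:+ l → pihom S (FreeGroup.mk t) ∈ A.F N)
    (hlet : ∀ x ∈ l, ((x.1 : Γ) ∈ A.F N))
    {p : A.Total} (hp : p ∈ A.Ytot) (hN : N ≤ p.1) :
    A.tau (FreeGroup.mk l) p = A.perm (pihom S (FreeGroup.mk l)) p := by
  induction l with
  | nil =>
    rw [← FreeGroup.one_eq_mk, map_one, map_one, A.perm_one_fix hp]
    rfl
  | cons a t ih =>
    obtain ⟨i, x⟩ := p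
    have hsplit : FreeGroup.mk (a :: t) = FreeGroup.mk [a] * FreeGroup.mk t := by
      rw [FreeGroup.mul_mk]; rfl
    have hIH := ih (fun u hu => hsuf u (hu.trans (List.suffix_cons a t)))
      (fun z hz => hlet z (by simp [hz]))
    have htF : pihom S (FreeGroup.mk t) ∈ A.F i :=
      A.F_mono hN (hsuf t (List.suffix_cons a t))
    have hsF : (a.1 : Γ) ∈ A.F i := A.F_mono hN (hlet a (by simp))
    have hall : pihom S (FreeGroup.mk (a :: t)) ∈ A.F i :=
      A.F_mono hN (hsuf (a :: t) (List.suffix_refl _))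
    rw [hsplit, map_mul, map_mul, Equiv.Perm.mul_apply, hIH]
    set h : Γ := pihom S (FreeGroup.mk t) with hh
    obtain ⟨s, b⟩ := a
    have hofa : pihom S (FreeGroup.mk [(s, b)]) = cond b ((s : Γ)) ((s : Γ))⁻¹ := by
      rw [pihom_mk]; simp
    cases b with
    | true =>
      have h1 : A.tau (FreeGroup.mk [(s, true)]) = A.perm (s : Γ) := by
        show A.tau (FreeGroup.of s) = _
        rw [tau, FreeGroup.lift_apply_of]
      rw [h1, hofa]
      simp only [cond_true]
      show (⟨i, A.sigma i (s : Γ) (A.sigma i h x)⟩ : A.Total) = A.perm ((s : Γ) * h) ⟨i, x⟩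
      rw [A.perm_apply, A.sigma_mul i (s : Γ) hsF h htF x hp]
    | false =>
      have h1 : A.tau (FreeGroup.mk [(s, false)]) = (A.perm (s : Γ))⁻¹ := by
        have h2 : FreeGroup.mk [(s, false)] = (FreeGroup.of s)⁻¹ := by
          show _ = (FreeGroup.mk [(s, true)])⁻¹
          rw [FreeGroup.inv_mk]
          simp [FreeGroup.invRev]
        rw [h2, map_inv, tau, FreeGroup.lift_apply_of]
      rw [h1, hofa]
      simp only [cond_false]
      -- goal : (A.perm s)⁻¹ (A.perm h ⟨i,x⟩) = A.perm (s⁻¹ * h) ⟨i,x⟩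
      have hsinvh : ((s : Γ))⁻¹ * h ∈ A.F i := by
        have := hsuf ((s, false) :: t) (List.suffix_refl _)
        rw [hsplit, map_mul, hofa] at this
        simpa using A.F_mono hN this
      have key : A.perm (s : Γ) (A.perm (((s : Γ))⁻¹ * h) ⟨i, x⟩) = A.perm h ⟨i, x⟩ := by
        rw [A.perm_apply, A.perm_apply, A.perm_apply,
          A.sigma_mul i (s : Γ) hsF (((s : Γ))⁻¹ * h) hsinvh x hp, mul_inv_cancel_left]
      rw [← key, Equiv.Perm.inv_def, Equiv.symm_apply_apply]

end SoficApprox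
section Top

lemma continuous_ultrafilter_map {α : Type u} {β : Type v} (f : α → β) :
    Continuous (Ultrafilter.map f : Ultrafilter α → Ultrafilter β) := by
  have h : @Continuous _ _ Ultrafilter.topologicalSpace
      (TopologicalSpace.generateFrom (ultrafilterBasis β)) (Ultrafilter.map f) := by
    rw [continuous_generateFrom_iff]
    rintro s ⟨t, rfl⟩
    have he : (Ultrafilter.map f) ⁻¹' {u : Ultrafilter β | t ∈ u} =
        {u : Ultrafilter α | f ⁻¹' t ∈ u} := by
      ext u
      exact Ultrafilter.mem_map
    rw [he]
    exact ultrafilter_isOpen_basic _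
  exact h

lemma continuous_of_discrete_snd {X G Z : Type*} [TopologicalSpace X] [TopologicalSpace G]
    [DiscreteTopology G] [TopologicalSpace Z] {f : X → G → Z}
    (hf : ∀ g, Continuous fun x => f x g) : Continuous fun p : X × G => f p.1 p.2 := by
  rw [continuous_iff_continuousAt]
  rintro ⟨x, g⟩
  have h : Filter.Tendsto (fun x' => f x' g) (nhds x) (nhds (f x g)) := (hf g).tendsto x
  unfold ContinuousAt
  rw [nhds_prod_eq, nhds_discrete G, Filter.prod_pure]
  exact Filter.tendsto_map'_iff.mpr h

end Top

namespace SoficApprox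

variable {Γ : Type u} [Group Γ] {S : Finset Γ} (A : SoficApprox Γ S)
variable {d : A.Total → A.Total → ℝ}

lemma tauBar_eq_permBar {η : Ultrafilter A.Total} (hη : η ∈ A.core) (w : FreeGroup ↥S) :
    Ultrafilter.map (A.tau w) η = A.permBar (pihom S w) η := by
  obtain ⟨l, _, rfl⟩ := exists_fg_word w
  obtain ⟨N, hN⟩ := A.exists_F_all
    ((l.tails.map fun t => pihom S (FreeGroup.mk t)) ++ l.map fun x => (x.1 : Γ))
  have hbd := A.core_subset_bdY hη
  apply map_congr_of_agree (Filter.inter_mem hbd.2 (A.tail_mem hbd.1 N))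
  rintro p ⟨hp1, hp2⟩
  exact A.tau_eq_perm_aux l
    (fun t ht => hN _ (List.mem_append.mpr
      (Or.inl (List.mem_map_of_mem ((List.mem_tails _ _).mpr ht)))))
    (fun x hx => hN _ (List.mem_append.mpr (Or.inr (List.mem_map_of_mem hx))))
    hp1 hp2

lemma walk_word {i : ℕ} {x y : A.X i} (p : (A.graph i).Walk x y) :
    ∃ w : FreeGroup ↥S, fgLength w ≤ p.length ∧ A.tau w ⟨i, x⟩ = ⟨i, y⟩ := by
  induction p with
  | nil =>
    refine ⟨1, ?_, by rw [map_one]; rfl⟩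
    simpa using fgLength_one
  | @cons u v z hadj q ih =>
    obtain ⟨w', hw1, hw2⟩ := ih
    have hadj' : u ≠ v ∧ ∃ s ∈ S, A.sigma i s u = v ∨ A.sigma i s v = u := hadj
    obtain ⟨hne, s, hs, hcase⟩ := hadj'
    rcases hcase with hc | hc
    · refine ⟨w' * FreeGroup.of ⟨s, hs⟩, ?_, ?_⟩
      · rw [SimpleGraph.Walk.length_cons]
        have h1 := fgLength_mul_le w' (FreeGroup.of (⟨s, hs⟩ : ↥S))
        have h2 := fgLength_of_le (α := ↥S) ⟨s, hs⟩
        omega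
      · rw [map_mul, Equiv.Perm.mul_apply]
        have h1 : A.tau (FreeGroup.of ⟨s, hs⟩) = A.perm (s : Γ) := by
          rw [tau, FreeGroup.lift_apply_of]
        rw [h1, A.perm_apply]
        show A.tau w' ⟨i, A.sigma i s u⟩ = ⟨i, z⟩
        rw [hc]; exact hw2
    · refine ⟨w' * (FreeGroup.of ⟨s, hs⟩)⁻¹, ?_, ?_⟩
      · rw [SimpleGraph.Walk.length_cons]
        have h1 := fgLength_mul_le w' (FreeGroup.of (⟨s, hs⟩ : ↥S))⁻¹
        have h2 := fgLength_of_inv_le (α := ↥S) ⟨s, hs⟩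
        omega
      · rw [map_mul, Equiv.Perm.mul_apply, map_inv]
        have h1 : A.tau (FreeGroup.of ⟨s, hs⟩) = A.perm (s : Γ) := by
          rw [tau, FreeGroup.lift_apply_of]
        rw [h1]
        have h2 : (A.perm (s : Γ))⁻¹ ⟨i, u⟩ = ⟨i, v⟩ := by
          apply (A.perm (s : Γ)).injective
          rw [Equiv.Perm.inv_def, Equiv.apply_symm_apply, A.perm_apply, hc]
        rw [h2]; exact hw2

/-- The decomposition superset of `closure (ER d n)`. -/
lemma closure_ER_subset (hconn : ∀ i, (A.graph i).Connected) (hd : A.Admissible d) (n : ℕ) :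
    ∃ N₀ : ℕ, closure (A.ER d (n : ℝ)) ⊆
      ((fun ab : A.Total × A.Total => ((pure ab.1 : Ultrafilter A.Total), (pure ab.2 : Ultrafilter A.Total))) ''
        ({p | p.1 < N₀} ×ˢ {p | p.1 < N₀})) ∪
      ⋃ w ∈ {w : FreeGroup ↥S | fgLength w ≤ n},
        {q : Ultrafilter A.Total × Ultrafilter A.Total | q.2 = Ultrafilter.map (A.tau w) q.1} := by
  obtain ⟨N₀, hN₀⟩ := hd.2.2.2.2.2 (n : ℝ)
  refine ⟨N₀, ?_⟩
  apply closure_minimal ?_ ?_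
  · -- ER d n ⊆ union
    rintro q ⟨a, b, hab, rfl⟩
    obtain ⟨i, x⟩ := a
    obtain ⟨j, y⟩ := b
    by_cases hij : i = j
    · subst hij
      right
      have hdist : ((A.graph i).dist x y : ℝ) ≤ (n : ℝ) := by
        rw [← hd.2.2.2.2.1 i x y]; exact hab
      have hdist' : (A.graph i).dist x y ≤ n := by exact_mod_cast hdist
      obtain ⟨p, hp⟩ := ((hconn i) x y).exists_walk_length_eq_dist
      obtain ⟨w, hw1, hw2⟩ := A.walk_word p
      refine Set.mem_biUnion (show w ∈ {w : FreeGroup ↥S | fgLength w ≤ n} from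
        le_trans hw1 (hp ▸ hdist')) ?_
      show (pure ⟨i, y⟩ : Ultrafilter A.Total) = Ultrafilter.map (A.tau w) (pure ⟨i, x⟩)
      rw [Ultrafilter.map_pure, hw2]
    · left
      have hsum : i + j < N₀ := by
        by_contra hge
        exact absurd hab (not_le.mpr (hN₀ i j hij (le_of_not_gt hge) x y))
      refine ⟨(⟨i, x⟩, ⟨j, y⟩), ⟨?_, ?_⟩, rfl⟩
      · show i < N₀; omega
      · show j < N₀; omega
  · -- closedness
    apply IsClosed.union
    · apply Set.Finite.isClosed
      apply Set.Finite.image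
      exact Set.Finite.prod (A.finite_small N₀) (A.finite_small N₀)
    · apply Set.Finite.isClosed_biUnion (finite_fg_ball n)
      intro w _
      exact isClosed_eq continuous_snd ((continuous_ultrafilter_map (A.tau w)).comp continuous_fst)

lemma exists_g_of_mem_closure (hSsymm : ∀ s ∈ S, s⁻¹ ∈ S)
    (hconn : ∀ i, (A.graph i).Connected) (hd : A.Admissible d) {n : ℕ}
    {η ξ : Ultrafilter A.Total} (hη : η ∈ A.core)
    (hcl : ((η, ξ) : Ultrafilter A.Total × Ultrafilter A.Total) ∈ closure (A.ER d (n : ℝ))) :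
    ∃ g : Γ, wordLength S g ≤ n ∧ ξ = A.permBar g η := by
  obtain ⟨N₀, hsub⟩ := A.closure_ER_subset hconn hd n
  rcases hsub hcl with h | h
  · obtain ⟨⟨a, b⟩, _, heq⟩ := h
    have h1 : η = pure a := (congrArg Prod.fst heq).symm
    exact absurd h1 ((A.core_subset_bdY hη).1 a)
  · obtain ⟨w, hw, hq⟩ := Set.mem_iUnion₂.mp h
    refine ⟨pihom S w, le_trans (wordLength_pihom_le hSsymm w) hw, ?_⟩
    rw [show (ξ = Ultrafilter.map (A.tau w) η) from hq, A.tauBar_eq_permBar hη]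

lemma isClosed_core : IsClosed A.core := by
  apply isClosed_iInter
  intro g
  have h1 : IsClosed A.bdY := by
    have he : A.bdY = {η : Ultrafilter A.Total | A.Ytot ∈ η} ∩
        (⋃ p : A.Total, {η : Ultrafilter A.Total | ({p} : Set A.Total) ∈ η})ᶜ := by
      ext η
      simp only [bdY, Set.mem_inter_iff, Set.mem_setOf_eq, Set.mem_compl_iff, Set.mem_iUnion,
        not_exists]
      constructor
      · rintro ⟨h1, h2⟩
        refine ⟨h2, fun p hp => ?_⟩
        obtain ⟨z, hz, hz2⟩ := Ultrafilter.eq_pure_of_finite_mem (Set.finite_singleton p) hp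
        exact h1 z hz2
      · rintro ⟨h1, h2⟩
        refine ⟨fun p hp => h2 p ?_, h1⟩
        rw [hp]
        rfl
    rw [he]
    exact IsClosed.inter (ultrafilter_isClosed_basic _)
      (isClosed_compl_iff.mpr (isOpen_iUnion fun p => ultrafilter_isOpen_basic _))
  have h2 : IsCompact (A.permBar g '' A.bdY) :=
    (h1.isCompact).image (continuous_ultrafilter_map _)
  exact h2.isClosed

end SoficApprox
open SoficApprox in
/-- **The sofic coarse boundary groupoid over the core is `Z ⋊ Γ`.**
The map `Θ(η, g) = (η, σ̄(g)(η))` on `Z × Γ` is injective, and for every `n` its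
restriction to `Z × {g : |g|_S ≤ n}` (with `Z` carrying the subspace topology and `Γ` the
discrete topology) is a homeomorphism onto `cl(E_n) ∩ (Z × Z)`. -/
theorem core_groupoid_homeomorphism
    {Γ : Type u} [Group Γ] [TopologicalSpace Γ] [DiscreteTopology Γ] {S : Finset Γ}
    (hSsymm : ∀ s ∈ S, s⁻¹ ∈ S)
    (hSgen : Subgroup.closure (S : Set Γ) = ⊤)
    (A : SoficApprox Γ S)
    (hconn : ∀ i, (A.graph i).Connected)
    (d : A.Total → A.Total → ℝ) (hd : A.Admissible d) :
    Function.Injective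
      (fun p : ↥A.core × Γ =>
        ((p.1 : Ultrafilter A.Total), A.permBar p.2 (p.1 : Ultrafilter A.Total))) ∧
    ∀ n : ℕ,
      ∃ h : (↥A.core × {g : Γ // wordLength S g ≤ n}) ≃ₜ
          ↥(closure (A.ER d (n : ℝ)) ∩ (A.core ×ˢ A.core)),
        ∀ p : ↥A.core × {g : Γ // wordLength S g ≤ n},
          (h p : Ultrafilter A.Total × Ultrafilter A.Total) =
            ((p.1 : Ultrafilter A.Total), A.permBar (p.2 : Γ) (p.1 : Ultrafilter A.Total)) := by
  constructor
  · rintro ⟨⟨η, hη⟩, g⟩ ⟨⟨η', hη'⟩, g'⟩ heq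
    simp only [Prod.mk.injEq] at heq
    obtain ⟨h1, h2⟩ := heq
    have h1' : η = η' := h1
    subst h1'
    have h3 : g = g' := A.core_inj hη h2
    subst h3
    rfl
  · intro n
    have hwell : ∀ p : ↥A.core × {g : Γ // wordLength S g ≤ n},
        (((p.1 : Ultrafilter A.Total), A.permBar (p.2 : Γ) (p.1 : Ultrafilter A.Total)) :
            Ultrafilter A.Total × Ultrafilter A.Total) ∈
          closure (A.ER d (n : ℝ)) ∩ (A.core ×ˢ A.core) := by
      rintro ⟨⟨η, hη⟩, ⟨g, hg⟩⟩
      exact ⟨A.theta_mem_closure hSsymm hSgen hd hη hg, hη, A.core_invariant hη g⟩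
    let f : ↥A.core × {g : Γ // wordLength S g ≤ n} →
        ↥(closure (A.ER d (n : ℝ)) ∩ (A.core ×ˢ A.core)) :=
      fun p => ⟨((p.1 : Ultrafilter A.Total), A.permBar (p.2 : Γ) (p.1 : Ultrafilter A.Total)),
        hwell p⟩
    have hbij : Function.Bijective f := by
      constructor
      · rintro ⟨⟨η, hη⟩, ⟨g, hg⟩⟩ ⟨⟨η', hη'⟩, ⟨g', hg'⟩⟩ heq
        have h0 := congrArg Subtype.val heq
        have h1 : η = η' := congrArg Prod.fst h0
        subst h1
        have h2 : A.permBar g η = A.permBar g' η := congrArg Prod.snd h0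
        have h3 : g = g' := A.core_inj hη h2
        subst h3
        rfl
      · rintro ⟨⟨η, ξ⟩, hcl, hηc, hξc⟩
        obtain ⟨g, hgn, hxi⟩ := A.exists_g_of_mem_closure hSsymm hconn hd hηc hcl
        exact ⟨(⟨η, hηc⟩, ⟨g, hgn⟩), Subtype.ext (Prod.ext rfl hxi.symm)⟩
    haveI : CompactSpace ↥A.core := isCompact_iff_compactSpace.mp A.isClosed_core.isCompact
    haveI : Finite {g : Γ // wordLength S g ≤ n} := (finite_ball hSsymm hSgen n).to_subtype
    have hcont : Continuous f := by
      apply Continuous.subtype_mk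
      apply Continuous.prodMk
      · exact continuous_subtype_val.comp continuous_fst
      · exact continuous_of_discrete_snd
          (f := fun (η : ↥A.core) (g : {g : Γ // wordLength S g ≤ n}) =>
            A.permBar (g : Γ) (η : Ultrafilter A.Total))
          (fun g => (continuous_ultrafilter_map _).comp continuous_subtype_val)
    exact ⟨Continuous.homeoOfEquivCompactToT2 (f := Equiv.ofBijective f hbij) hcont,
      fun p => rfl⟩
end

section
/- Let (X, d) be a finite nonempty metric space, let R, S, ε > 0, and let N ≥ 1 be such that |{y ∈ X : d(x,y) ≤ R}| ≤ N for every x ∈ X. Suppose that to each x ∈ X is assigned a probability density η_x : X → [0,1] (with Σ_z η_x(z) = 1) such that η_x(z) = 0 whenever d(x,z) > S, and Σ_z |η_x(z) − η_y(z)| ≤ ε/N whenever d(x,y) ≤ R. Then there exists z₀ ∈ X such that the function φ : X → [0,1] defined by φ(x) = η_x(z₀) satisfies: Σ_x φ(x) > 0; φ(x) = 0 whenever d(x,z₀) > S; and Σ_{(x,y) : d(x,y) ≤ R} |φ(x) − φ(y)| ≤ ε · Σ_x φ(x), where the first sum is over all ordered pairs (x,y) ∈ X × X with d(x,y) ≤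 R. -/
open scoped Classical BigOperators

/-- **The averaging step for property A families.**
Let `(X, d)` be a finite nonempty metric space, `R, S, ε > 0`, and `N ≥ 1` with all closed
`R`-balls of cardinality at most `N`. If each `x ∈ X` carries a probability density `η_x`
supported in the `S`-ball around `x` with `Σ_z |η_x(z) − η_y(z)| ≤ ε/N` whenever
`d(x,y) ≤ R`, then there is `z₀ ∈ X` such that `φ(x) := η_x(z₀)` has positive total mass,
is supported in the `S`-ball around `z₀`, and satisfies
`Σ_{d(x,y) ≤ R} |φ(x) − φ(y)| ≤ ε · Σ_x φ(x)`. -/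
theorem exists_folner_function_of_propertyA_data
    {X : Type*} [MetricSpace X] [Fintype X] [Nonempty X]
    (R S ε : ℝ) (hR : 0 < R) (hS : 0 < S) (hε : 0 < ε)
    (N : ℕ) (hN : 1 ≤ N)
    (hball : ∀ x : X, ({y : X | dist x y ≤ R}).ncard ≤ N)
    (η : X → X → ℝ)
    (h01 : ∀ x z, 0 ≤ η x z ∧ η x z ≤ 1)
    (hsum : ∀ x, ∑ z, η x z = 1)
    (hsupp : ∀ x z, S < dist x z → η x z = 0)
    (hvar : ∀ x y, dist x y ≤ R → ∑ z, |η x z - η y z| ≤ ε / N) :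
    ∃ z₀ : X,
      0 < ∑ x, η x z₀ ∧
      (∀ x, S < dist x z₀ → η x z₀ = 0) ∧
      ∑ p ∈ Finset.univ.filter (fun p : X × X => dist p.1 p.2 ≤ R),
          |η p.1 z₀ - η p.2 z₀| ≤ ε * ∑ x, η x z₀ := by
  classical
  set P : Finset (X × X) := Finset.univ.filter (fun p : X × X => dist p.1 p.2 ≤ R) with hP
  set L : X → ℝ := fun z => ∑ p ∈ P, |η p.1 z - η p.2 z| with hL
  set m : X → ℝ := fun z => ∑ x, η x z with hm
  have hmnonneg : ∀ z, 0 ≤ m z := fun z =>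
    Finset.sum_nonneg fun x _ => (h01 x z).1
  have hLnonneg : ∀ z, 0 ≤ L z := fun z =>
    Finset.sum_nonneg fun p _ => abs_nonneg _
  -- cardinality of P
  have hPcard : (P.card : ℝ) ≤ (N : ℝ) * Fintype.card X := by
    have h1 : P.card = ∑ x : X, (P.filter (fun p => p.1 = x)).card :=
      Finset.card_eq_sum_card_fiberwise (fun p _ => Finset.mem_univ p.1)
    have h2 : ∀ x : X, (P.filter (fun p => p.1 = x)).card ≤ N := by
      intro x
      have hinj : ∀ p ∈ P.filter (fun p => p.1 = x), p.2 ∈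
          Finset.univ.filter (fun y => dist x y ≤ R) := by
        intro p hp
        simp only [Finset.mem_filter, hP, Finset.mem_univ, true_and] at hp ⊢
        rw [← hp.2]; exact hp.1
      have hcard : (P.filter (fun p => p.1 = x)).card ≤
          (Finset.univ.filter (fun y => dist x y ≤ R)).card := by
        apply Finset.card_le_card_of_injOn (fun p => p.2) (fun p hp => hinj p hp)
        intro p hp q hq h
        simp only [Finset.mem_coe, Finset.mem_filter] at hp hq
        exact Prod.ext (hp.2.trans hq.2.symm) h
      refine hcard.trans ?_
      have h := hball x
      rw [Set.ncard_eq_toFinset_card'] at h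
      have heq : {y | dist x y ≤ R}.toFinset = Finset.univ.filter (fun y => dist x y ≤ R) := by
        ext y; simp
      rwa [heq] at h
    calc (P.card : ℝ) = ∑ x : X, ((P.filter (fun p => p.1 = x)).card : ℝ) := by
          rw [h1]; push_cast; ring
      _ ≤ ∑ _x : X, (N : ℝ) := Finset.sum_le_sum fun x _ => by exact_mod_cast h2 x
      _ = (N : ℝ) * Fintype.card X := by
          rw [Finset.sum_const, Finset.card_univ, nsmul_eq_mul]; ring
  -- total mass
  have hmtot : ∑ z, m z = (Fintype.card X : ℝ) := by
    rw [hm, Finset.sum_comm]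
    simp [hsum]
  -- averaging inequality
  have hkey : ∑ z, L z ≤ ∑ z, ε * m z := by
    have h1 : ∑ z, L z = ∑ p ∈ P, ∑ z, |η p.1 z - η p.2 z| := Finset.sum_comm
    have h2 : ∑ p ∈ P, ∑ z, |η p.1 z - η p.2 z| ≤ P.card * (ε / N) := by
      calc ∑ p ∈ P, ∑ z, |η p.1 z - η p.2 z| ≤ ∑ _p ∈ P, ε / N := by
            refine Finset.sum_le_sum fun p hp => ?_
            simp only [hP, Finset.mem_filter] at hp
            exact hvar p.1 p.2 hp.2
        _ = P.card * (ε / N) := by rw [Finset.sum_const, nsmul_eq_mul]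
    have h3 : (P.card : ℝ) * (ε / N) ≤ ε * Fintype.card X := by
      have hN0 : (0:ℝ) < N := by exact_mod_cast hN
      rw [div_eq_mul_inv]
      calc (P.card : ℝ) * (ε * (N:ℝ)⁻¹) ≤ ((N:ℝ) * Fintype.card X) * (ε * (N:ℝ)⁻¹) := by
            apply mul_le_mul_of_nonneg_right hPcard
            positivity
        _ = ε * Fintype.card X := by field_simp
    calc ∑ z, L z ≤ P.card * (ε / N) := h1 ▸ h2
      _ ≤ ε * Fintype.card X := h3
      _ = ∑ z, ε * m z := by rw [← Finset.mul_sum, hmtot]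
  -- restrict to positive-mass points
  set T : Finset X := Finset.univ.filter (fun z => 0 < m z) with hT
  have hzeroL : ∀ z ∉ T, L z = 0 := by
    intro z hz
    simp only [hT, Finset.mem_filter, Finset.mem_univ, true_and, not_lt] at hz
    have hm0 : m z = 0 := le_antisymm hz (hmnonneg z)
    have hη0 : ∀ x, η x z = 0 := by
      intro x
      have := (Finset.sum_eq_zero_iff_of_nonneg (fun x _ => (h01 x z).1)).mp hm0
      exact this x (Finset.mem_univ x)
    rw [hL]
    exact Finset.sum_eq_zero fun p _ => by simp [hη0]
  have hzeroM : ∀ z ∉ T, m z = 0 := by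
    intro z hz
    simp only [hT, Finset.mem_filter, Finset.mem_univ, true_and, not_lt] at hz
    exact le_antisymm hz (hmnonneg z)
  have hTne : T.Nonempty := by
    by_contra h
    rw [Finset.not_nonempty_iff_eq_empty] at h
    have : ∑ z, m z = 0 := Finset.sum_eq_zero fun z _ => hzeroM z (by simp [h])
    rw [hmtot] at this
    have : (0:ℝ) < Fintype.card X := by exact_mod_cast Fintype.card_pos
    linarith
  have hkeyT : ∑ z ∈ T, L z ≤ ∑ z ∈ T, ε * m z := by
    have e1 : ∑ z ∈ T, L z = ∑ z, L z := by
      rw [← Finset.sum_subset (Finset.subset_univ T)]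
      intro z _ hz; exact hzeroL z hz
    have e2 : ∑ z ∈ T, ε * m z = ∑ z, ε * m z := by
      rw [← Finset.sum_subset (Finset.subset_univ T)]
      intro z _ hz; rw [hzeroM z hz, mul_zero]
    rw [e1, e2]; exact hkey
  obtain ⟨z₀, hz₀T, hz₀⟩ := Finset.exists_le_of_sum_le hTne hkeyT
  refine ⟨z₀, ?_, fun x h => hsupp x z₀ h, hz₀⟩
  simp only [hT, Finset.mem_filter, Finset.mem_univ, true_and] at hz₀T
  exact hz₀T
end

section
/- Suppose there exist nondecreasing functions ρ₋, ρ₊ : [0,∞) → ℝ with ρ₋(t) → ∞ as t → ∞, a sequence of nonnegative reals R_i with R_i → ∞, and kernels K_i : X_i × X_i → ℝ satisfying, for every i: K_i(x,x) = 0 and K_i(x,y) = K_i(y,x) for all x, y ∈ X_i; ρ₋(d_i(x,y)) ≤ K_i(x,y) ≤ ρ₊(d_i(x,y)) for all x, y ∈ X_i; and for every finite subset {x_1, …, x_n} ⊆ X_i of diameter at most R_i and all real numbers λ_1, …, λ_n with Σ_k λ_k = 0, one has Σ_{k,l} λ_k λ_l K_i(x_k, x_l) ≤ 0. Then Γ is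 a-T-menable: there exists a function ψ : Γ → ℝ such that ψ(1) = 0; ψ(g) = ψ(g⁻¹) for all g ∈ Γ; for all g_1, …, g_n ∈ Γ and all real numbers λ_1, …, λ_n with Σ_k λ_k = 0, Σ_{k,l} λ_k λ_l ψ(g_k⁻¹ g_l) ≤ 0; and for every C ∈ ℝ the set {g ∈ Γ : ψ(g) ≤ C} is finite. -/
open scoped BigOperators symmDiff Classical

universe u v

section PLenAux
variable {Γ : Type u} [Group Γ]

/-- `g` is a product of at most `m` elements of `S`. -/
def PLen (S : Finset Γ) (m : ℕ) (g : Γ) : Prop :=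
  ∃ l : List Γ, (∀ x ∈ l, x ∈ S) ∧ l.length ≤ m ∧ l.prod = g

variable {S : Finset Γ}

lemma PLen_one (m : ℕ) : PLen S m 1 := ⟨[], by simp, by simp, rfl⟩

lemma PLen.mono {m m' : ℕ} {g : Γ} (h : m ≤ m') (hg : PLen S m g) : PLen S m' g := by
  obtain ⟨l, h1, h2, h3⟩ := hg; exact ⟨l, h1, h2.trans h, h3⟩

lemma PLen.mul {m k : ℕ} {a b : Γ} (ha : PLen S m a) (hb : PLen S k b) :
    PLen S (m + k) (a * b) := by
  obtain ⟨l, h1, h2, h3⟩ := ha; obtain ⟨l', h1', h2', h3'⟩ := hb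
  exact ⟨l ++ l', by intro x hx; rcases List.mem_append.1 hx with h | h; exacts [h1 x h, h1' x h],
    by simpa using Nat.add_le_add h2 h2', by rw [List.prod_append, h3, h3']⟩

lemma PLen.inv (hS : ∀ s ∈ S, s⁻¹ ∈ S) {m : ℕ} {a : Γ} (ha : PLen S m a) : PLen S m a⁻¹ := by
  obtain ⟨l, h1, h2, h3⟩ := ha
  refine ⟨(l.map (·⁻¹)).reverse, ?_, by simpa using h2, ?_⟩
  · intro x hx
    simp only [List.mem_reverse, List.mem_map] at hx
    obtain ⟨y, hy, rfl⟩ := hx; exact hS y (h1 y hy)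
  · rw [List.prod_reverse_noncomm, List.map_map, ← h3]
    congr 1
    simp [Function.comp]

lemma PLen_single {s : Γ} (hs : s ∈ S) : PLen S 1 s := ⟨[s], by simpa, by simp, by simp⟩

lemma PLen_finite (S : Finset Γ) (m : ℕ) : {g : Γ | PLen S m g}.Finite := by
  induction m with
  | zero =>
      refine Set.Finite.subset (Set.finite_singleton 1) ?_
      rintro g ⟨l, -, h2, h3⟩
      rw [Nat.le_zero, List.length_eq_zero_iff] at h2
      simp [h2] at h3; simp [← h3]
  | succ m ih =>
      refine Set.Finite.subset ((ih.union ((S.finite_toSet.biUnion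
        (fun s _ => ih.image (fun g => s * g))))) ) ?_
      rintro g ⟨l, h1, h2, h3⟩
      match l with
      | [] => exact Or.inl ⟨[], by simp, by simp, h3⟩
      | s :: t =>
          refine Or.inr (Set.mem_biUnion (h1 s (by simp)) ?_)
          exact ⟨t.prod, ⟨t, fun x hx => h1 x (by simp [hx]), by simpa using h2, rfl⟩,
            by simp [← h3, List.prod_cons]⟩

lemma exists_plen (hSsymm : ∀ s ∈ S, s⁻¹ ∈ S) (hSgen : Subgroup.closure (S : Set Γ) = ⊤)
    (g : Γ) : ∃ m, PLen S m g := by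
  have hg : g ∈ Subgroup.closure (S : Set Γ) := by rw [hSgen]; trivial
  induction hg using Subgroup.closure_induction with
  | mem x hx => exact ⟨1, PLen_single hx⟩
  | one => exact ⟨0, PLen_one 0⟩
  | mul x y hx hy ihx ihy =>
      obtain ⟨m, hm⟩ := ihx; obtain ⟨k, hk⟩ := ihy; exact ⟨m + k, hm.mul hk⟩
  | inv x hx ihx => obtain ⟨m, hm⟩ := ihx; exact ⟨m, hm.inv hSsymm⟩

end PLenAux

section GraphAux
variable {Γ : Type u} [Group Γ] {S : Finset Γ} (A : SoficApprox Γ S)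

lemma dist_apply_single_le (i : ℕ) {s : Γ} (hs : s ∈ S) (x : A.X i) :
    (A.graph i).dist x (A.sigma i s x) ≤ 1 := by
  by_cases h : A.sigma i s x = x
  · rw [h, SimpleGraph.dist_self]; exact Nat.zero_le 1
  · have hadj : (A.graph i).Adj x (A.sigma i s x) := ⟨fun e => h e.symm, s, hs, Or.inl rfl⟩
    rw [SimpleGraph.dist_eq_one_iff_adj.2 hadj]

lemma sigma_mul' (i N : ℕ) (hBC : ∀ g, PLen S N g → g ∈ A.F i) {z : A.X i} (hz : z ∈ A.Y i)
    {a b : Γ} {ka kb : ℕ} (ha : PLen S ka a) (hb : PLen S kb b) (hka : ka ≤ N) (hkb : kb ≤ N) :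
    A.sigma i a (A.sigma i b z) = A.sigma i (a * b) z :=
  A.sigma_mul i a (hBC a (ha.mono hka)) b (hBC b (hb.mono hkb)) z hz

lemma dist_word_le (hconn : ∀ i, (A.graph i).Connected) (i N : ℕ)
    (hBC : ∀ g, PLen S N g → g ∈ A.F i) {z : A.X i} (hz : z ∈ A.Y i) :
    ∀ (l : List Γ), (∀ x ∈ l, x ∈ S) → ∀ (a : Γ) (ka : ℕ), PLen S ka a →
      ka + l.length ≤ N →
      (A.graph i).dist (A.sigma i a z) (A.sigma i (l.prod * a) z) ≤ l.length := by
  intro l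
  induction l with
  | nil => intro _ a ka _ _; simp [SimpleGraph.dist_self]
  | cons s t ih =>
      intro hl a ka ha hN
      have hs : s ∈ S := hl s (by simp)
      have hlen : (s :: t).length = t.length + 1 := rfl
      rw [hlen] at hN
      have ht : PLen S t.length t.prod := ⟨t, fun x hx => hl x (by simp [hx]), le_refl _, rfl⟩
      have hta : PLen S (t.length + ka) (t.prod * a) := ht.mul ha
      have key : A.sigma i ((s :: t).prod * a) z = A.sigma i s (A.sigma i (t.prod * a) z) := by
        rw [sigma_mul' A i N hBC hz (PLen_single hs) hta (by omega) (by omega)]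
        congr 1
        rw [List.prod_cons, mul_assoc]
      have tri := (hconn i).dist_triangle (u := A.sigma i a z)
        (v := A.sigma i (t.prod * a) z) (w := A.sigma i ((s :: t).prod * a) z)
      have h1 := ih (fun x hx => hl x (by simp [hx])) a ka ha (by omega)
      have h2 : (A.graph i).dist (A.sigma i (t.prod * a) z) (A.sigma i ((s :: t).prod * a) z) ≤ 1 := by
        rw [key]; exact dist_apply_single_le A i hs _
      calc (A.graph i).dist (A.sigma i a z) (A.sigma i ((s :: t).prod * a) z)
          ≤ _ + _ := tri
        _ ≤ t.length + 1 := Nat.add_le_add h1 h2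
        _ = (s :: t).length := rfl

lemma trace_walk (hSsymm : ∀ s ∈ S, s⁻¹ ∈ S) (i N : ℕ)
    (hBC : ∀ g, PLen S N g → g ∈ A.F i) {z : A.X i} (hz : z ∈ A.Y i) :
    ∀ {x y : A.X i} (p : (A.graph i).Walk x y) (a : Γ) (ka : ℕ), PLen S ka a →
      x = A.sigma i a z → ka + p.length ≤ N →
      ∃ b : Γ, PLen S p.length b ∧ y = A.sigma i (b * a) z := by
  intro x y p
  induction p with
  | nil => intro a ka ha hx _; exact ⟨1, PLen_one _, by simpa using hx⟩
  | @cons x v y hadj q ih =>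
      intro a ka ha hx hN
      obtain ⟨hne, s, hs, hor⟩ := id hadj
      rw [SimpleGraph.Walk.length_cons] at hN
      cases hor with
      | inl h =>
          have hv : v = A.sigma i (s * a) z := by
            rw [← h, hx, sigma_mul' A i N hBC hz (PLen_single hs) ha (by omega) (by omega)]
          obtain ⟨b, hb, hy⟩ := ih (s * a) (1 + ka) ((PLen_single hs).mul ha) hv (by omega)
          refine ⟨b * s, ?_, by rw [hy, mul_assoc]⟩
          have := hb.mul (PLen_single hs)
          simpa [SimpleGraph.Walk.length_cons] using this
      | inr h =>
          have hs' : s⁻¹ ∈ S := hSsymm s hs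
          have hv : v = A.sigma i (s⁻¹ * a) z := by
            apply (A.sigma i s).injective
            rw [h, hx, sigma_mul' A i N hBC hz (PLen_single hs)
              ((PLen_single hs').mul ha) (by omega) (by omega)]
            congr 1
            group
          obtain ⟨b, hb, hy⟩ := ih (s⁻¹ * a) (1 + ka) ((PLen_single hs').mul ha) hv (by omega)
          refine ⟨b * s⁻¹, ?_, by rw [hy, mul_assoc]⟩
          have := hb.mul (PLen_single hs')
          simpa [SimpleGraph.Walk.length_cons] using this

lemma len_le_dist (hSsymm : ∀ s ∈ S, s⁻¹ ∈ S) (hconn : ∀ i, (A.graph i).Connected)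
    (i N : ℕ) (hBC : ∀ g, PLen S N g → g ∈ A.F i) {z : A.X i}
    (hz : z ∈ A.Y i) (hz1 : A.sigma i 1 z = z)
    (g : Γ) (lg : ℕ) (hg : PLen S lg g) (hmin : ∀ m, PLen S m g → lg ≤ m)
    (hN : 2 * lg ≤ N) :
    lg ≤ (A.graph i).dist z (A.sigma i g z) := by
  by_contra hlt
  push_neg at hlt
  obtain ⟨p, hp⟩ := (hconn i).exists_walk_length_eq_dist z (A.sigma i g z)
  have hplen : p.length < lg := by omega
  obtain ⟨b, hb, hyb⟩ := trace_walk A hSsymm i N hBC hz p 1 0 (PLen_one 0)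
    (by rw [hz1]) (by omega)
  rw [mul_one] at hyb
  have hblg : PLen S lg b := hb.mono (by omega)
  have e1 : A.sigma i g⁻¹ (A.sigma i b z) = A.sigma i (g⁻¹ * b) z :=
    sigma_mul' A i N hBC hz (hg.inv hSsymm) hblg (by omega) (by omega)
  have e2 : A.sigma i g⁻¹ (A.sigma i g z) = A.sigma i (1 : Γ) z := by
    rw [sigma_mul' A i N hBC hz (hg.inv hSsymm) hg (by omega) (by omega)]
    congr 1
    group
  have e3 : A.sigma i (g⁻¹ * b) z = z := by rw [← e1, ← hyb, e2, hz1]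
  have hgb : g⁻¹ * b = 1 := by
    by_contra hne1
    exact A.sigma_free i (g⁻¹ * b) (hBC _ (((hg.inv hSsymm).mul hblg).mono (by omega))) hne1 z hz e3
  have : b = g := by
    have := congrArg (g * ·) hgb
    simpa [← mul_assoc] using this
  have := hmin p.length (this ▸ hb)
  omega

end GraphAux

section CardAux
variable {Γ : Type u} [Group Γ] {S : Finset Γ} (A : SoficApprox Γ S)

/-- The set of good base points. -/
def GoodSet (i : ℕ) : Set (A.X i) := {z | z ∈ A.Y i ∧ A.sigma i 1 z = z}

lemma goodSet_card (i : ℕ) :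
    (1 - 2 * A.eps i) * (Nat.card (A.X i) : ℝ) ≤ ((GoodSet A i).ncard : ℝ) := by
  haveI := A.finX i
  set π : A.X i → A.X i := ⇑(A.sigma i 1) with hπ
  have hsub : (π '' A.Y i) ∩ A.Y i ⊆ GoodSet A i := by
    rintro z ⟨⟨y, hy, rfl⟩, hz⟩
    refine ⟨hz, ?_⟩
    show A.sigma i 1 (A.sigma i 1 y) = A.sigma i 1 y
    rw [A.sigma_mul i 1 (A.F_one i) 1 (A.F_one i) y hy, one_mul]
  have himg : (π '' A.Y i).ncard = (A.Y i).ncard :=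
    Set.ncard_image_of_injective _ (A.sigma i 1).injective
  have hunion : ((π '' A.Y i) ∪ A.Y i).ncard + ((π '' A.Y i) ∩ A.Y i).ncard
      = (π '' A.Y i).ncard + (A.Y i).ncard := Set.ncard_union_add_ncard_inter _ _
  have hle : ((π '' A.Y i) ∪ A.Y i).ncard ≤ Nat.card (A.X i) := by
    rw [← Set.ncard_univ]
    exact Set.ncard_le_ncard (Set.subset_univ _)
  have hinter : 2 * (A.Y i).ncard ≤ ((π '' A.Y i) ∩ A.Y i).ncard + Nat.card (A.X i) := by
    omega
  have hmono : ((π '' A.Y i) ∩ A.Y i).ncard ≤ (GoodSet A i).ncard :=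
    Set.ncard_le_ncard hsub
  have hY := A.Y_large i
  have h2 : (2 : ℝ) * ((A.Y i).ncard : ℝ) ≤ ((GoodSet A i).ncard : ℝ) + (Nat.card (A.X i) : ℝ) := by
    have := hinter.trans (Nat.add_le_add_right hmono _)
    exact_mod_cast this
  nlinarith [hY]

end CardAux

section SumAux

lemma sum_div_card_mem_Icc {α : Type*} (G : Finset α) (hG : 0 < (G.card : ℝ))
    (f : α → ℝ) (lo hi : ℝ) (h : ∀ z ∈ G, f z ∈ Set.Icc lo hi) :
    (∑ z ∈ G, f z) / (G.card : ℝ) ∈ Set.Icc lo hi := by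
  constructor
  · rw [le_div_iff₀ hG]
    calc lo * G.card = G.card • lo := by rw [nsmul_eq_mul, mul_comm]
    _ ≤ ∑ z ∈ G, f z := Finset.card_nsmul_le_sum G f lo (fun z hz => (h z hz).1)
  · rw [div_le_iff₀ hG]
    calc ∑ z ∈ G, f z ≤ G.card • hi := Finset.sum_le_card_nsmul G f hi (fun z hz => (h z hz).2)
    _ = hi * G.card := by rw [nsmul_eq_mul, mul_comm]

lemma sum_sdiff_abs_bound {α : Type*} [DecidableEq α] (f : α → ℝ) (A B : Finset α) (B0 : ℝ)
    (hA : ∀ z ∈ A, |f z| ≤ B0) (hB : ∀ z ∈ B, |f z| ≤ B0) :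
    |(∑ z ∈ A, f z) - ∑ z ∈ B, f z| ≤ B0 * (((A \ B).card : ℝ) + ((B \ A).card : ℝ)) := by
  have hA' : ∑ z ∈ A, f z = (∑ z ∈ A ∩ B, f z) + ∑ z ∈ A \ B, f z :=
    (Finset.sum_inter_add_sum_sdiff A B f).symm
  have hB' : ∑ z ∈ B, f z = (∑ z ∈ A ∩ B, f z) + ∑ z ∈ B \ A, f z := by
    rw [Finset.inter_comm]
    exact (Finset.sum_inter_add_sum_sdiff B A f).symm
  have key : (∑ z ∈ A, f z) - ∑ z ∈ B, f z = (∑ z ∈ A \ B, f z) - ∑ z ∈ B \ A, f z := by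
    rw [hA', hB']; ring
  rw [key]
  have h1 : |∑ z ∈ A \ B, f z| ≤ B0 * ((A \ B).card : ℝ) := by
    calc |∑ z ∈ A \ B, f z| ≤ ∑ z ∈ A \ B, |f z| := Finset.abs_sum_le_sum_abs _ _
    _ ≤ (A \ B).card • B0 := Finset.sum_le_card_nsmul _ _ _
        (fun z hz => hA z (Finset.mem_sdiff.1 hz).1)
    _ = B0 * ((A \ B).card : ℝ) := by rw [nsmul_eq_mul, mul_comm]
  have h2 : |∑ z ∈ B \ A, f z| ≤ B0 * ((B \ A).card : ℝ) := by
    calc |∑ z ∈ B \ A, f z| ≤ ∑ z ∈ B \ A, |f z| := Finset.abs_sum_le_sum_abs _ _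
    _ ≤ (B \ A).card • B0 := Finset.sum_le_card_nsmul _ _ _
        (fun z hz => hB z (Finset.mem_sdiff.1 hz).1)
    _ = B0 * ((B \ A).card : ℝ) := by rw [nsmul_eq_mul, mul_comm]
  calc |(∑ z ∈ A \ B, f z) - ∑ z ∈ B \ A, f z| ≤ _ + _ := abs_sub _ _
  _ ≤ B0 * ((A \ B).card : ℝ) + B0 * ((B \ A).card : ℝ) := add_le_add h1 h2
  _ = B0 * (((A \ B).card : ℝ) + ((B \ A).card : ℝ)) := by ring

end SumAux

open SoficApprox in
set_option maxHeartbeats 2000000 in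
/-- **Asymptotic coarse embeddability of a sofic approximation implies a-T-menability.**
If the graphs of a sofic approximation of `Γ` admit symmetric normalised kernels `K i`,
controlled above and below by fixed nondecreasing proper functions `ρ₋ ≤ ρ₊`, which are
conditionally negative definite on all subsets of diameter at most `R i` with `R i → ∞`,
then `Γ` admits a proper conditionally negative definite function, i.e. is a-T-menable. -/
theorem aTmenable_of_asymptotic_embedding
    {Γ : Type u} [Group Γ] {S : Finset Γ}
    (hSsymm : ∀ s ∈ S, s⁻¹ ∈ S)
    (hSgen : Subgroup.closure (S : Set Γ) = ⊤)
    (A : SoficApprox Γ S)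
    (hconn : ∀ i, (A.graph i).Connected)
    (ρminus ρplus : ℝ → ℝ)
    (hmonoLo : Monotone ρminus) (hmonoHi : Monotone ρplus)
    (hproper : Filter.Tendsto ρminus Filter.atTop Filter.atTop)
    (R : ℕ → ℝ) (hRpos : ∀ i, 0 ≤ R i)
    (hRlim : Filter.Tendsto R Filter.atTop Filter.atTop)
    (K : (i : ℕ) → A.X i → A.X i → ℝ)
    (hdiag : ∀ i, ∀ x : A.X i, K i x x = 0)
    (hsymm : ∀ i, ∀ x y : A.X i, K i x y = K i y x)
    (hctrl : ∀ i, ∀ x y : A.X i,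
      ρminus (((A.graph i).dist x y : ℝ)) ≤ K i x y ∧
      K i x y ≤ ρplus (((A.graph i).dist x y : ℝ)))
    (hcnd : ∀ i, ∀ n : ℕ, ∀ x : Fin n → A.X i, ∀ lam : Fin n → ℝ,
      (∑ k, lam k) = 0 →
      (∀ k l : Fin n, ((A.graph i).dist (x k) (x l) : ℝ) ≤ R i) →
      (∑ k, ∑ l, lam k * lam l * K i (x k) (x l)) ≤ 0) :
    ∃ ψ : Γ → ℝ,
      ψ 1 = 0 ∧
      (∀ g : Γ, ψ g = ψ g⁻¹) ∧
      (∀ n : ℕ, ∀ g : Fin n → Γ, ∀ lam : Fin n → ℝ,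
        (∑ k, lam k) = 0 →
        (∑ k, ∑ l, lam k * lam l * ψ ((g k)⁻¹ * g l)) ≤ 0) ∧
      (∀ C : ℝ, {g : Γ | ψ g ≤ C}.Finite) := by
  classical
  haveI : ∀ i, Finite (A.X i) := A.finX
  -- word length
  have hplen : ∀ g : Γ, ∃ m, PLen S m g := exists_plen hSsymm hSgen
  set len : Γ → ℕ := fun g => sInf {m | PLen S m g} with hlen_def
  have hlenP : ∀ g, PLen S (len g) g := fun g => Nat.sInf_mem (hplen g)
  have hlen_le : ∀ g m, PLen S m g → len g ≤ m := fun g m hm => Nat.sInf_le hm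
  -- ultrafilter
  set U : Ultrafilter ℕ := Ultrafilter.of Filter.atTop with hU_def
  have hUle : (U : Filter ℕ) ≤ Filter.atTop := Ultrafilter.of_le _
  -- good sets
  set GFin : (i : ℕ) → Finset (A.X i) := fun i => (Set.toFinite (GoodSet A i)).toFinset
    with hGFin_def
  have hGFin_mem : ∀ i (z : A.X i), z ∈ GFin i ↔ (z ∈ A.Y i ∧ A.sigma i 1 z = z) := by
    intro i z
    simp [hGFin_def, GoodSet]
  have hXpos : ∀ i, (1 : ℝ) ≤ (Nat.card (A.X i) : ℝ) := by
    intro i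
    haveI := A.neX i
    exact_mod_cast Nat.one_le_iff_ne_zero.2 Nat.card_pos.ne'
  have hGcard_lb : ∀ i, (1 - 2 * A.eps i) * (Nat.card (A.X i) : ℝ) ≤ ((GFin i).card : ℝ) := by
    intro i
    have h := goodSet_card A i
    have : (GoodSet A i).ncard = (GFin i).card := by
      rw [hGFin_def]
      exact Set.ncard_eq_toFinset_card _ _
    rwa [this] at h
  have hGleX : ∀ i, ((GFin i).card : ℝ) ≤ (Nat.card (A.X i) : ℝ) := by
    intro i
    haveI := Fintype.ofFinite (A.X i)
    rw [Nat.card_eq_fintype_card]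
    exact_mod_cast Finset.card_le_univ _
  have hGpos : ∀ i, A.eps i < 1/2 → 0 < ((GFin i).card : ℝ) := by
    intro i hi
    have h1 := hGcard_lb i
    have h2 := hXpos i
    nlinarith
  -- the approximate potentials
  set psii : ℕ → Γ → ℝ :=
    fun i h => (∑ z ∈ GFin i, K i z (A.sigma i h z)) / ((GFin i).card : ℝ) with hpsii_def
  -- eventual conditions
  have hBCev : ∀ N : ℕ, ∀ᶠ i in Filter.atTop, ∀ g, PLen S N g → g ∈ A.F i := by
    intro N
    set T : Finset Γ := (PLen_finite S N).toFinset with hT_def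
    set i₀ : ℕ := T.sup (fun g => Classical.choose (A.F_exhausts g)) with hi0
    refine Filter.eventually_atTop.2 ⟨i₀, fun i hi g hg => ?_⟩
    have hgT : g ∈ T := by rw [hT_def]; exact (PLen_finite S N).mem_toFinset.2 hg
    have hch := Classical.choose_spec (A.F_exhausts g)
    exact A.F_mono ((Finset.le_sup hgT).trans hi) hch
  have hepsev : ∀ᶠ i in Filter.atTop, A.eps i < 1/2 :=
    A.eps_lim.eventually_lt_const (by norm_num)
  -- distance bounds for good points
  have hdub : ∀ (i N : ℕ), (∀ g', PLen S N g' → g' ∈ A.F i) → ∀ (a c : Γ),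
      len a + len c ≤ N → ∀ w ∈ A.Y i,
      (A.graph i).dist (A.sigma i a w) (A.sigma i (c * a) w) ≤ len c := by
    intro i N hBC a c hN w hw
    obtain ⟨l, hl1, hl2, hl3⟩ := hlenP c
    have := dist_word_le A hconn i N hBC hw l hl1 a (len a) (hlenP a) (by omega)
    rw [hl3] at this
    exact this.trans hl2
  have hdub0 : ∀ (i N : ℕ), (∀ g', PLen S N g' → g' ∈ A.F i) → ∀ (c : Γ),
      len c ≤ N → ∀ z ∈ GFin i,
      (A.graph i).dist z (A.sigma i c z) ≤ len c := by
    intro i N hBC c hN z hz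
    obtain ⟨hzY, hz1⟩ := (hGFin_mem i z).1 hz
    have h := hdub i N hBC 1 c (by
      have : len (1 : Γ) = 0 := Nat.le_zero.1 (hlen_le 1 0 (PLen_one 0))
      omega) z hzY
    rwa [hz1, mul_one] at h
  -- pointwise kernel bounds
  have hKlo : ∀ (i : ℕ) (x y : A.X i), ρminus 0 ≤ K i x y := by
    intro i x y
    exact le_trans (hmonoLo (Nat.cast_nonneg _)) (hctrl i x y).1
  have hKhi : ∀ (i : ℕ) (x y : A.X i) (D : ℝ), ((A.graph i).dist x y : ℝ) ≤ D →
      K i x y ≤ ρplus D := by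
    intro i x y D hD
    exact (hctrl i x y).2.trans (hmonoHi hD)
  have hKabs : ∀ (i : ℕ) (x y : A.X i) (D : ℝ), ((A.graph i).dist x y : ℝ) ≤ D →
      |K i x y| ≤ |ρminus 0| + |ρplus D| := by
    intro i x y D hD
    rw [abs_le]
    constructor
    · have := hKlo i x y
      have h2 := neg_abs_le (ρminus 0)
      have h3 := abs_nonneg (ρplus D)
      linarith
    · have := hKhi i x y D hD
      have h2 := le_abs_self (ρplus D)
      have h3 := abs_nonneg (ρminus 0)
      linarith
  -- limits exist
  have hpsilim : ∀ h : Γ, ∃ L, Filter.Tendsto (fun i => psii i h) (U : Filter ℕ) (nhds L) := by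
    intro h
    have hev : ∀ᶠ i in (U : Filter ℕ), psii i h ∈ Set.Icc (ρminus 0) (ρplus (len h)) := by
      refine hUle ?_
      filter_upwards [hBCev (2 * len h + 2), hepsev] with i hBC heps
      rw [hpsii_def]
      refine sum_div_card_mem_Icc _ (hGpos i heps) _ _ _ ?_
      intro z hz
      have hd := hdub0 i (2 * len h + 2) hBC h (by omega) z hz
      exact ⟨hKlo i _ _, hKhi i _ _ _ (by exact_mod_cast hd)⟩
    have hmem : Set.Icc (ρminus 0) (ρplus ((len h : ℝ))) ∈ U.map (fun i => psii i h) :=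
      Ultrafilter.mem_map.2 hev
    obtain ⟨L, _, hle⟩ := isCompact_Icc.ultrafilter_le_nhds (U.map fun i => psii i h)
      (Filter.le_principal_iff.2 hmem)
    refine ⟨L, ?_⟩
    show Filter.map (fun i => psii i h) ↑U ≤ nhds L
    rwa [← Ultrafilter.coe_map]
  choose psi0 hpsi0lim using hpsilim
  haveI : (U : Filter ℕ).NeBot := U.neBot
  -- value at 1
  have hpsii_one : ∀ i, psii i 1 = 0 := by
    intro i
    rw [hpsii_def]
    simp only
    rw [Finset.sum_eq_zero, zero_div]
    intro z hz
    rw [((hGFin_mem i z).1 hz).2, hdiag]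
  have hpsi0_one : psi0 1 = 0 := by
    refine tendsto_nhds_unique (hpsi0lim 1) ?_
    simpa [hpsii_one] using (tendsto_const_nhds : Filter.Tendsto (fun _ : ℕ => (0:ℝ)) _ _)
  -- lower bound
  have hpsi0_lb : ∀ h : Γ, ρminus ((len h : ℝ)) ≤ psi0 h := by
    intro h
    refine le_of_tendsto_of_tendsto (tendsto_const_nhds) (hpsi0lim h) (hUle ?_)
    filter_upwards [hBCev (2 * len h + 2), hepsev] with i hBC heps
    rw [hpsii_def]
    refine (sum_div_card_mem_Icc _ (hGpos i heps) _ (ρminus ((len h : ℝ)))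
      (ρplus ((len h : ℝ))) ?_).1
    intro z hz
    obtain ⟨hzY, hz1⟩ := (hGFin_mem i z).1 hz
    constructor
    · have hd := len_le_dist A hSsymm hconn i (2 * len h + 2) hBC hzY hz1 h (len h)
        (hlenP h) (fun m hm => hlen_le h m hm) (by omega)
      exact le_trans (hmonoLo (by exact_mod_cast hd)) (hctrl i _ _).1
    · have hd := hdub0 i (2 * len h + 2) hBC h (by omega) z hz
      exact hKhi i _ _ _ (by exact_mod_cast hd)
  -- conditional negative definiteness
  have hCND : ∀ (n : ℕ) (g : Fin n → Γ) (lam : Fin n → ℝ), (∑ k, lam k) = 0 →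
      (∑ k, ∑ l, lam k * lam l * psi0 ((g k)⁻¹ * g l)) ≤ 0 := by
    intro n g lam hsum
    have hsup : ∀ k, len (g k) ≤ Finset.univ.sup fun k => len (g k) :=
      fun k => Finset.le_sup (f := fun k => len (g k)) (Finset.mem_univ k)
    set Msup : ℕ := Finset.univ.sup fun k => len (g k) with hMsup_def
    set M : ℕ := 2 * Msup + 2 with hM_def
    have hgkM' : ∀ k, len ((g k)⁻¹) ≤ M := by
      intro k
      have h := hlen_le _ _ ((hlenP (g k)).inv hSsymm)
      have := hsup k
      omega
    have hcM : ∀ k l, len ((g k)⁻¹ * g l) ≤ M := by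
      intro k l
      have h1 := hlen_le _ _ (((hlenP (g k)).inv hSsymm).mul (hlenP (g l)))
      have h2 := hlen_le _ _ ((hlenP (g k)).inv hSsymm)
      have h3 := hsup k; have h4 := hsup l
      omega
    set N : ℕ := 3 * M + 3 with hN_def
    set B : ℝ := |ρminus 0| + |ρplus ((M : ℝ))| with hB_def
    have hB0 : 0 ≤ B := by positivity
    set Λ : ℝ := ∑ k, ∑ l, |lam k * lam l| with hLam_def
    have hΛ0 : 0 ≤ Λ :=
      Finset.sum_nonneg fun k _ => Finset.sum_nonneg fun l _ => abs_nonneg _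
    have hmain : ∀ᶠ i in Filter.atTop,
        (∑ k, ∑ l, lam k * lam l * psii i ((g k)⁻¹ * g l)) ≤
          (2 * Λ * B) * (2 * A.eps i / (1 - 2 * A.eps i)) := by
      filter_upwards [hBCev N, hepsev, hRlim.eventually_ge_atTop ((M : ℝ))]
        with i hBC heps hRi
      set D : ℝ := ((GFin i).card : ℝ) with hD_def
      have hD : 0 < D := hGpos i heps
      set Xc : ℝ := (Nat.card (A.X i) : ℝ) with hXc_def
      have hXD : 0 ≤ Xc - D := by
        have := hGleX i
        rw [hXc_def, hD_def]
        linarith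
      -- substitution identity at good points
      have hsubst : ∀ (k l : Fin n), ∀ w ∈ A.Y i,
          A.sigma i ((g k)⁻¹ * g l) (A.sigma i (g l)⁻¹ w) = A.sigma i (g k)⁻¹ w := by
        intro k l w hw
        rw [sigma_mul' A i N hBC hw (hlenP ((g k)⁻¹ * g l)) ((hlenP (g l)).inv hSsymm)
          (by have := hcM k l; omega) (by have := hsup l; omega)]
        congr 1
        group
      -- distance bound for pairs at good points
      have hpair : ∀ (k l : Fin n), ∀ w ∈ A.Y i,
          ((A.graph i).dist (A.sigma i (g k)⁻¹ w) (A.sigma i (g l)⁻¹ w) : ℝ) ≤ (M : ℝ) := by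
        intro k l w hw
        have h := hdub i N hBC (g l)⁻¹ ((g k)⁻¹ * g l)
          (by have := hgkM' l; have := hcM k l; omega) w hw
        rw [show ((g k)⁻¹ * g l) * (g l)⁻¹ = (g k)⁻¹ by group] at h
        have h2 : (A.graph i).dist (A.sigma i (g k)⁻¹ w) (A.sigma i (g l)⁻¹ w) ≤ M := by
          rw [SimpleGraph.dist_comm]
          exact h.trans (hcM k l)
        exact_mod_cast h2
      -- per-pair comparison of the two sums
      have key : ∀ (k l : Fin n),
          |(∑ z ∈ GFin i, K i z (A.sigma i ((g k)⁻¹ * g l) z))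
            - (∑ w ∈ GFin i, K i (A.sigma i (g k)⁻¹ w) (A.sigma i (g l)⁻¹ w))|
          ≤ B * (2 * (Xc - D)) := by
        intro k l
        set c : Γ := (g k)⁻¹ * g l with hc_def
        have hcM' : len c ≤ M := by rw [hc_def]; exact hcM k l
        set f : A.X i → ℝ := fun z => K i z (A.sigma i c z) with hf_def
        set H : Finset (A.X i) := (GFin i).image (A.sigma i (g l)⁻¹) with hH_def
        have hinj : Function.Injective (A.sigma i (g l)⁻¹) := (A.sigma i (g l)⁻¹).injective
        have hHcard : H.card = (GFin i).card := Finset.card_image_of_injective _ hinj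
        have hT' : (∑ w ∈ GFin i, K i (A.sigma i (g k)⁻¹ w) (A.sigma i (g l)⁻¹ w))
            = ∑ z ∈ H, f z := by
          rw [hH_def, Finset.sum_image (fun x _ y _ h => hinj h)]
          refine Finset.sum_congr rfl fun w hw => ?_
          have hwY : w ∈ A.Y i := ((hGFin_mem i w).1 hw).1
          rw [hf_def]
          simp only
          rw [hsubst k l w hwY, hsymm]
        have hfG : ∀ z ∈ GFin i, |f z| ≤ B := by
          intro z hz
          have hd := hdub0 i N hBC c (by omega) z hz
          refine hKabs i _ _ ((M : ℝ)) ?_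
          have : (A.graph i).dist z (A.sigma i c z) ≤ M := hd.trans hcM'
          exact_mod_cast this
        have hfH : ∀ z ∈ H, |f z| ≤ B := by
          intro z hz
          obtain ⟨w, hw, rfl⟩ := Finset.mem_image.1 hz
          have hwY : w ∈ A.Y i := ((hGFin_mem i w).1 hw).1
          have heq : f (A.sigma i (g l)⁻¹ w)
              = K i (A.sigma i (g l)⁻¹ w) (A.sigma i (g k)⁻¹ w) := by
            rw [hf_def]
            simp only
            rw [hsubst k l w hwY]
          rw [heq]
          refine hKabs i _ _ ((M : ℝ)) ?_
          rw [SimpleGraph.dist_comm]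
          exact hpair k l w hwY
        have hcard1 : ((H \ GFin i).card : ℝ) ≤ Xc - D := by
          haveI := Fintype.ofFinite (A.X i)
          have h1 : (H \ GFin i) ⊆ (GFin i)ᶜ :=
            fun z hz => Finset.mem_compl.2 (Finset.mem_sdiff.1 hz).2
          have h2 := Finset.card_le_card h1
          rw [Finset.card_compl] at h2
          have h3 : (GFin i).card ≤ Fintype.card (A.X i) := Finset.card_le_univ _
          have hXc' : Xc = (Fintype.card (A.X i) : ℝ) := by
            rw [hXc_def, Nat.card_eq_fintype_card]
          rw [hXc', hD_def]
          have h4 := (Nat.cast_le (α := ℝ)).2 h2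
          rwa [Nat.cast_sub h3] at h4
        have hcard2 : ((GFin i \ H).card : ℝ) ≤ Xc - D := by
          have e1 := Finset.card_sdiff_add_card_inter (GFin i) H
          have e2 := Finset.card_sdiff_add_card_inter H (GFin i)
          rw [Finset.inter_comm] at e2
          have e3 : (GFin i \ H).card = (H \ GFin i).card := by omega
          rw [e3]
          exact hcard1
        rw [hT']
        calc |(∑ z ∈ GFin i, f z) - ∑ z ∈ H, f z|
            ≤ B * (((GFin i \ H).card : ℝ) + ((H \ GFin i).card : ℝ)) :=
              sum_sdiff_abs_bound f (GFin i) H B hfG hfH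
          _ ≤ B * ((Xc - D) + (Xc - D)) :=
              mul_le_mul_of_nonneg_left (add_le_add hcard2 hcard1) hB0
          _ = B * (2 * (Xc - D)) := by ring
      -- negativity of the substituted double sum
      have hT'neg : (∑ k, ∑ l, lam k * lam l *
          (∑ w ∈ GFin i, K i (A.sigma i (g k)⁻¹ w) (A.sigma i (g l)⁻¹ w))) ≤ 0 := by
        have hswap : (∑ k, ∑ l, lam k * lam l *
            (∑ w ∈ GFin i, K i (A.sigma i (g k)⁻¹ w) (A.sigma i (g l)⁻¹ w)))
            = ∑ w ∈ GFin i, ∑ k, ∑ l, lam k * lam l *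
                K i (A.sigma i (g k)⁻¹ w) (A.sigma i (g l)⁻¹ w) := by
          simp_rw [Finset.mul_sum]
          calc (∑ k, ∑ l, ∑ w ∈ GFin i, lam k * lam l *
                K i (A.sigma i (g k)⁻¹ w) (A.sigma i (g l)⁻¹ w))
              = ∑ k, ∑ w ∈ GFin i, ∑ l, lam k * lam l *
                K i (A.sigma i (g k)⁻¹ w) (A.sigma i (g l)⁻¹ w) :=
                Finset.sum_congr rfl fun k _ => Finset.sum_comm
            _ = ∑ w ∈ GFin i, ∑ k, ∑ l, lam k * lam l *
                K i (A.sigma i (g k)⁻¹ w) (A.sigma i (g l)⁻¹ w) := Finset.sum_comm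
        rw [hswap]
        refine Finset.sum_nonpos fun w hw => ?_
        have hwY : w ∈ A.Y i := ((hGFin_mem i w).1 hw).1
        exact hcnd i n (fun k => A.sigma i (g k)⁻¹ w) lam hsum
          (fun k l => (hpair k l w hwY).trans hRi)
      -- expand psii and combine
      have hexpand : (∑ k, ∑ l, lam k * lam l * psii i ((g k)⁻¹ * g l))
          = (∑ k, ∑ l, lam k * lam l *
              (∑ z ∈ GFin i, K i z (A.sigma i ((g k)⁻¹ * g l) z))) / D := by
        rw [Finset.sum_div]
        refine Finset.sum_congr rfl fun k _ => ?_
        rw [Finset.sum_div]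
        refine Finset.sum_congr rfl fun l _ => ?_
        rw [hpsii_def]
        simp only
        rw [mul_div_assoc, hD_def]
      have hnum : (∑ k, ∑ l, lam k * lam l *
            (∑ z ∈ GFin i, K i z (A.sigma i ((g k)⁻¹ * g l) z)))
          ≤ Λ * (B * (2 * (Xc - D))) := by
        have step : (∑ k, ∑ l, lam k * lam l *
              (∑ z ∈ GFin i, K i z (A.sigma i ((g k)⁻¹ * g l) z)))
            = (∑ k, ∑ l, lam k * lam l *
                (∑ w ∈ GFin i, K i (A.sigma i (g k)⁻¹ w) (A.sigma i (g l)⁻¹ w)))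
              + (∑ k, ∑ l, lam k * lam l *
                  ((∑ z ∈ GFin i, K i z (A.sigma i ((g k)⁻¹ * g l) z))
                    - (∑ w ∈ GFin i, K i (A.sigma i (g k)⁻¹ w) (A.sigma i (g l)⁻¹ w)))) := by
          rw [← Finset.sum_add_distrib]
          refine Finset.sum_congr rfl fun k _ => ?_
          rw [← Finset.sum_add_distrib]
          refine Finset.sum_congr rfl fun l _ => ?_
          ring
        rw [step]
        have h2 : (∑ k, ∑ l, lam k * lam l *
            ((∑ z ∈ GFin i, K i z (A.sigma i ((g k)⁻¹ * g l) z))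
              - (∑ w ∈ GFin i, K i (A.sigma i (g k)⁻¹ w) (A.sigma i (g l)⁻¹ w))))
            ≤ Λ * (B * (2 * (Xc - D))) := by
          rw [hLam_def, Finset.sum_mul]
          refine Finset.sum_le_sum fun k _ => ?_
          rw [Finset.sum_mul]
          refine Finset.sum_le_sum fun l _ => ?_
          calc lam k * lam l * _ ≤ |lam k * lam l * _| := le_abs_self _
            _ = |lam k * lam l| * |_| := abs_mul _ _
            _ ≤ |lam k * lam l| * (B * (2 * (Xc - D))) :=
                mul_le_mul_of_nonneg_left (key k l) (abs_nonneg _)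
        linarith [hT'neg]
      rw [hexpand]
      have hfrac : (Xc - D) / D ≤ 2 * A.eps i / (1 - 2 * A.eps i) := by
        rw [div_le_div_iff₀ hD (by linarith : (0:ℝ) < 1 - 2 * A.eps i)]
        have hlb := hGcard_lb i
        rw [← hXc_def, ← hD_def] at hlb
        nlinarith
      calc (∑ k, ∑ l, lam k * lam l *
            (∑ z ∈ GFin i, K i z (A.sigma i ((g k)⁻¹ * g l) z))) / D
          ≤ (Λ * (B * (2 * (Xc - D)))) / D := by gcongr
        _ = (2 * Λ * B) * ((Xc - D) / D) := by ring
        _ ≤ (2 * Λ * B) * (2 * A.eps i / (1 - 2 * A.eps i)) := by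
            refine mul_le_mul_of_nonneg_left hfrac ?_
            have : (0:ℝ) ≤ 2 * Λ := by linarith
            exact mul_nonneg this hB0
    have hlhs : Filter.Tendsto
        (fun i => ∑ k, ∑ l, lam k * lam l * psii i ((g k)⁻¹ * g l)) (U : Filter ℕ)
        (nhds (∑ k, ∑ l, lam k * lam l * psi0 ((g k)⁻¹ * g l))) := by
      refine tendsto_finset_sum _ fun k _ => ?_
      refine tendsto_finset_sum _ fun l _ => ?_
      exact (hpsi0lim _).const_mul _
    have herrlim : Filter.Tendsto
        (fun i => (2 * Λ * B) * (2 * A.eps i / (1 - 2 * A.eps i)))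
        (U : Filter ℕ) (nhds 0) := by
      have h1 : Filter.Tendsto (fun i => 2 * A.eps i) Filter.atTop (nhds 0) := by
        simpa using A.eps_lim.const_mul 2
      have h2 : Filter.Tendsto (fun i => 1 - 2 * A.eps i) Filter.atTop (nhds 1) := by
        simpa using (tendsto_const_nhds (x := (1:ℝ))).sub h1
      have h3 := h1.div h2 (by norm_num)
      have h4 := h3.const_mul (2 * Λ * B)
      have h5 : Filter.Tendsto
          (fun i => (2 * Λ * B) * (2 * A.eps i / (1 - 2 * A.eps i)))
          Filter.atTop (nhds 0) := by
        simpa using h4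
      exact h5.mono_left hUle
    exact le_of_tendsto_of_tendsto hlhs herrlim (hUle hmain)

  -- assemble
  refine ⟨fun g => psi0 g + psi0 g⁻¹, ?_, ?_, ?_, ?_⟩
  · show psi0 1 + psi0 (1 : Γ)⁻¹ = 0
    rw [inv_one, hpsi0_one]; ring
  · intro g
    show psi0 g + psi0 g⁻¹ = psi0 g⁻¹ + psi0 g⁻¹⁻¹
    rw [inv_inv]; ring
  · intro n g lam hsum
    have h1 := hCND n g lam hsum
    have h2 : (∑ k, ∑ l, lam k * lam l * psi0 (((g k)⁻¹ * g l)⁻¹)) ≤ 0 := by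
      calc (∑ k, ∑ l, lam k * lam l * psi0 (((g k)⁻¹ * g l)⁻¹))
          = ∑ l, ∑ k, lam l * lam k * psi0 ((g l)⁻¹ * g k) := by
            rw [Finset.sum_comm]
            refine Finset.sum_congr rfl fun l _ => Finset.sum_congr rfl fun k _ => ?_
            rw [mul_inv_rev, inv_inv]
            ring
        _ ≤ 0 := hCND n g lam hsum
    calc (∑ k, ∑ l, lam k * lam l * (psi0 ((g k)⁻¹ * g l) + psi0 ((g k)⁻¹ * g l)⁻¹))
        = (∑ k, ∑ l, lam k * lam l * psi0 ((g k)⁻¹ * g l))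
          + (∑ k, ∑ l, lam k * lam l * psi0 (((g k)⁻¹ * g l)⁻¹)) := by
          rw [← Finset.sum_add_distrib]
          refine Finset.sum_congr rfl fun k _ => ?_
          rw [← Finset.sum_add_distrib]
          refine Finset.sum_congr rfl fun l _ => ?_
          ring
      _ ≤ 0 := by linarith
  · intro C
    obtain ⟨t₀, ht₀⟩ : ∃ t₀ : ℝ, ∀ t ≥ t₀, C - ρminus 0 < ρminus t := by
      obtain ⟨t₀, h⟩ := Filter.eventually_atTop.1 (hproper.eventually_ge_atTop (C - ρminus 0 + 1))
      exact ⟨t₀, fun t ht => by have := h t ht; linarith⟩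
    refine Set.Finite.subset (PLen_finite S ⌈t₀⌉₊) ?_
    intro g hg
    simp only [Set.mem_setOf_eq] at hg ⊢
    have hb1 := hpsi0_lb g
    have hb2 : ρminus 0 ≤ psi0 g⁻¹ :=
      le_trans (hmonoLo (Nat.cast_nonneg _)) (hpsi0_lb g⁻¹)
    have hkey : ρminus ((len g : ℝ)) ≤ C - ρminus 0 := by linarith
    have hlt : (len g : ℝ) < t₀ := by
      by_contra hge
      push_neg at hge
      exact absurd hkey (not_le.2 (ht₀ _ hge))
    have hle' : len g ≤ ⌈t₀⌉₊ := by
      have := hlt.trans_le (Nat.le_ceil t₀)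
      exact_mod_cast this.le
    exact (hlenP g).mono hle'
end

section
/- Let Γ be a group generated by a finite symmetric set S, and let N_1 ⊇ N_2 ⊇ ⋯ be a nested sequence of finite-index normal subgroups of Γ with ⋂_i N_i = {1}. Let X = ⨆_i Γ/N_i (disjoint union of the coset spaces), and for g ∈ Γ let ρ(g) : X → X be the bijection sending the coset xN_i to xgN_i. Then for every free (non-principal) ultrafilter η on X and all g ≠ h in Γ, one has Ultrafilter.map (ρ(g)) η ≠ Ultrafilter.map (ρ(h)) η; in particular, the induced action of Γ on the set of free ultrafilters on X is free. -/
lemma exists_coloring {G : Type*} [Group G] [Finite G] (a : G) (ha : a ≠ 1) :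
    ∃ c : G → Fin 3, ∀ x : G, c (x * a) ≠ c x := by
  classical
  set n := orderOf a with hn
  have hn2 : 2 ≤ n := by
    have h1 : n ≠ 1 := fun h => ha (orderOf_eq_one_iff.mp h)
    have h0 : 0 < n := (isOfFinOrder_of_finite a).orderOf_pos
    omega
  set r : G → G := fun x => ((QuotientGroup.mk x : G ⧸ Subgroup.zpowers a)).out with hr
  have hex : ∀ x : G, ∃ j : ℕ, x = r x * a ^ j := by
    intro x
    have h1 : (QuotientGroup.mk (r x) : G ⧸ Subgroup.zpowers a) = QuotientGroup.mk x :=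
      Quotient.out_eq _
    have h2 : (r x)⁻¹ * x ∈ Subgroup.zpowers a := (QuotientGroup.eq).mp h1
    rw [← mem_powers_iff_mem_zpowers] at h2
    obtain ⟨j, hj⟩ := h2
    exact ⟨j, by simp only [] at hj; rw [hj]; group⟩
  set m : G → ℕ := fun x => Nat.find (hex x) with hm
  have hspec : ∀ x, x = r x * a ^ m x := fun x => Nat.find_spec (hex x)
  have hlt : ∀ x, m x < n := by
    intro x
    have h1 : x = r x * a ^ (m x % n) := by
      rw [hn, pow_mod_orderOf]; exact hspec x
    have h2 : m x ≤ m x % n := Nat.find_min' (hex x) h1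
    have := Nat.mod_lt (m x) (by omega : 0 < n)
    omega
  have hstep : ∀ x, m (x * a) % n = (m x + 1) % n := by
    intro x
    have hrr : r (x * a) = r x := by
      have : (QuotientGroup.mk (x * a) : G ⧸ Subgroup.zpowers a) = QuotientGroup.mk x := by
        rw [QuotientGroup.eq]
        exact ⟨-1, by group⟩
      simp only [hr, this]
    have h1 : x * a = r x * a ^ (m x + 1) := by
      rw [pow_succ, ← mul_assoc, ← hspec x]
    have h2 : x * a = r x * a ^ (m (x * a)) := by rw [← hrr]; exact hspec (x * a)
    have h3 : a ^ (m (x * a)) = a ^ (m x + 1) := by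
      have := h2.symm.trans h1
      exact mul_left_cancel this
    exact pow_inj_mod.mp h3
  refine ⟨fun x => if m x = n - 1 ∧ n % 2 = 1 then 2 else ⟨m x % 2, by omega⟩, ?_⟩
  intro x
  have hp := hlt x
  have hq := hlt (x * a)
  have hpq := hstep x
  set p := m x
  set q := m (x * a)
  have hcase : (p + 1 < n ∧ q = p + 1) ∨ (p + 1 = n ∧ q = 0) := by
    rcases lt_or_eq_of_le (by omega : p + 1 ≤ n) with h | h
    · left
      refine ⟨h, ?_⟩
      rwa [Nat.mod_eq_of_lt hq, Nat.mod_eq_of_lt h] at hpq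
    · right
      refine ⟨h, ?_⟩
      rw [Nat.mod_eq_of_lt hq, h, Nat.mod_self] at hpq
      exact hpq
  simp only [Ne, Fin.ext_iff]
  split_ifs with h1 h2 h2 <;> simp only [Fin.val_two, Fin.val_mk] <;> omega

/-- **Freeness at the boundary for box spaces of residually finite groups.**
Let `Γ` be generated by a finite symmetric set `S`, and `N 0 ⊇ N 1 ⊇ ⋯` a nested chain of
finite-index normal subgroups with trivial intersection. On `X = ⨆ i, Γ/N i` let `ρ(g)` be
the bijection `xN i ↦ xgN i`. Then for every free ultrafilter `η` on `X` and all `g ≠ h`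
in `Γ`, `map (ρ g) η ≠ map (ρ h) η`: the induced `Γ`-action on the set of free
ultrafilters is free. -/
theorem box_space_boundary_action_free
    {Γ : Type*} [Group Γ] (S : Finset Γ)
    (hSsymm : ∀ s ∈ S, s⁻¹ ∈ S)
    (hSgen : Subgroup.closure (S : Set Γ) = ⊤)
    (N : ℕ → Subgroup Γ)
    (hnormal : ∀ i, (N i).Normal)
    (hfinite : ∀ i, (N i).FiniteIndex)
    (hnested : ∀ i, N (i + 1) ≤ N i)
    (htrivial : ∀ g : Γ, g ≠ 1 → ∃ i, g ∉ N i) :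
    ∀ η : Ultrafilter ((i : ℕ) × (Γ ⧸ N i)),
      (∀ p : (i : ℕ) × (Γ ⧸ N i), η ≠ pure p) →
      ∀ g h : Γ, g ≠ h →
        Ultrafilter.map
            (Equiv.sigmaCongrRight
              (fun i => Equiv.mulRight (QuotientGroup.mk g : Γ ⧸ N i))) η ≠
        Ultrafilter.map
            (Equiv.sigmaCongrRight
              (fun i => Equiv.mulRight (QuotientGroup.mk h : Γ ⧸ N i))) η := by
  classical
  intro η hfree g h hgh heq
  set k : Γ := h * g⁻¹ with hkdef
  have hk1 : k ≠ 1 := fun hk => hgh (mul_inv_eq_one.mp hk).symm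
  obtain ⟨i₀, hi₀⟩ := htrivial k hk1
  have hmono : ∀ i j : ℕ, i ≤ j → N j ≤ N i := fun i j hij =>
    antitone_nat_of_succ_le (fun t => hnested t) hij
  have hbad : ∀ i, k ∈ N i → i < i₀ := by
    intro i hki
    by_contra hle
    exact hi₀ (hmono i₀ i (le_of_not_gt hle) hki)
  -- choose colorings
  have hC : ∀ i : ℕ, ∃ c : (Γ ⧸ N i) → Fin 3,
      k ∉ N i → ∀ x : Γ ⧸ N i, c (x * QuotientGroup.mk k) ≠ c x := by
    intro i
    haveI := hfinite i
    by_cases hki : k ∈ N i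
    · exact ⟨fun _ => 0, fun hcon => absurd hki hcon⟩
    · obtain ⟨c, hc⟩ := exists_coloring (QuotientGroup.mk k : Γ ⧸ N i)
        (by simpa [QuotientGroup.eq_one_iff] using hki)
      exact ⟨c, fun _ => hc⟩
  choose C hCspec using hC
  let X := (i : ℕ) × (Γ ⧸ N i)
  set c : X → Fin 3 := fun p => C p.1 p.2 with hc
  set F : Set X := {p | k ∈ N p.1} with hF
  have hFfin : F.Finite := by
    have hsub : F ⊆ ⋃ i ∈ Set.Iio i₀, Sigma.mk i '' (Set.univ : Set (Γ ⧸ N i)) := by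
      rintro ⟨i, x⟩ hp
      simp only [Set.mem_iUnion, Set.mem_Iio, Set.image_univ, Set.mem_range]
      exact ⟨i, hbad i hp, x, rfl⟩
    refine Set.Finite.subset (Set.Finite.biUnion (Set.finite_Iio i₀) (fun i _ => ?_)) hsub
    haveI := hfinite i
    exact Set.finite_univ.image _
  have hFc : Fᶜ ∈ η := by
    by_contra hcon
    rw [← Ultrafilter.compl_mem_iff_notMem, compl_compl] at hcon
    obtain ⟨p, _, hp⟩ := Ultrafilter.eq_pure_of_finite_mem hFfin hcon
    exact hfree p hp
  -- pick the color with full measure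
  have hcover : ∃ j : Fin 3, {p : X | p ∉ F ∧ c p = j} ∈ η := by
    have hsplit : Fᶜ ⊆ {p : X | p ∉ F ∧ c p = 0} ∪
        ({p : X | p ∉ F ∧ c p = 1} ∪ {p : X | p ∉ F ∧ c p = 2}) := by
      intro p hp
      have h3 : ∀ v : Fin 3, v = 0 ∨ v = 1 ∨ v = 2 := by decide
      rcases h3 (c p) with hv | hv | hv
      · exact Or.inl ⟨hp, hv⟩
      · exact Or.inr (Or.inl ⟨hp, hv⟩)
      · exact Or.inr (Or.inr ⟨hp, hv⟩)
    have hmem := Filter.mem_of_superset hFc hsplit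
    rcases (Ultrafilter.union_mem_iff).mp hmem with h0 | h12
    · exact ⟨0, h0⟩
    rcases (Ultrafilter.union_mem_iff).mp h12 with h1 | h2
    · exact ⟨1, h1⟩
    · exact ⟨2, h2⟩
  obtain ⟨j, hA⟩ := hcover
  set A : Set X := {p : X | p ∉ F ∧ c p = j} with hAdef
  set ρg := Equiv.sigmaCongrRight (fun i => Equiv.mulRight (QuotientGroup.mk g : Γ ⧸ N i))
    with hρg
  set ρh := Equiv.sigmaCongrRight (fun i => Equiv.mulRight (QuotientGroup.mk h : Γ ⧸ N i))
    with hρh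
  have h1 : ρg '' A ∈ Ultrafilter.map ρg η := by
    rw [Ultrafilter.mem_map, Equiv.preimage_image]
    exact hA
  rw [heq, Ultrafilter.mem_map] at h1
  have h2 : (A ∩ ρh ⁻¹' (ρg '' A)).Nonempty :=
    Ultrafilter.nonempty_of_mem (Filter.inter_mem hA h1)
  obtain ⟨⟨i, x⟩, hpA, hpB⟩ := h2
  obtain ⟨q, hqA, hqe⟩ := hpB
  have hq : q = ⟨i, x * QuotientGroup.mk k⟩ := by
    have : q = ρg.symm (ρh ⟨i, x⟩) := by rw [← hqe, Equiv.symm_apply_apply]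
    rw [this]
    simp only [hρg, hρh, Equiv.sigmaCongrRight_symm, Equiv.sigmaCongrRight_apply,
      Equiv.mulRight_symm, Equiv.coe_mulRight, hkdef]
    congr 1
    rw [mul_assoc, ← QuotientGroup.mk_inv, ← QuotientGroup.mk_mul]
  rw [hq] at hqA
  have hknotin : k ∉ N i := hpA.1
  exact hCspec i hknotin x (hqA.2.trans hpA.2.symm)
end

section
/- Let Γ be a group generated by a finite symmetric set S and Λ a group generated by a finite symmetric set T, each equipped with a sofic approximation whose approximating sets are connected as labelled graphs, and let (X, d_X) and (X′, d_{X′}) be the associated spaces of graphs with admissible metrics. If there is a coarse equivalence f : X → X′, then Γ and Λ are quasi-isometric: there exist F : Γ → Λ, C ≥ 1 and K ≥ 0 such that (1/C)·|g⁻¹h|_S − K ≤ |F(g)⁻¹F(h)|_T ≤ C·|g⁻¹h|_S + K for all g, h ∈ Γ, and for every λ ∈ Λ there is g ∈ Γ with |F(g)⁻¹λ|_T ≤ K. -/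
open scoped BigOperators symmDiff Classical

universe u v

namespace WL
variable {Γ : Type u} [Group Γ] {S : Finset Γ}

lemma exists_list (hSsymm : ∀ s ∈ S, s⁻¹ ∈ S) (hSgen : Subgroup.closure (S : Set Γ) = ⊤)
    (g : Γ) : ∃ l : List Γ, (∀ x ∈ l, x ∈ S) ∧ l.prod = g := by
  have hg : g ∈ Subgroup.closure (S : Set Γ) := by rw [hSgen]; trivial
  induction hg using Subgroup.closure_induction with
  | mem x hx => exact ⟨[x], by simpa using hx, by simp⟩
  | one => exact ⟨[], by simp, by simp⟩
  | mul x y _ _ hx hy =>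
      obtain ⟨l1, h1, e1⟩ := hx; obtain ⟨l2, h2, e2⟩ := hy
      refine ⟨l1 ++ l2, ?_, by simp [e1, e2]⟩
      intro a ha
      rcases List.mem_append.1 ha with h | h
      exacts [h1 a h, h2 a h]
  | inv x _ hx =>
      obtain ⟨l, h1, e1⟩ := hx
      refine ⟨(l.map fun a => a⁻¹).reverse, ?_, ?_⟩
      · intro a ha
        simp only [List.mem_reverse, List.mem_map] at ha
        obtain ⟨b, hb, rfl⟩ := ha
        exact hSsymm b (h1 b hb)
      · rw [← List.prod_inv_reverse, e1]

lemma setNe (hSsymm : ∀ s ∈ S, s⁻¹ ∈ S) (hSgen : Subgroup.closure (S : Set Γ) = ⊤) (g : Γ) :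
    {n | ∃ l : List Γ, (∀ x ∈ l, x ∈ S) ∧ l.length = n ∧ l.prod = g}.Nonempty := by
  obtain ⟨l, h1, h2⟩ := exists_list hSsymm hSgen g
  exact ⟨l.length, l, h1, rfl, h2⟩

lemma spec (hSsymm : ∀ s ∈ S, s⁻¹ ∈ S) (hSgen : Subgroup.closure (S : Set Γ) = ⊤) (g : Γ) :
    ∃ l : List Γ, (∀ x ∈ l, x ∈ S) ∧ l.length = wordLength S g ∧ l.prod = g :=
  Nat.sInf_mem (setNe hSsymm hSgen g)

lemma le_of_list {g : Γ} {l : List Γ} (h1 : ∀ x ∈ l, x ∈ S) (h2 : l.prod = g) :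
    wordLength S g ≤ l.length :=
  Nat.sInf_le ⟨l, h1, rfl, h2⟩

lemma one : wordLength S (1 : Γ) = 0 :=
  Nat.le_zero.1 (le_of_list (l := []) (by simp) (by simp))

lemma mul (hSsymm : ∀ s ∈ S, s⁻¹ ∈ S) (hSgen : Subgroup.closure (S : Set Γ) = ⊤) (g h : Γ) :
    wordLength S (g * h) ≤ wordLength S g + wordLength S h := by
  obtain ⟨l1, a1, b1, c1⟩ := spec hSsymm hSgen g
  obtain ⟨l2, a2, b2, c2⟩ := spec hSsymm hSgen h
  have hmem : ∀ x ∈ l1 ++ l2, x ∈ S := by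
    intro x hx
    rcases List.mem_append.1 hx with h | h
    exacts [a1 x h, a2 x h]
  calc wordLength S (g * h) ≤ (l1 ++ l2).length :=
        le_of_list hmem (by simp [c1, c2])
    _ = wordLength S g + wordLength S h := by simp [b1, b2]

lemma inv_le (hSsymm : ∀ s ∈ S, s⁻¹ ∈ S) (hSgen : Subgroup.closure (S : Set Γ) = ⊤) (g : Γ) :
    wordLength S g⁻¹ ≤ wordLength S g := by
  obtain ⟨l, a1, b1, c1⟩ := spec hSsymm hSgen g
  calc wordLength S g⁻¹ ≤ ((l.map fun a => a⁻¹).reverse).length :=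
        le_of_list (by
          intro a ha
          simp only [List.mem_reverse, List.mem_map] at ha
          obtain ⟨b, hb, rfl⟩ := ha
          exact hSsymm b (a1 b hb)) (by rw [← List.prod_inv_reverse, c1])
    _ = wordLength S g := by simp [b1]

lemma inv (hSsymm : ∀ s ∈ S, s⁻¹ ∈ S) (hSgen : Subgroup.closure (S : Set Γ) = ⊤) (g : Γ) :
    wordLength S g⁻¹ = wordLength S g :=
  le_antisymm (inv_le hSsymm hSgen g) (by
    simpa using inv_le hSsymm hSgen g⁻¹)

lemma single {s : Γ} (hs : s ∈ S) : wordLength S s ≤ 1 :=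
  le_of_list (l := [s]) (by simpa using hs) (by simp)

lemma lists_finite (S : Finset Γ) : ∀ n : ℕ,
    {l : List Γ | (∀ x ∈ l, x ∈ S) ∧ l.length ≤ n}.Finite
  | 0 => by
      apply Set.Finite.subset (Set.finite_singleton ([] : List Γ))
      rintro l ⟨-, hl⟩
      simpa using List.length_eq_zero_iff.1 (Nat.le_zero.1 hl)
  | (n+1) => by
      have hrec := lists_finite S n
      have : {l : List Γ | (∀ x ∈ l, x ∈ S) ∧ l.length ≤ n+1} ⊆
          {l : List Γ | (∀ x ∈ l, x ∈ S) ∧ l.length ≤ n} ∪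
          ⋃ s ∈ (S : Set Γ), (fun l => s :: l) ''
            {l : List Γ | (∀ x ∈ l, x ∈ S) ∧ l.length ≤ n} := by
        rintro l ⟨h1, h2⟩
        match l with
        | [] => exact Or.inl ⟨h1, by simp⟩
        | (a :: l') =>
            right
            refine Set.mem_biUnion (h1 a (by simp)) ⟨l', ⟨?_, ?_⟩, rfl⟩
            · intro x hx; exact h1 x (by simp [hx])
            · simpa using h2
      refine Set.Finite.subset (Set.Finite.union hrec ?_) this
      exact Set.Finite.biUnion S.finite_toSet (fun s _ => hrec.image _)

lemma ball_finite (hSsymm : ∀ s ∈ S, s⁻¹ ∈ S) (hSgen : Subgroup.closure (S : Set Γ) = ⊤)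
    (n : ℕ) : {g : Γ | wordLength S g ≤ n}.Finite := by
  apply Set.Finite.subset (((lists_finite S n).image List.prod))
  intro g hg
  simp only [Set.mem_setOf_eq] at hg
  obtain ⟨l, a1, b1, c1⟩ := spec hSsymm hSgen g
  exact ⟨l, ⟨a1, by omega⟩, c1⟩

end WL

namespace SoficApprox
section GraphLemmas
variable {Γ : Type u} [Group Γ] {S : Finset Γ} (A : SoficApprox Γ S)

/-- Stage `i` contains the ball of radius `R` in its multiplicativity domain. -/
def ready (i R : ℕ) : Prop := ∀ g : Γ, wordLength S g ≤ R → g ∈ A.F i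

lemma ready_exists (hSsymm : ∀ s ∈ S, s⁻¹ ∈ S) (hSgen : Subgroup.closure (S : Set Γ) = ⊤)
    (R : ℕ) : ∃ i0 : ℕ, ∀ i, i0 ≤ i → A.ready i R := by
  classical
  have hfin := WL.ball_finite hSsymm hSgen (S := S) R
  choose idx hidx using A.F_exhausts
  refine ⟨hfin.toFinset.sup idx, fun i hi g hg => ?_⟩
  have hgm : g ∈ hfin.toFinset := by simpa using hg
  exact A.F_mono (le_trans (Finset.le_sup hgm) hi) (hidx g)

variable {A}
variable {i : ℕ}

lemma sigma_one {y : A.X i} (hy : y ∈ A.Y i) : A.sigma i 1 y = y := by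
  have h := A.sigma_mul i 1 (A.F_one i) 1 (A.F_one i) y hy
  rw [mul_one] at h
  exact (A.sigma i 1).injective h

lemma sigma_free' {R : ℕ} (hready : A.ready i R)
    (hSsymm : ∀ s ∈ S, s⁻¹ ∈ S) (hSgen : Subgroup.closure (S : Set Γ) = ⊤)
    {y : A.X i} (hy : y ∈ A.Y i) {a b : Γ} {R0 : ℕ}
    (ha : wordLength S a ≤ R0) (hb : wordLength S b ≤ R0) (hR : 2 * R0 ≤ R)
    (heq : A.sigma i a y = A.sigma i b y) : a = b := by
  by_contra hne
  have hainv : wordLength S a⁻¹ ≤ R0 := by rw [WL.inv hSsymm hSgen]; exact ha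
  have hmem_a : a⁻¹ ∈ A.F i := hready _ (le_trans hainv (by omega))
  have hmem_b : b ∈ A.F i := hready _ (le_trans hb (by omega))
  have hmem_a' : a ∈ A.F i := hready _ (le_trans ha (by omega))
  have h1 : A.sigma i (a⁻¹ * b) y = y := by
    rw [← A.sigma_mul i a⁻¹ hmem_a b hmem_b y hy, ← heq,
      A.sigma_mul i a⁻¹ hmem_a a hmem_a' y hy, inv_mul_cancel]
    exact sigma_one hy
  have hmem : a⁻¹ * b ∈ A.F i := by
    apply hready
    calc wordLength S (a⁻¹ * b) ≤ wordLength S a⁻¹ + wordLength S b :=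
          WL.mul hSsymm hSgen _ _
      _ ≤ R := by omega
  exact A.sigma_free i (a⁻¹ * b) hmem (fun h => hne (inv_mul_eq_one.mp h)) y hy h1

end GraphLemmas
end SoficApprox

namespace SoficApprox
section GraphLemmas2
variable {Γ : Type u} [Group Γ] {S : Finset Γ} {A : SoficApprox Γ S} {i : ℕ}

/-- distance from start to the `n`-th vertex of a walk is at most `n`. -/
lemma getVert_dist {V : Type} {G : SimpleGraph V} (hc : G.Connected) :
    ∀ {u v : V} (w : G.Walk u v) (n : ℕ), G.dist u (w.getVert n) ≤ n := by
  intro u v w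
  induction w with
  | @nil z =>
      intro n
      have h0 : (SimpleGraph.Walk.nil : G.Walk z z).getVert n = z := rfl
      rw [h0]; simp [SimpleGraph.dist_self]
  | cons h q ih =>
      intro n
      match n with
      | 0 => simp [SimpleGraph.Walk.getVert_zero, SimpleGraph.dist_self]
      | (n+1) =>
          rw [SimpleGraph.Walk.getVert_cons_succ]
          calc G.dist _ _ ≤ G.dist _ _ + G.dist _ _ := hc.dist_triangle
            _ ≤ 1 + n := by
                gcongr
                · exact SimpleGraph.dist_le (SimpleGraph.Walk.cons h SimpleGraph.Walk.nil)
                · exact ih n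
            _ = n + 1 := by omega

/-- Upper bound: orbit points are within word-length distance. -/
lemma orbit_dist_le (hconn : (A.graph i).Connected)
    (hSsymm : ∀ s ∈ S, s⁻¹ ∈ S) (hSgen : Subgroup.closure (S : Set Γ) = ⊤)
    {R : ℕ} (hready : A.ready i R) {y : A.X i} (hy : y ∈ A.Y i) :
    ∀ (l : List Γ), (∀ x ∈ l, x ∈ S) → ∀ (a : Γ), l.length + wordLength S a ≤ R →
      (A.graph i).dist (A.sigma i a y) (A.sigma i (l.prod * a) y) ≤ l.length := by
  intro l
  induction l with
  | nil => intro _ a _; simp [SimpleGraph.dist_self]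
  | cons s l' ih =>
      intro hmem a hbud
      have hs : s ∈ S := hmem s (by simp)
      have hl' : ∀ x ∈ l', x ∈ S := fun x hx => hmem x (by simp [hx])
      have hwl' : wordLength S l'.prod ≤ l'.length := WL.le_of_list hl' rfl
      have hpa : wordLength S (l'.prod * a) ≤ l'.length + wordLength S a :=
        le_trans (WL.mul hSsymm hSgen _ _) (by omega)
      have hkey : A.sigma i (s * (l'.prod * a)) y = A.sigma i s (A.sigma i (l'.prod * a) y) := by
        rw [A.sigma_mul i s (hready _ (le_trans (WL.single hs) (by simp at hbud; omega)))
          (l'.prod * a) (hready _ (le_trans hpa (by simp at hbud; omega))) y hy]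
      have heq : (s :: l').prod * a = s * (l'.prod * a) := by
        simp [List.prod_cons, mul_assoc]
      rw [heq, hkey]
      set pt := A.sigma i (l'.prod * a) y with hpt
      have hstep : (A.graph i).dist pt (A.sigma i s pt) ≤ 1 := by
        by_cases hfix : A.sigma i s pt = pt
        · rw [hfix]; simp [SimpleGraph.dist_self]
        · have hadj : (A.graph i).Adj pt (A.sigma i s pt) :=
            ⟨fun h => hfix h.symm, s, hs, Or.inl rfl⟩
          exact SimpleGraph.dist_le (SimpleGraph.Walk.cons hadj SimpleGraph.Walk.nil)
      calc (A.graph i).dist (A.sigma i a y) (A.sigma i s pt)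
          ≤ (A.graph i).dist (A.sigma i a y) pt + (A.graph i).dist pt (A.sigma i s pt) :=
            hconn.dist_triangle
        _ ≤ l'.length + 1 := by
            gcongr
            exact ih hl' a (by simp at hbud; omega)
        _ = (s :: l').length := by simp

/-- Points near an orbit point are in the orbit. -/
lemma orbit_surj (hSsymm : ∀ s ∈ S, s⁻¹ ∈ S) (hSgen : Subgroup.closure (S : Set Γ) = ⊤)
    {R : ℕ} (hready : A.ready i R) {y : A.X i} (hy : y ∈ A.Y i) :
    ∀ (u x : A.X i) (w : (A.graph i).Walk u x) (a : Γ), u = A.sigma i a y →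
      w.length + wordLength S a + 1 ≤ R →
      ∃ c : Γ, wordLength S c ≤ w.length ∧ x = A.sigma i (c * a) y := by
  intro u x w
  induction w with
  | nil => intro a hu _; exact ⟨1, by simp [WL.one], by simpa [hu]⟩
  | @cons u' v' x' h q ih =>
      intro a hu hbud
      subst hu
      obtain ⟨hne, s, hs, hcase⟩ := h
      have hsF : s ∈ A.F i := hready _ (le_trans (WL.single hs) (by omega))
      have haF : a ∈ A.F i := hready _ (by omega)
      rcases hcase with hc1 | hc2
      · -- v' = σ (s*a) y
        have hv : v' = A.sigma i (s * a) y := by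
          rw [← hc1, A.sigma_mul i s hsF a haF y hy]
        have hwl : wordLength S (s * a) ≤ wordLength S a + 1 := by
          calc wordLength S (s * a) ≤ wordLength S s + wordLength S a := WL.mul hSsymm hSgen _ _
            _ ≤ wordLength S a + 1 := by have := WL.single hs; omega
        obtain ⟨c', hc'1, hc'2⟩ := ih (s * a) hv (by have hb : q.length + 1 + wordLength S a + 1 ≤ R := hbud; omega)
        refine ⟨c' * s, ?_, by rw [hc'2, mul_assoc]⟩
        calc wordLength S (c' * s) ≤ wordLength S c' + wordLength S s := WL.mul hSsymm hSgen _ _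
          _ ≤ q.length + 1 := by have := WL.single hs; omega
          _ = (SimpleGraph.Walk.cons _ q).length := rfl
      · -- σ s v' = σ a y, so v' = σ (s⁻¹ * a) y
        have hsinv : s⁻¹ ∈ S := hSsymm s hs
        have hsinvF : s⁻¹ ∈ A.F i := hready _ (le_trans (WL.single hsinv) (by omega))
        have hwl : wordLength S (s⁻¹ * a) ≤ wordLength S a + 1 := by
          calc wordLength S (s⁻¹ * a) ≤ wordLength S s⁻¹ + wordLength S a :=
                WL.mul hSsymm hSgen _ _
            _ ≤ wordLength S a + 1 := by have := WL.single hsinv; omega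
        have hsiaF : s⁻¹ * a ∈ A.F i := hready _ (by simp at hbud; omega)
        have hv : v' = A.sigma i (s⁻¹ * a) y := by
          apply (A.sigma i s).injective
          rw [hc2, A.sigma_mul i s hsF (s⁻¹ * a) hsiaF y hy, mul_inv_cancel_left]
        obtain ⟨c', hc'1, hc'2⟩ := ih (s⁻¹ * a) hv (by have hb : q.length + 1 + wordLength S a + 1 ≤ R := hbud; omega)
        refine ⟨c' * s⁻¹, ?_, by rw [hc'2, mul_assoc]⟩
        calc wordLength S (c' * s⁻¹) ≤ wordLength S c' + wordLength S s⁻¹ :=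
              WL.mul hSsymm hSgen _ _
          _ ≤ q.length + 1 := by have := WL.single hsinv; omega
          _ = (SimpleGraph.Walk.cons _ q).length := rfl

/-- Exact distance formula on the orbit of a good point. -/
lemma orbit_dist_eq (hconn : (A.graph i).Connected)
    (hSsymm : ∀ s ∈ S, s⁻¹ ∈ S) (hSgen : Subgroup.closure (S : Set Γ) = ⊤)
    {R R0 : ℕ} (hready : A.ready i R) {y : A.X i} (hy : y ∈ A.Y i)
    {a b : Γ} (ha : wordLength S a ≤ R0) (hb : wordLength S b ≤ R0) (hR : 6 * R0 + 6 ≤ R) :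
    (A.graph i).dist (A.sigma i a y) (A.sigma i b y) = wordLength S (b * a⁻¹) := by
  have hba : wordLength S (b * a⁻¹) ≤ 2 * R0 := by
    have h1 : wordLength S a⁻¹ = wordLength S a := WL.inv hSsymm hSgen a
    have := WL.mul hSsymm hSgen b a⁻¹
    omega
  apply le_antisymm
  · obtain ⟨l, hl1, hl2, hl3⟩ := WL.spec hSsymm hSgen (b * a⁻¹)
    have := orbit_dist_le hconn hSsymm hSgen hready hy l hl1 a (by omega)
    rw [hl3, inv_mul_cancel_right] at this
    rwa [hl2] at this
  · obtain ⟨w, hw⟩ := hconn.exists_walk_length_eq_dist (A.sigma i a y) (A.sigma i b y)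
    have hdle : (A.graph i).dist (A.sigma i a y) (A.sigma i b y) ≤ 2 * R0 := by
      obtain ⟨l, hl1, hl2, hl3⟩ := WL.spec hSsymm hSgen (b * a⁻¹)
      have := orbit_dist_le hconn hSsymm hSgen hready hy l hl1 a (by omega)
      rw [hl3, inv_mul_cancel_right] at this
      omega
    obtain ⟨c, hc1, hc2⟩ := orbit_surj hSsymm hSgen hready hy _ _ w a rfl (by omega)
    have hcb : c * a = b := by
      refine sigma_free' hready hSsymm hSgen hy (R0 := 3 * R0 + 1) ?_ (by omega) (by omega)
        hc2.symm
      calc wordLength S (c * a) ≤ wordLength S c + wordLength S a := WL.mul hSsymm hSgen _ _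
        _ ≤ 3 * R0 + 1 := by omega
    have : b * a⁻¹ = c := by rw [← hcb, mul_inv_cancel_right]
    rw [this]; omega
end GraphLemmas2
end SoficApprox

namespace SoficApprox
section BallCount
variable {Γ : Type u} [Group Γ] {S : Finset Γ} {A : SoficApprox Γ S} {i : ℕ}

open Finset in
lemma ball_card (hconn : (A.graph i).Connected) [Fintype (A.X i)] [DecidableEq (A.X i)]
    (x : A.X i) : ∀ (R : ℕ),
    (Finset.univ.filter (fun y => (A.graph i).dist x y ≤ R)).card ≤ (2 * S.card + 1) ^ R := by
  intro R
  induction R with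
  | zero =>
      have hsub : (Finset.univ.filter (fun y => (A.graph i).dist x y ≤ 0)) ⊆ {x} := by
        intro y hy
        simp only [mem_filter, Nat.le_zero] at hy
        have := (hconn.dist_eq_zero_iff).1 hy.2
        simp [this]
      simpa using Finset.card_le_card hsub
  | succ R ih =>
      classical
      set N : A.X i → Finset (A.X i) := fun y =>
        insert y ((S.image fun s => A.sigma i s y) ∪ (S.image fun s => (A.sigma i s).symm y))
        with hN
      have hNcard : ∀ y, (N y).card ≤ 2 * S.card + 1 := by
        intro y
        calc (N y).card ≤ ((S.image fun s => A.sigma i s y) ∪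
              (S.image fun s => (A.sigma i s).symm y)).card + 1 := Finset.card_insert_le _ _
          _ ≤ ((S.image fun s => A.sigma i s y).card +
              (S.image fun s => (A.sigma i s).symm y).card) + 1 := by
                gcongr; exact Finset.card_union_le _ _
          _ ≤ 2 * S.card + 1 := by
              have h1 := Finset.card_image_le (s := S) (f := fun s => A.sigma i s y)
              have h2 := Finset.card_image_le (s := S) (f := fun s => (A.sigma i s).symm y)
              omega
      have hsub : (Finset.univ.filter (fun y => (A.graph i).dist x y ≤ R + 1)) ⊆
          (Finset.univ.filter (fun y => (A.graph i).dist x y ≤ R)).biUnion N := by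
        intro y hy
        simp only [mem_filter, mem_univ, true_and] at hy
        by_cases hle : (A.graph i).dist x y ≤ R
        · exact Finset.mem_biUnion.2 ⟨y, by simp [hle], by simp [hN]⟩
        · have hdy : (A.graph i).dist x y = R + 1 := by omega
          obtain ⟨w, hw⟩ := hconn.exists_walk_length_eq_dist x y
          rw [hdy] at hw
          set v := w.getVert R with hv
          have hdv : (A.graph i).dist x v ≤ R := getVert_dist hconn w R
          have hadj : (A.graph i).Adj v y := by
            have := w.adj_getVert_succ (i := R) (by omega)
            rw [← hv] at this
            have hlast : w.getVert (R + 1) = y := by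
              rw [← hw]; exact w.getVert_length
            rwa [hlast] at this
          refine Finset.mem_biUnion.2 ⟨v, by simp [hdv], ?_⟩
          obtain ⟨-, s, hs, hcase⟩ := hadj
          rcases hcase with h1 | h1
          · apply Finset.mem_insert_of_mem
            exact Finset.mem_union_left _ (Finset.mem_image.2 ⟨s, hs, h1⟩)
          · apply Finset.mem_insert_of_mem
            refine Finset.mem_union_right _ (Finset.mem_image.2 ⟨s, hs, ?_⟩)
            exact (Equiv.symm_apply_eq _).2 h1.symm
      calc (Finset.univ.filter (fun y => (A.graph i).dist x y ≤ R + 1)).card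
          ≤ ((Finset.univ.filter (fun y => (A.graph i).dist x y ≤ R)).biUnion N).card :=
            Finset.card_le_card hsub
        _ ≤ ∑ y ∈ Finset.univ.filter (fun y => (A.graph i).dist x y ≤ R), (N y).card :=
            Finset.card_biUnion_le
        _ ≤ ∑ _y ∈ Finset.univ.filter (fun y => (A.graph i).dist x y ≤ R), (2 * S.card + 1) :=
            Finset.sum_le_sum (fun y _ => hNcard y)
        _ ≤ (2 * S.card + 1) ^ R * (2 * S.card + 1) := by
            rw [Finset.sum_const, smul_eq_mul]
            exact Nat.mul_le_mul_right _ ih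
        _ = (2 * S.card + 1) ^ (R + 1) := by ring

/-- Any finset of vertices pairwise-close to a fixed vertex is small. -/
lemma card_le_of_dist_le (hconn : (A.graph i).Connected) [Fintype (A.X i)]
    [DecidableEq (A.X i)] (x : A.X i) (R : ℕ) (t : Finset (A.X i))
    (ht : ∀ y ∈ t, (A.graph i).dist x y ≤ R) : t.card ≤ (2 * S.card + 1) ^ R := by
  refine le_trans (Finset.card_le_card ?_) (ball_card hconn x R)
  intro y hy
  simp [ht y hy]
end BallCount
end SoficApprox

/-- Reconstruct a sigma pair whose first component is known. -/
lemma sigma_recon {X : ℕ → Type} {i : ℕ} (p : Σ k, X k) (h : p.1 = i) :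
    p = ⟨i, cast (congrArg X h) p.2⟩ := by
  cases p with
  | mk a b =>
      cases h
      rfl

set_option maxHeartbeats 2000000 in
open SoficApprox in
/-- **Coarsely equivalent sofic approximations give quasi-isometric groups.**
If the spaces of graphs of sofic approximations of `Γ = ⟨S⟩` and `Λ = ⟨T⟩` (with connected
approximating graphs and admissible metrics) are coarsely equivalent, then `Γ` and `Λ`
are quasi-isometric. -/
theorem quasiIsometric_of_coarse_equivalence
    {Γ : Type u} [Group Γ] {S : Finset Γ}
    {Λ : Type u} [Group Λ] {T : Finset Λ}
    (hSsymm : ∀ s ∈ S, s⁻¹ ∈ S) (hSgen : Subgroup.closure (S : Set Γ) = ⊤)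
    (hTsymm : ∀ t ∈ T, t⁻¹ ∈ T) (hTgen : Subgroup.closure (T : Set Λ) = ⊤)
    (A : SoficApprox Γ S) (B : SoficApprox Λ T)
    (hconnA : ∀ i, (A.graph i).Connected) (hconnB : ∀ i, (B.graph i).Connected)
    (dX : A.Total → A.Total → ℝ) (hdX : A.Admissible dX)
    (dX' : B.Total → B.Total → ℝ) (hdX' : B.Admissible dX')
    (f : A.Total → B.Total)
    (rhoLo rhoHi : ℝ → ℝ)
    (hLo : MonotoneOn rhoLo (Set.Ici 0)) (hHi : MonotoneOn rhoHi (Set.Ici 0))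
    (hproper : Filter.Tendsto rhoLo Filter.atTop Filter.atTop)
    (hbound : ∀ p q : A.Total,
      rhoLo (dX p q) ≤ dX' (f p) (f q) ∧ dX' (f p) (f q) ≤ rhoHi (dX p q))
    (K₀ : ℝ) (hK₀ : 0 ≤ K₀)
    (hdense : ∀ q : B.Total, ∃ p : A.Total, dX' (f p) q ≤ K₀) :
    ∃ (F : Γ → Λ) (C K : ℝ), 1 ≤ C ∧ 0 ≤ K ∧
      (∀ g h : Γ,
        (1 / C) * (wordLength S (g⁻¹ * h) : ℝ) - K ≤ (wordLength T ((F g)⁻¹ * F h) : ℝ) ∧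
        (wordLength T ((F g)⁻¹ * F h) : ℝ) ≤ C * (wordLength S (g⁻¹ * h) : ℝ) + K) ∧
      (∀ l : Λ, ∃ g : Γ, (wordLength T ((F g)⁻¹ * l) : ℝ) ≤ K) := by
  classical
  obtain ⟨dsymm, dtri, dzero, dnonneg, dgraph, ddiv⟩ := hdX
  obtain ⟨dsymm', dtri', dzero', dnonneg', dgraph', ddiv'⟩ := hdX'
  -- constants
  set C₁ : ℝ := max (rhoHi 1) 1 with hC₁def
  have hC₁ : 1 ≤ C₁ := le_max_right _ _
  have hrhoHi1 : rhoHi 1 ≤ C₁ := le_max_left _ _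
  obtain ⟨M₁', hM₁'⟩ : ∃ M, ∀ t, M ≤ t → 2 * K₀ + 1 < rhoLo t :=
    Filter.eventually_atTop.1 (hproper.eventually_gt_atTop (2 * K₀ + 1))
  set M₁ : ℝ := max M₁' 1 with hM₁def
  have hM₁ : 1 ≤ M₁ := le_max_right _ _
  have hM₁pos : 0 < M₁ := lt_of_lt_of_le one_pos hM₁
  obtain ⟨M₀', hM₀'⟩ : ∃ M, ∀ t, M ≤ t → 0 < rhoLo t :=
    Filter.eventually_atTop.1 (hproper.eventually_gt_atTop 0)
  set M₀ : ℝ := max M₀' 1 with hM₀def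
  have hM₀ : 1 ≤ M₀ := le_max_right _ _
  -- (H0) bounded image distance forces bounded distance
  have H0 : ∀ p q : A.Total, dX' (f p) (f q) ≤ 2 * K₀ + 1 → dX p q ≤ M₁ := by
    intro p q hpq
    by_contra hgt
    push_neg at hgt
    have h1 : M₁' ≤ dX p q := le_trans (le_trans (le_max_left _ _) hgt.le) le_rfl
    have h2 := hM₁' _ h1
    have h3 := (hbound p q).1
    linarith
  have H0' : ∀ p q : A.Total, dX' (f p) (f q) ≤ 0 → dX p q ≤ M₀ := by
    intro p q hpq
    by_contra hgt
    push_neg at hgt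
    have h1 : M₀' ≤ dX p q := le_trans (le_max_left _ _) hgt.le
    have h2 := hM₀' _ h1
    have h3 := (hbound p q).1
    linarith
  -- (H1) Lipschitz upper bound along components
  have H1 : ∀ (i : ℕ) (x y : A.X i),
      dX' (f ⟨i, x⟩) (f ⟨i, y⟩) ≤ C₁ * ((A.graph i).dist x y : ℝ) := by
    intro i x y
    have walkbd : ∀ (u v : A.X i) (w : (A.graph i).Walk u v),
        dX' (f ⟨i, u⟩) (f ⟨i, v⟩) ≤ C₁ * (w.length : ℝ) := by
      intro u v w
      induction w with
      | @nil z =>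
          have hz : dX' (f ⟨i, z⟩) (f ⟨i, z⟩) = 0 := (dzero' _ _).2 rfl
          rw [hz]
          simp
      | @cons u' v' x' h q ih =>
          have hstep : dX' (f ⟨i, u'⟩) (f ⟨i, v'⟩) ≤ C₁ := by
            have hd1 : dX ⟨i, u'⟩ ⟨i, v'⟩ = 1 := by
              rw [dgraph i u' v', SimpleGraph.dist_eq_one_iff_adj.2 h]
              norm_num
            have := (hbound ⟨i, u'⟩ ⟨i, v'⟩).2
            rw [hd1] at this
            exact le_trans this hrhoHi1
          calc dX' (f ⟨i, u'⟩) (f ⟨i, x'⟩)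
              ≤ dX' (f ⟨i, u'⟩) (f ⟨i, v'⟩) + dX' (f ⟨i, v'⟩) (f ⟨i, x'⟩) := dtri' _ _ _
            _ ≤ C₁ + C₁ * (q.length : ℝ) := add_le_add hstep ih
            _ = C₁ * (((SimpleGraph.Walk.cons h q).length : ℝ)) := by
                simp [SimpleGraph.Walk.length_cons]
                push_cast
                ring
    obtain ⟨w, hw⟩ := (hconnA i).exists_walk_length_eq_dist x y
    have := walkbd x y w
    rw [hw] at this
    exact this
  -- (H2) walk-lifting lower bound
  have H2 : ∀ (j : ℕ) (u v : B.X j) (w : (B.graph j).Walk u v) (p q : A.Total),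
      dX' (f p) ⟨j, u⟩ ≤ K₀ → dX' (f q) ⟨j, v⟩ ≤ K₀ →
      dX p q ≤ M₁ * ((w.length : ℝ) + 1) := by
    intro j u v w
    induction w with
    | @nil z =>
        intro p q hp hq
        have : dX' (f p) (f q) ≤ 2 * K₀ + 1 := by
          have h1 : dX' (f p) (f q) ≤ dX' (f p) ⟨j, z⟩ + dX' ⟨j, z⟩ (f q) := dtri' _ _ _
          have h2 : dX' ⟨j, z⟩ (f q) = dX' (f q) ⟨j, z⟩ := dsymm' _ _
          linarith
        have := H0 p q this
        have hM : (0:ℝ) ≤ M₁ := le_of_lt hM₁pos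
        calc dX p q ≤ M₁ := this
          _ ≤ M₁ * ((0 : ℝ) + 1) := by norm_num
          _ = M₁ * (((SimpleGraph.Walk.nil : (B.graph j).Walk z z).length : ℝ) + 1) := by
              simp
    | @cons u' v' x' h q ih =>
        intro p qq hp hq
        obtain ⟨p₁, hp₁⟩ := hdense ⟨j, v'⟩
        have hstep : dX p p₁ ≤ M₁ := by
          apply H0
          have h1 : dX' (f p) (f p₁) ≤ dX' (f p) ⟨j, u'⟩ + dX' ⟨j, u'⟩ ⟨j, v'⟩
              + dX' ⟨j, v'⟩ (f p₁) := by
            calc dX' (f p) (f p₁) ≤ dX' (f p) ⟨j, v'⟩ + dX' ⟨j, v'⟩ (f p₁) := dtri' _ _ _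
              _ ≤ (dX' (f p) ⟨j, u'⟩ + dX' ⟨j, u'⟩ ⟨j, v'⟩) + dX' ⟨j, v'⟩ (f p₁) := by
                  have := dtri' (f p) ⟨j, u'⟩ ⟨j, v'⟩
                  linarith
          have h2 : dX' ⟨j, u'⟩ ⟨j, v'⟩ = 1 := by
            rw [dgraph' j u' v', SimpleGraph.dist_eq_one_iff_adj.2 h]
            norm_num
          have h3 : dX' ⟨j, v'⟩ (f p₁) = dX' (f p₁) ⟨j, v'⟩ := dsymm' _ _
          linarith
        have := ih p₁ qq hp₁ hq
        calc dX p qq ≤ dX p p₁ + dX p₁ qq := dtri _ _ _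
          _ ≤ M₁ + M₁ * ((q.length : ℝ) + 1) := add_le_add hstep this
          _ = M₁ * (((SimpleGraph.Walk.cons h q).length : ℝ) + 1) := by
              simp [SimpleGraph.Walk.length_cons]
              push_cast
              ring
  -- (H3) each component of X' is hit by finitely many components of X
  have H3 : ∀ j0 : ℕ, {i : ℕ | ∃ x : A.X i, (f ⟨i, x⟩).1 = j0}.Finite := by
    intro j0
    have := B.finX j0
    obtain ⟨D, hD⟩ : ∃ D : ℝ, ∀ u v : B.X j0, dX' ⟨j0, u⟩ ⟨j0, v⟩ ≤ D := by
      obtain ⟨D, hD⟩ := (Set.finite_range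
        (fun uv : B.X j0 × B.X j0 => dX' ⟨j0, uv.1⟩ ⟨j0, uv.2⟩)).bddAbove
      exact ⟨D, fun u v => hD ⟨(u, v), rfl⟩⟩
    obtain ⟨MD, hMD⟩ : ∃ M, ∀ t, M ≤ t → D < rhoLo t :=
      Filter.eventually_atTop.1 (hproper.eventually_gt_atTop D)
    obtain ⟨N, hN⟩ := ddiv (max MD 0)
    have hpw : ∀ i ∈ {i : ℕ | ∃ x : A.X i, (f ⟨i, x⟩).1 = j0},
        ∀ i' ∈ {i : ℕ | ∃ x : A.X i, (f ⟨i, x⟩).1 = j0}, i ≠ i' → i + i' < N := by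
      rintro i ⟨x, hx⟩ i' ⟨x', hx'⟩ hne
      by_contra hge
      push_neg at hge
      have hfar := hN i i' hne hge x x'
      have hdd : dX' (f ⟨i, x⟩) (f ⟨i', x'⟩) ≤ D := by
        rw [sigma_recon (f ⟨i, x⟩) hx, sigma_recon (f ⟨i', x'⟩) hx']
        exact hD _ _
      have h1 : rhoLo (dX ⟨i, x⟩ ⟨i', x'⟩) ≤ D := le_trans (hbound _ _).1 hdd
      have h2 : max MD 0 ≤ dX ⟨i, x⟩ ⟨i', x'⟩ := le_of_lt hfar
      have := hMD _ (le_trans (le_max_left _ _) h2)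
      linarith
    have hsub : {i : ℕ | ∃ x : A.X i, (f ⟨i, x⟩).1 = j0} ⊆
        Set.Iic N ∪ {i | i ∈ {i : ℕ | ∃ x : A.X i, (f ⟨i, x⟩).1 = j0} ∧ N < i} := by
      intro i hi
      by_cases h : i ≤ N
      · exact Or.inl h
      · exact Or.inr ⟨hi, by omega⟩
    apply Set.Finite.subset (Set.Finite.union (Set.finite_Iic N) ?_) hsub
    apply Set.Subsingleton.finite
    rintro a ⟨ha, haN⟩ b ⟨hb, hbN⟩
    by_contra hne
    have := hpw a ha b hb hne
    omega
  -- (H4) eventually each component maps into a single component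
  obtain ⟨Θ₀, H4⟩ : ∃ Θ₀ : ℕ, ∀ i, Θ₀ ≤ i → ∀ x x' : A.X i,
      (f ⟨i, x⟩).1 = (f ⟨i, x'⟩).1 := by
    obtain ⟨N₁, hN₁⟩ := ddiv' C₁
    have hfin : (⋃ j0 ∈ Set.Iio N₁, {i : ℕ | ∃ x : A.X i, (f ⟨i, x⟩).1 = j0}).Finite :=
      Set.Finite.biUnion (Set.finite_Iio N₁) (fun j0 _ => H3 j0)
    obtain ⟨Θ₀', hΘ₀'⟩ := hfin.bddAbove
    refine ⟨Θ₀' + 1, ?_⟩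
    intro i hi x x'
    have havoid : ∀ y : A.X i, N₁ ≤ (f ⟨i, y⟩).1 := by
      intro y
      by_contra hlt
      push_neg at hlt
      have : i ∈ ⋃ j0 ∈ Set.Iio N₁, {i : ℕ | ∃ x : A.X i, (f ⟨i, x⟩).1 = j0} :=
        Set.mem_biUnion hlt ⟨y, rfl⟩
      have := hΘ₀' this
      omega
    have hadjstep : ∀ y y' : A.X i, (A.graph i).Adj y y' → (f ⟨i, y⟩).1 = (f ⟨i, y'⟩).1 := by
      intro y y' hadj
      by_contra hne
      have hd : dX' (f ⟨i, y⟩) (f ⟨i, y'⟩) ≤ C₁ := by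
        have := H1 i y y'
        rw [SimpleGraph.dist_eq_one_iff_adj.2 hadj] at this
        simpa using this
      have hges : N₁ ≤ (f ⟨i, y⟩).1 + (f ⟨i, y'⟩).1 :=
        le_trans (havoid y) (Nat.le_add_right _ _)
      have := hN₁ (f ⟨i, y⟩).1 (f ⟨i, y'⟩).1 hne hges (f ⟨i, y⟩).2 (f ⟨i, y'⟩).2
      rw [Sigma.eta, Sigma.eta] at this
      linarith
    obtain ⟨w, -⟩ := (hconnA i).exists_walk_length_eq_dist x x'
    clear hi
    induction w with
    | nil => rfl
    | @cons a b c hadj q ih => exact (hadjstep a b hadj).trans ih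
  -- the per-scale construction
  have keyProp : ∀ n : ℕ, ∃ Fn : Γ → Λ,
      (∀ g h : Γ, wordLength S g ≤ n → wordLength S h ≤ n →
        ((wordLength T ((Fn g)⁻¹ * Fn h) : ℝ) ≤ C₁ * (wordLength S (g⁻¹ * h) : ℝ) ∧
         (wordLength S (g⁻¹ * h) : ℝ) ≤ M₁ * ((wordLength T ((Fn g)⁻¹ * Fn h) : ℝ) + 1))) ∧
      ((wordLength T (Fn 1) : ℝ) ≤ K₀ + 1) ∧
      (∀ l : Λ, wordLength T l ≤ n → ∃ g : Γ,
        (wordLength S g : ℝ) ≤ M₁ * ((wordLength T l : ℝ) + 1) ∧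
        (wordLength T ((Fn g)⁻¹ * l) : ℝ) ≤ K₀) := by
    intro n
    -- scale parameters
    obtain ⟨n₁, hn₁def⟩ : ∃ v : ℕ, v = n + ⌈M₁ * ((n : ℝ) + 1)⌉₊ + 1 := ⟨_, rfl⟩
    obtain ⟨R_A, hRAdef⟩ : ∃ v : ℕ, v = 10 * n₁ + 20 := ⟨_, rfl⟩
    obtain ⟨D_B, hDBdef⟩ : ∃ v : ℕ, v = ⌈K₀ + C₁ * (n₁ : ℝ)⌉₊ := ⟨_, rfl⟩
    obtain ⟨n₂, hn₂def⟩ : ∃ v : ℕ, v = D_B + n + 5 := ⟨_, rfl⟩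
    obtain ⟨R_B, hRBdef⟩ : ∃ v : ℕ, v = 10 * n₂ + 20 := ⟨_, rfl⟩
    obtain ⟨MA, hMAdef⟩ : ∃ v : ℕ, v = ⌈M₀⌉₊ := ⟨_, rfl⟩
    obtain ⟨VA, hVAdef⟩ : ∃ v : ℕ, v = (2 * S.card + 1) ^ MA := ⟨_, rfl⟩
    obtain ⟨MB, hMBdef⟩ : ∃ v : ℕ, v = ⌈2 * K₀⌉₊ := ⟨_, rfl⟩
    obtain ⟨VB, hVBdef⟩ : ∃ v : ℕ, v = (2 * T.card + 1) ^ MB := ⟨_, rfl⟩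
    have hVA1 : 1 ≤ VA := by rw [hVAdef]; exact Nat.one_le_pow _ _ (by omega)
    have hVB1 : 1 ≤ VB := by rw [hVBdef]; exact Nat.one_le_pow _ _ (by omega)
    obtain ⟨ε₀, hε₀def⟩ : ∃ v : ℝ, v = 1 / (4 * (VA : ℝ) * (VB : ℝ)) := ⟨_, rfl⟩
    have hVA1R : (1:ℝ) ≤ (VA:ℝ) := by exact_mod_cast hVA1
    have hVB1R : (1:ℝ) ≤ (VB:ℝ) := by exact_mod_cast hVB1
    have hε₀pos : 0 < ε₀ := by
      rw [hε₀def]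
      have h4 : (0:ℝ) < 4 * (VA:ℝ) * (VB:ℝ) := by nlinarith
      exact div_pos one_pos h4
    -- choice of the A-side threshold Θ
    obtain ⟨iA, hiA⟩ := A.ready_exists hSsymm hSgen R_A
    obtain ⟨iE, hiE⟩ : ∃ I : ℕ, ∀ i, I ≤ i → A.eps i ≤ ε₀ := by
      have := Filter.eventually_atTop.1 (A.eps_lim.eventually (gt_mem_nhds hε₀pos))
      obtain ⟨I, hI⟩ := this
      exact ⟨I, fun i hi => le_of_lt (hI i hi)⟩
    obtain ⟨NM₀, hNM₀⟩ := ddiv M₀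
    obtain ⟨NMn, hNMn⟩ := ddiv (M₁ * ((n : ℝ) + 1))
    obtain ⟨Θ, hΘdef⟩ : ∃ v : ℕ, v = max (max iA iE) (max (max NM₀ NMn) Θ₀) := ⟨_, rfl⟩
    have hΘiA : iA ≤ Θ := by rw [hΘdef]; omega
    have hΘiE : iE ≤ Θ := by rw [hΘdef]; omega
    have hΘNM₀ : NM₀ ≤ Θ := by rw [hΘdef]; omega
    have hΘNMn : NMn ≤ Θ := by rw [hΘdef]; omega
    have hΘΘ₀ : Θ₀ ≤ Θ := by rw [hΘdef]; omega
    -- choice of the B-side component index j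
    obtain ⟨jB, hjB⟩ := B.ready_exists hTsymm hTgen R_B
    obtain ⟨jE, hjE⟩ : ∃ J : ℕ, ∀ j, J ≤ j → B.eps j ≤ 1/2 := by
      have := Filter.eventually_atTop.1 (B.eps_lim.eventually (gt_mem_nhds (by norm_num : (0:ℝ) < 1/2)))
      obtain ⟨J, hJ⟩ := this
      exact ⟨J, fun j hj => le_of_lt (hJ j hj)⟩
    obtain ⟨RB0, hRB0def⟩ : ∃ v : ℝ, v = K₀ + C₁ * (n₁ : ℝ) + (n : ℝ) + 5 := ⟨_, rfl⟩
    have hRB0K₀ : K₀ ≤ RB0 := by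
      rw [hRB0def]
      have h1 : (0:ℝ) ≤ C₁ * (n₁ : ℝ) :=
        mul_nonneg (le_trans zero_le_one hC₁) (Nat.cast_nonneg _)
      have h2 : (0:ℝ) ≤ (n:ℝ) := Nat.cast_nonneg _
      linarith
    obtain ⟨NB, hNB⟩ := ddiv' RB0
    have hJfin : (⋃ i ∈ Set.Iio Θ, Set.range (fun x : A.X i => (f ⟨i, x⟩).1)).Finite := by
      refine Set.Finite.biUnion (Set.finite_Iio Θ) (fun i _ => ?_)
      have := A.finX i
      exact Set.finite_range _
    obtain ⟨J₁, hJ₁⟩ := hJfin.bddAbove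
    obtain ⟨j, hjdef⟩ : ∃ v : ℕ, v = max (max jB jE) (max NB (J₁ + 1)) := ⟨_, rfl⟩
    have hjB' : B.ready j R_B := hjB j (by rw [hjdef]; omega)
    have hjE' : B.eps j ≤ 1/2 := hjE j (by rw [hjdef]; omega)
    have hjNB : NB ≤ j := by rw [hjdef]; omega
    have hjJ₁ : J₁ + 1 ≤ j := by rw [hjdef]; omega
    have hjlow : ∀ i, i < Θ → ∀ x : A.X i, (f ⟨i, x⟩).1 ≠ j := by
      intro i hi x hx
      have : (f ⟨i, x⟩).1 ∈ ⋃ i ∈ Set.Iio Θ, Set.range (fun x : A.X i => (f ⟨i, x⟩).1) :=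
        Set.mem_biUnion hi ⟨x, rfl⟩
      have := hJ₁ this
      omega
    -- any point mapped near component j lands in component j
    have hcomp : ∀ (q : A.Total) (z' : B.X j), dX' (f q) ⟨j, z'⟩ ≤ RB0 → (f q).1 = j := by
      intro q z' hd
      by_contra hne
      have := hNB (f q).1 j hne (by omega) (f q).2 z'
      rw [Sigma.eta] at this
      linarith
    -- find a good base pair (z, p)
    have hfind : ∃ z : B.X j, z ∈ B.Y j ∧ ∃ p : A.Total,
        dX' (f p) ⟨j, z⟩ ≤ K₀ ∧ p ∈ A.Ytot := by
      by_contra hnone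
      push_neg at hnone
      have hφex : ∀ z : B.X j, ∃ p : A.Total, dX' (f p) ⟨j, z⟩ ≤ K₀ := fun z => hdense ⟨j, z⟩
      choose φ hφ using hφex
      haveI FJ : Fintype (B.X j) := @Fintype.ofFinite _ (B.finX j)
      -- facts about φ on Y j
      have hφY : ∀ z : B.X j, z ∈ B.Y j → φ z ∉ A.Ytot := fun z hz => hnone z hz (φ z) (hφ z)
      have hφcomp : ∀ z : B.X j, (f (φ z)).1 = j := fun z =>
        hcomp (φ z) z (le_trans (hφ z) hRB0K₀)
      have hφhigh : ∀ z : B.X j, Θ ≤ (φ z).1 := by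
        intro z
        by_contra hlt
        push_neg at hlt
        have h1 := hjlow (φ z).1 hlt (φ z).2
        rw [Sigma.eta] at h1
        exact h1 (hφcomp z)
      -- Finset of good points of `B.X j`
      set sY : Finset (B.X j) := Finset.univ.filter (fun z => z ∈ B.Y j) with hsYdef
      have hsYmem : ∀ z : B.X j, z ∈ sY ↔ z ∈ B.Y j := by
        intro z; simp [hsYdef]
      have hsYcard : (B.Y j).ncard = sY.card := by
        rw [hsYdef]
        rw [Set.ncard_eq_toFinset_card']
        congr 1
        ext z
        simp
      have hcardXj : Nat.card (B.X j) = (Finset.univ : Finset (B.X j)).card := by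
        rw [Nat.card_eq_fintype_card, Finset.card_univ]
      have hXj1 : 1 ≤ Nat.card (B.X j) := by
        haveI := B.finX j
        haveI := B.neX j
        exact Nat.card_pos
      -- fibers of φ are small
      have hfibφ : ∀ b ∈ sY.image φ, (sY.filter (fun z => φ z = b)).card ≤ VB := by
        intro b hb
        obtain ⟨z0, hz0, hz0b⟩ := Finset.mem_image.1 hb
        rw [hVBdef]
        apply card_le_of_dist_le (hconnB j) z0 MB
        intro y hy
        obtain ⟨hy1, hy2⟩ := Finset.mem_filter.1 hy
        have heq : φ y = φ z0 := by rw [hy2, ← hz0b]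
        have hd : dX' ⟨j, z0⟩ ⟨j, y⟩ ≤ 2 * K₀ := by
          have t1 : dX' ⟨j, z0⟩ ⟨j, y⟩ ≤ dX' ⟨j, z0⟩ (f (φ y)) + dX' (f (φ y)) ⟨j, y⟩ :=
            dtri' _ _ _
          have t2 : dX' ⟨j, z0⟩ (f (φ y)) = dX' (f (φ y)) ⟨j, z0⟩ := dsymm' _ _
          have t3 := hφ y
          have t4 := hφ z0
          rw [heq] at t1 t2 t3
          linarith [t1, t2, t3, t4]
        rw [dgraph' j z0 y] at hd
        have hMBle : 2 * K₀ ≤ (MB : ℝ) := by rw [hMBdef]; exact Nat.le_ceil _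
        exact_mod_cast le_trans hd hMBle
      have hstep2 : sY.card ≤ VB * (sY.image φ).card :=
        Finset.card_le_mul_card_image sY VB hfibφ
      -- the image consists of bad points in high components mapping to component j
      have himg : ∀ p ∈ sY.image φ, Θ ≤ p.1 ∧ p ∉ A.Ytot ∧ (f p).1 = j := by
        intro p hp
        obtain ⟨z, hz, rfl⟩ := Finset.mem_image.1 hp
        exact ⟨hφhigh z, hφY z ((hsYmem z).1 hz), hφcomp z⟩
      -- count the image componentwise
      -- index set of components appearing in the image
      set idx : Finset ℕ := (sY.image φ).image Sigma.fst with hidxdef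
      have hidx : ∀ i ∈ idx, Θ ≤ i ∧ ∀ x : A.X i, (f ⟨i, x⟩).1 = j := by
        intro i hi
        obtain ⟨p, hp, hpi⟩ := Finset.mem_image.1 hi
        obtain ⟨hΘi, hpbad, hpcomp⟩ := himg p hp
        subst hpi
        refine ⟨hΘi, fun x => ?_⟩
        have h4 := H4 p.1 (le_trans hΘΘ₀ hΘi) x p.2
        rw [Sigma.eta] at h4
        rw [h4]
        exact hpcomp
      have hsplit : (sY.image φ).card =
          ∑ i ∈ idx, ((sY.image φ).filter (fun p => p.1 = i)).card :=
        Finset.card_eq_sum_card_fiberwise (fun p hp => Finset.mem_image_of_mem _ hp)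
      have hperi : ∀ i ∈ idx, ((sY.image φ).filter (fun p => p.1 = i)).card ≤
          ((A.Y i)ᶜ).ncard := by
        intro i _
        haveI := A.finX i
        haveI : Fintype (A.X i) := Fintype.ofFinite _
        haveI : Nonempty (A.X i) := A.neX i
        set e : A.Total → A.X i := fun p =>
          if h : p.1 = i then cast (congrArg A.X h) p.2 else Classical.arbitrary _ with hedef
        have hrecon : ∀ p : A.Total, ∀ h : p.1 = i, p = ⟨i, e p⟩ := by
          intro p h
          rw [hedef]
          simp only [dif_pos h]
          exact sigma_recon p h
        rw [show ((A.Y i)ᶜ).ncard = ((A.Y i)ᶜ).toFinset.card from Set.ncard_eq_toFinset_card' _]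
        apply Finset.card_le_card_of_injOn e
        · intro p hp
          obtain ⟨hp1, hp2⟩ := Finset.mem_filter.1 hp
          obtain ⟨-, hpbad, -⟩ := himg p hp1
          rw [Finset.mem_coe, Set.mem_toFinset]
          intro hmem
          apply hpbad
          have : p = ⟨i, e p⟩ := hrecon p hp2
          rw [this]
          exact hmem
        · intro p hp p' hp' hee
          have h1 := (Finset.mem_filter.1 hp).2
          have h2 := (Finset.mem_filter.1 hp').2
          rw [hrecon p h1, hrecon p' h2, hee]
      have hbadR : ∀ i ∈ idx, (((A.Y i)ᶜ).ncard : ℝ) ≤ ε₀ * (Nat.card (A.X i) : ℝ) := by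
        intro i hi
        haveI := A.finX i
        have hsum := Set.ncard_add_ncard_compl (A.Y i)
        have hY := A.Y_large i
        have heps : A.eps i ≤ ε₀ := hiE i (le_trans hΘiE (hidx i hi).1)
        have hcast : ((A.Y i).ncard : ℝ) + (((A.Y i)ᶜ).ncard : ℝ) = (Nat.card (A.X i) : ℝ) := by
          exact_mod_cast hsum
        have hXpos : (0:ℝ) ≤ (Nat.card (A.X i) : ℝ) := Nat.cast_nonneg _
        nlinarith [hY, hcast, heps, hXpos]
      -- total size of the involved components
      obtain ⟨sD, hsDdef⟩ : ∃ s : Finset A.Total,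
          s = idx.biUnion (fun i =>
            ((@Set.finite_univ (A.X i) (A.finX i)).toFinset).image (Sigma.mk i)) := ⟨_, rfl⟩
      have hsDmem : ∀ p : A.Total, p ∈ sD ↔ p.1 ∈ idx := by
        intro p
        rw [hsDdef]
        constructor
        · intro hp
          obtain ⟨i, hi, hpi⟩ := Finset.mem_biUnion.1 hp
          obtain ⟨x, -, rfl⟩ := Finset.mem_image.1 hpi
          exact hi
        · intro hp
          refine Finset.mem_biUnion.2 ⟨p.1, hp, ?_⟩
          exact Finset.mem_image.2 ⟨p.2, by
            rw [Set.Finite.mem_toFinset]; trivial, Sigma.eta p⟩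
      have hsDcard : sD.card = ∑ i ∈ idx, Nat.card (A.X i) := by
        rw [hsDdef]
        rw [Finset.card_biUnion]
        · apply Finset.sum_congr rfl
          intro i _
          rw [Finset.card_image_of_injective _ sigma_mk_injective]
          rw [← Set.ncard_eq_toFinset_card _ (@Set.finite_univ (A.X i) (A.finX i))]
          exact Set.ncard_univ _
        · intro a _ b _ hab
          rw [Function.onFun, Finset.disjoint_left]
          intro p hpa hpb
          obtain ⟨x, -, rfl⟩ := Finset.mem_image.1 hpa
          obtain ⟨x', -, he⟩ := Finset.mem_image.1 hpb
          exact hab (congrArg Sigma.fst he).symm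
      haveI : Nonempty (B.X j) := B.neX j
      obtain ⟨F2, hF2⟩ : ∃ F2 : A.Total → B.X j, ∀ (p : A.Total) (h : (f p).1 = j),
          f p = ⟨j, F2 p⟩ := by
        refine ⟨fun p => if h : (f p).1 = j then cast (congrArg B.X h) (f p).2
          else Classical.arbitrary _, ?_⟩
        intro p h
        simp only [dif_pos h]
        exact sigma_recon (f p) h
      have hfibF2 : ∀ b ∈ sD.image F2, (sD.filter (fun p => F2 p = b)).card ≤ VA := by
        intro b hb
        obtain ⟨p0, hp0, hp0b⟩ := Finset.mem_image.1 hb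
        have hp0i : p0.1 ∈ idx := (hsDmem p0).1 hp0
        have hfp0 : (f p0).1 = j := by
          have := (hidx p0.1 hp0i).2 p0.2
          rwa [Sigma.eta] at this
        have hsame : ∀ p ∈ sD.filter (fun p => F2 p = b), p.1 = p0.1 ∧ dX p p0 ≤ M₀ := by
          intro p hp
          obtain ⟨hp1, hp2⟩ := Finset.mem_filter.1 hp
          have hpi : p.1 ∈ idx := (hsDmem p).1 hp1
          have hfp : (f p).1 = j := by
            have := (hidx p.1 hpi).2 p.2
            rwa [Sigma.eta] at this
          have hff : f p = f p0 := by
            rw [hF2 p hfp, hF2 p0 hfp0, hp2, hp0b]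
          have hd0 : dX' (f p) (f p0) ≤ 0 := le_of_eq ((dzero' _ _).2 hff)
          have hdM₀ := H0' p p0 hd0
          constructor
          · by_contra hne
            have hΘp : Θ ≤ p.1 := (hidx p.1 hpi).1
            have := hNM₀ p.1 p0.1 hne (by omega) p.2 p0.2
            rw [Sigma.eta, Sigma.eta] at this
            linarith
          · exact hdM₀
        haveI := A.finX p0.1
        haveI : Fintype (A.X p0.1) := Fintype.ofFinite _
        haveI : Nonempty (A.X p0.1) := A.neX p0.1
        set e : A.Total → A.X p0.1 := fun p =>
          if h : p.1 = p0.1 then cast (congrArg A.X h) p.2 else Classical.arbitrary _ with hedef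
        have hrecon : ∀ p : A.Total, ∀ h : p.1 = p0.1, p = ⟨p0.1, e p⟩ := by
          intro p h
          rw [hedef]
          simp only [dif_pos h]
          exact sigma_recon p h
        calc (sD.filter (fun p => F2 p = b)).card
            ≤ (Finset.univ.filter (fun y => (A.graph p0.1).dist p0.2 y ≤ MA)).card := by
              apply Finset.card_le_card_of_injOn e
              · intro p hp
                obtain ⟨hppi, hpd⟩ := hsame p hp
                rw [Finset.mem_coe, Finset.mem_filter]
                refine ⟨Finset.mem_univ _, ?_⟩
                have h1 : dX ⟨p0.1, p0.2⟩ ⟨p0.1, e p⟩ ≤ M₀ := by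
                  rw [Sigma.eta, ← hrecon p hppi]
                  rw [dsymm]
                  exact hpd
                rw [dgraph p0.1 p0.2 (e p)] at h1
                have hMAle : M₀ ≤ (MA : ℝ) := by rw [hMAdef]; exact Nat.le_ceil _
                exact_mod_cast le_trans h1 hMAle
              · intro p hp p' hp' hee
                have h1 := (hsame p hp).1
                have h2 := (hsame p' hp').1
                rw [hrecon p h1, hrecon p' h2, hee]
          _ ≤ VA := by
              rw [hVAdef]
              exact ball_card (hconnA p0.1) p0.2 MA
      have hsDbound : sD.card ≤ VA * Nat.card (B.X j) := by
        calc sD.card ≤ VA * (sD.image F2).card :=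
              Finset.card_le_mul_card_image sD VA hfibF2
          _ ≤ VA * (Finset.univ : Finset (B.X j)).card := by
              apply Nat.mul_le_mul_left
              exact Finset.card_le_card (Finset.subset_univ _)
          _ = VA * Nat.card (B.X j) := by rw [hcardXj]
      have hstep3 : ((sY.image φ).card : ℝ) ≤ ε₀ * ((VA : ℝ) * (Nat.card (B.X j) : ℝ)) := by
        have h1 : ((sY.image φ).card : ℝ) ≤ ∑ i ∈ idx, (((A.Y i)ᶜ).ncard : ℝ) := by
          rw [hsplit]
          push_cast
          apply Finset.sum_le_sum
          intro i hi
          exact_mod_cast hperi i hi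
        have h2 : ∑ i ∈ idx, (((A.Y i)ᶜ).ncard : ℝ) ≤
            ∑ i ∈ idx, ε₀ * (Nat.card (A.X i) : ℝ) := Finset.sum_le_sum hbadR
        have h3 : ∑ i ∈ idx, ε₀ * (Nat.card (A.X i) : ℝ) =
            ε₀ * ∑ i ∈ idx, (Nat.card (A.X i) : ℝ) := by rw [Finset.mul_sum]
        have h4 : ∑ i ∈ idx, (Nat.card (A.X i) : ℝ) ≤ (VA : ℝ) * (Nat.card (B.X j) : ℝ) := by
          have : ((∑ i ∈ idx, Nat.card (A.X i) : ℕ) : ℝ) ≤ ((VA * Nat.card (B.X j) : ℕ) : ℝ) := by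
            exact_mod_cast (hsDcard ▸ hsDbound)
          push_cast at this
          convert this using 2
        have h5 : ε₀ * (∑ i ∈ idx, (Nat.card (A.X i) : ℝ)) ≤
            ε₀ * ((VA : ℝ) * (Nat.card (B.X j) : ℝ)) :=
          mul_le_mul_of_nonneg_left h4 (le_of_lt hε₀pos)
        linarith
      -- final contradiction
      have hlarge := B.Y_large j
      rw [hsYcard] at hlarge
      have hε₀VAVB : ε₀ * ((VA:ℝ) * (VB:ℝ)) = 1/4 := by
        rw [hε₀def]
        field_simp
      have hchain : (1 - B.eps j) * (Nat.card (B.X j) : ℝ) ≤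
          (VB : ℝ) * (ε₀ * ((VA : ℝ) * (Nat.card (B.X j) : ℝ))) := by
        calc (1 - B.eps j) * (Nat.card (B.X j) : ℝ) ≤ (sY.card : ℝ) := hlarge
          _ ≤ (VB : ℝ) * ((sY.image φ).card : ℝ) := by exact_mod_cast hstep2
          _ ≤ (VB : ℝ) * (ε₀ * ((VA : ℝ) * (Nat.card (B.X j) : ℝ))) := by
              apply mul_le_mul_of_nonneg_left hstep3 (by positivity)
      have hXjR : (1:ℝ) ≤ (Nat.card (B.X j) : ℝ) := by exact_mod_cast hXj1
      nlinarith [hjE', hXjR, hchain, hε₀VAVB]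
    obtain ⟨z, hzY, p, hpd, hpY⟩ := hfind
    obtain ⟨ip, px⟩ := p
    have hpY' : px ∈ A.Y ip := hpY
    have hfpj : (f ⟨ip, px⟩).1 = j := hcomp ⟨ip, px⟩ z (le_trans hpd hRB0K₀)
    have hipΘ : Θ ≤ ip := by
      by_contra hlt
      push_neg at hlt
      exact hjlow ip hlt px hfpj
    have hreadyA : A.ready ip R_A := hiA ip (le_trans hΘiA hipΘ)
    -- useful numeric facts
    obtain ⟨m₂, hm₂def⟩ : ∃ v : ℕ, v = ⌈M₁ * ((n : ℝ) + 1)⌉₊ := ⟨_, rfl⟩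
    have hm₂n₁ : n ≤ n₁ ∧ m₂ ≤ n₁ := by rw [hn₁def, hm₂def]; omega
    have hDBle : K₀ + C₁ * (n₁ : ℝ) ≤ (D_B : ℝ) := by rw [hDBdef]; exact Nat.le_ceil _
    have hDBn₂ : D_B ≤ n₂ ∧ n ≤ n₂ := by rw [hn₂def]; omega
    have hC₁0 : (0:ℝ) ≤ C₁ := le_trans zero_le_one hC₁
    -- exact distance formulas on the two orbits
    have hAdist : ∀ a b : Γ, wordLength S a ≤ n₁ → wordLength S b ≤ n₁ →
        (A.graph ip).dist (A.sigma ip a px) (A.sigma ip b px) = wordLength S (b * a⁻¹) := by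
      intro a b ha hb
      exact orbit_dist_eq (hconnA ip) hSsymm hSgen hreadyA hpY' ha hb (by rw [hRAdef]; omega)
    have hBdist : ∀ a b : Λ, wordLength T a ≤ n₂ → wordLength T b ≤ n₂ →
        (B.graph j).dist (B.sigma j a z) (B.sigma j b z) = wordLength T (b * a⁻¹) := by
      intro a b ha hb
      exact orbit_dist_eq (hconnB j) hTsymm hTgen hjB' hzY ha hb (by rw [hRBdef]; omega)
    -- the labelling map
    have labelSpec : ∀ g : Γ, ∃ c : Λ, wordLength S g ≤ n₁ →
        (f ⟨ip, A.sigma ip g⁻¹ px⟩ = ⟨j, B.sigma j c z⟩ ∧ wordLength T c ≤ D_B ∧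
         (wordLength T c : ℝ) ≤ dX' ⟨j, z⟩ (f ⟨ip, A.sigma ip g⁻¹ px⟩)) := by
      intro g
      by_cases hg : wordLength S g ≤ n₁
      swap
      · exact ⟨1, fun h => absurd h hg⟩
      have hginv : wordLength S g⁻¹ ≤ n₁ := by rw [WL.inv hSsymm hSgen]; exact hg
      have hAdg : (A.graph ip).dist px (A.sigma ip g⁻¹ px) = wordLength S g⁻¹ := by
        have h1 := hAdist 1 g⁻¹ (by rw [WL.one]; omega) hginv
        rw [inv_one, mul_one] at h1
        rw [← h1, sigma_one hpY']
      have hdzx : dX' ⟨j, z⟩ (f ⟨ip, A.sigma ip g⁻¹ px⟩) ≤ K₀ + C₁ * (n₁ : ℝ) := by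
        have t1 : dX' ⟨j, z⟩ (f ⟨ip, A.sigma ip g⁻¹ px⟩) ≤ dX' ⟨j, z⟩ (f ⟨ip, px⟩) +
            dX' (f ⟨ip, px⟩) (f ⟨ip, A.sigma ip g⁻¹ px⟩) := dtri' _ _ _
        have t2 : dX' ⟨j, z⟩ (f ⟨ip, px⟩) ≤ K₀ := by
          rw [dsymm']; exact hpd
        have t3 := H1 ip px (A.sigma ip g⁻¹ px)
        rw [hAdg] at t3
        have t4 : (wordLength S g⁻¹ : ℝ) ≤ (n₁ : ℝ) := by exact_mod_cast hginv
        have t5 : C₁ * (wordLength S g⁻¹ : ℝ) ≤ C₁ * (n₁ : ℝ) :=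
          mul_le_mul_of_nonneg_left t4 hC₁0
        linarith
      have hxgj : (f ⟨ip, A.sigma ip g⁻¹ px⟩).1 = j := by
        apply hcomp _ z
        rw [dsymm']
        rw [hRB0def]
        have : (0:ℝ) ≤ (n : ℝ) := Nat.cast_nonneg _
        linarith
      obtain ⟨u, hu⟩ : ∃ u : B.X j, f ⟨ip, A.sigma ip g⁻¹ px⟩ = ⟨j, u⟩ :=
        ⟨_, sigma_recon _ hxgj⟩
      have hdzu : (B.graph j).dist z u ≤ D_B := by
        have h1 : dX' ⟨j, z⟩ ⟨j, u⟩ ≤ (D_B : ℝ) := by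
          rw [← hu]; exact le_trans hdzx hDBle
        rw [dgraph' j z u] at h1
        exact_mod_cast h1
      obtain ⟨w, hw⟩ := (hconnB j).exists_walk_length_eq_dist z u
      obtain ⟨c, hc1, hc2⟩ := orbit_surj hTsymm hTgen hjB' hzY z u w 1
        (sigma_one hzY).symm (by rw [WL.one, hw, hRBdef]; omega)
      rw [mul_one] at hc2
      refine ⟨c, fun _ => ⟨by rw [hu, hc2], ?_, ?_⟩⟩
      · omega
      · have h1 : (wordLength T c : ℝ) ≤ ((B.graph j).dist z u : ℝ) := by
          exact_mod_cast le_trans hc1 (le_of_eq hw)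
        rw [hu, dgraph' j z u]
        exact h1
    choose cg hcg using labelSpec
    refine ⟨fun g => (cg g)⁻¹, ?_, ?_, ?_⟩
    · -- pair estimates
      intro g h hgn hhn
      have hg₁ : wordLength S g ≤ n₁ := le_trans hgn hm₂n₁.1
      have hh₁ : wordLength S h ≤ n₁ := le_trans hhn hm₂n₁.1
      obtain ⟨hgeq, hgD, -⟩ := hcg g hg₁
      obtain ⟨hheq, hhD, -⟩ := hcg h hh₁
      have hBd : (B.graph j).dist (B.sigma j (cg g) z) (B.sigma j (cg h) z) =
          wordLength T (cg h * (cg g)⁻¹) :=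
        hBdist (cg g) (cg h) (le_trans hgD hDBn₂.1) (le_trans hhD hDBn₂.1)
      have hww : wordLength T ((cg g)⁻¹⁻¹ * (cg h)⁻¹) = wordLength T (cg h * (cg g)⁻¹) := by
        have h1 : (cg g)⁻¹⁻¹ * (cg h)⁻¹ = (cg h * (cg g)⁻¹)⁻¹ := by group
        rw [h1, WL.inv hTsymm hTgen]
      have hAd : (A.graph ip).dist (A.sigma ip g⁻¹ px) (A.sigma ip h⁻¹ px) =
          wordLength S (g⁻¹ * h) := by
        have h1 := hAdist g⁻¹ h⁻¹ (by rw [WL.inv hSsymm hSgen]; exact hg₁)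
          (by rw [WL.inv hSsymm hSgen]; exact hh₁)
        rw [inv_inv] at h1
        have h2 : wordLength S (h⁻¹ * g) = wordLength S (g⁻¹ * h) := by
          have h3 : h⁻¹ * g = (g⁻¹ * h)⁻¹ := by group
          rw [h3, WL.inv hSsymm hSgen]
        rw [h1, h2]
      have hd'x : dX' (f ⟨ip, A.sigma ip g⁻¹ px⟩) (f ⟨ip, A.sigma ip h⁻¹ px⟩) =
          ((B.graph j).dist (B.sigma j (cg g) z) (B.sigma j (cg h) z) : ℝ) := by
        rw [hgeq, hheq, dgraph']
      constructor
      · -- upper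
        show (wordLength T ((cg g)⁻¹⁻¹ * (cg h)⁻¹) : ℝ) ≤ C₁ * (wordLength S (g⁻¹ * h) : ℝ)
        rw [hww]
        have h1 := H1 ip (A.sigma ip g⁻¹ px) (A.sigma ip h⁻¹ px)
        rw [hAd] at h1
        rw [hd'x] at h1
        rw [hBd] at h1
        exact h1
      · -- lower
        show (wordLength S (g⁻¹ * h) : ℝ) ≤
          M₁ * ((wordLength T ((cg g)⁻¹⁻¹ * (cg h)⁻¹) : ℝ) + 1)
        rw [hww]
        obtain ⟨w, hw⟩ := (hconnB j).exists_walk_length_eq_dist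
          (B.sigma j (cg g) z) (B.sigma j (cg h) z)
        have h2 := H2 j _ _ w ⟨ip, A.sigma ip g⁻¹ px⟩ ⟨ip, A.sigma ip h⁻¹ px⟩
          (by rw [hgeq]; exact le_of_eq_of_le ((dzero' _ _).2 rfl) hK₀)
          (by rw [hheq]; exact le_of_eq_of_le ((dzero' _ _).2 rfl) hK₀)
        rw [hw, hBd] at h2
        have h3 : dX ⟨ip, A.sigma ip g⁻¹ px⟩ ⟨ip, A.sigma ip h⁻¹ px⟩ =
            (wordLength S (g⁻¹ * h) : ℝ) := by
          rw [dgraph, hAd]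
        rw [h3] at h2
        exact h2
    · -- bound at 1
      obtain ⟨heq1, -, hreal1⟩ := hcg 1 (by rw [WL.one]; omega)
      show (wordLength T ((cg 1)⁻¹) : ℝ) ≤ K₀ + 1
      rw [WL.inv hTsymm hTgen]
      have h1 : A.sigma ip (1:Γ)⁻¹ px = px := by rw [inv_one, sigma_one hpY']
      rw [h1] at hreal1
      have h2 : dX' ⟨j, z⟩ (f ⟨ip, px⟩) ≤ K₀ := by rw [dsymm']; exact hpd
      linarith
    · -- density
      intro l hln
      have hlinv : wordLength T l⁻¹ ≤ n₂ := by
        rw [WL.inv hTsymm hTgen]; omega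
      have hzw : (B.graph j).dist z (B.sigma j l⁻¹ z) = wordLength T l := by
        have h1 := hBdist 1 l⁻¹ (by rw [WL.one]; omega) hlinv
        rw [inv_one, mul_one, WL.inv hTsymm hTgen] at h1
        rw [← h1, sigma_one hzY]
      obtain ⟨w, hw⟩ := (hconnB j).exists_walk_length_eq_dist z (B.sigma j l⁻¹ z)
      obtain ⟨p', hp'⟩ := hdense ⟨j, B.sigma j l⁻¹ z⟩
      have hdpp' : dX ⟨ip, px⟩ p' ≤ M₁ * ((wordLength T l : ℝ) + 1) := by
        have h1 := H2 j z (B.sigma j l⁻¹ z) w ⟨ip, px⟩ p' hpd hp'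
        rw [hw, hzw] at h1
        exact h1
      have hdppn : dX ⟨ip, px⟩ p' ≤ M₁ * ((n : ℝ) + 1) := by
        refine le_trans hdpp' (mul_le_mul_of_nonneg_left ?_ (le_of_lt hM₁pos))
        have : (wordLength T l : ℝ) ≤ (n : ℝ) := by exact_mod_cast hln
        linarith
      have hp'comp : p'.1 = ip := by
        by_contra hne
        have := hNMn ip p'.1 (fun hh => hne hh.symm) (by omega) px p'.2
        rw [Sigma.eta] at this
        linarith
      obtain ⟨x', hx'⟩ : ∃ x' : A.X ip, p' = ⟨ip, x'⟩ := ⟨_, sigma_recon _ hp'comp⟩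
      have hdreal : ((A.graph ip).dist px x' : ℝ) ≤ M₁ * ((wordLength T l : ℝ) + 1) := by
        rw [← dgraph ip px x', ← hx']
        exact hdpp'
      have hdnat : (A.graph ip).dist px x' ≤ m₂ := by
        have h1 : ((A.graph ip).dist px x' : ℝ) ≤ M₁ * ((n : ℝ) + 1) := by
          rw [← dgraph ip px x', ← hx']
          exact hdppn
        have h2 : M₁ * ((n : ℝ) + 1) ≤ (m₂ : ℝ) := by rw [hm₂def]; exact Nat.le_ceil _
        exact_mod_cast le_trans h1 h2
      obtain ⟨wA, hwA⟩ := (hconnA ip).exists_walk_length_eq_dist px x'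
      obtain ⟨c, hc1, hc2⟩ := orbit_surj hSsymm hSgen hreadyA hpY' px x' wA 1
        (sigma_one hpY').symm (by rw [WL.one, hwA, hRAdef]; omega)
      rw [mul_one] at hc2
      refine ⟨c⁻¹, ?_, ?_⟩
      · rw [WL.inv hSsymm hSgen]
        have h1 : (wordLength S c : ℝ) ≤ ((A.graph ip).dist px x' : ℝ) := by
          exact_mod_cast le_trans hc1 (le_of_eq hwA)
        exact le_trans h1 hdreal
      · have hg₁ : wordLength S c⁻¹ ≤ n₁ := by
          rw [WL.inv hSsymm hSgen]
          omega
        obtain ⟨hgeq, hgD, -⟩ := hcg c⁻¹ hg₁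
        rw [inv_inv] at hgeq
        have hfx' : f ⟨ip, A.sigma ip c px⟩ = ⟨j, B.sigma j (cg c⁻¹) z⟩ := hgeq
        have hBd2 : (B.graph j).dist (B.sigma j (cg c⁻¹) z) (B.sigma j l⁻¹ z) =
            wordLength T (l⁻¹ * (cg c⁻¹)⁻¹) :=
          hBdist (cg c⁻¹) l⁻¹ (le_trans hgD hDBn₂.1) hlinv
        have hww2 : wordLength T (l⁻¹ * (cg c⁻¹)⁻¹) = wordLength T ((cg c⁻¹) * l) := by
          have h1 : l⁻¹ * (cg c⁻¹)⁻¹ = ((cg c⁻¹) * l)⁻¹ := by group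
          rw [h1, WL.inv hTsymm hTgen]
        show (wordLength T (((cg c⁻¹)⁻¹)⁻¹ * l) : ℝ) ≤ K₀
        rw [inv_inv]
        have h1 : dX' (f ⟨ip, A.sigma ip c px⟩) ⟨j, B.sigma j l⁻¹ z⟩ ≤ K₀ := by
          rw [← hc2, ← hx']
          exact hp'
        rw [hfx', dgraph' j, hBd2, hww2] at h1
        exact h1
  -- assemble via an ultrafilter
  choose Fn hFn using keyProp
  obtain ⟨U, hU⟩ := Ultrafilter.exists_le (Filter.atTop : Filter ℕ)
  have hUat : ∀ m : ℕ, {n : ℕ | m ≤ n} ∈ U := fun m => hU (Filter.mem_atTop m)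
  have habs : ∀ (g : Γ) (n : ℕ), wordLength S g ≤ n →
      (wordLength T (Fn n g) : ℝ) ≤ K₀ + 1 + C₁ * (wordLength S g : ℝ) := by
    intro g n hg
    have h1 := ((hFn n).1 1 g (by simp [WL.one]) hg).1
    rw [inv_one, one_mul] at h1
    have h2 := (hFn n).2.1
    have hsplit : Fn n g = (Fn n 1) * ((Fn n 1)⁻¹ * Fn n g) := by group
    have h3 := WL.mul hTsymm hTgen (Fn n 1) ((Fn n 1)⁻¹ * Fn n g)
    rw [← hsplit] at h3
    have h4 : (wordLength T (Fn n g) : ℝ) ≤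
        (wordLength T (Fn n 1) : ℝ) + (wordLength T ((Fn n 1)⁻¹ * Fn n g) : ℝ) := by
      exact_mod_cast h3
    linarith
  have hsel : ∀ g : Γ, ∃ v : Λ, {n : ℕ | Fn n g = v} ∈ U := by
    intro g
    set β : ℕ := ⌈K₀ + 1 + C₁ * (wordLength S g : ℝ)⌉₊ with hβ
    have hfin : {v : Λ | wordLength T v ≤ β}.Finite := WL.ball_finite hTsymm hTgen β
    have hsub : {n : ℕ | wordLength S g ≤ n} ⊆
        ⋃ v ∈ {v : Λ | wordLength T v ≤ β}, {n : ℕ | Fn n g = v} := by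
      intro n hn
      refine Set.mem_biUnion (?_ : wordLength T (Fn n g) ≤ β) rfl
      have h1 := habs g n hn
      have hceil : K₀ + 1 + C₁ * (wordLength S g : ℝ) ≤ (β : ℝ) := Nat.le_ceil _
      exact_mod_cast le_trans h1 hceil
    have hmem : (⋃ v ∈ {v : Λ | wordLength T v ≤ β}, {n : ℕ | Fn n g = v}) ∈ U :=
      Filter.mem_of_superset (hUat (wordLength S g)) hsub
    obtain ⟨v, -, hv⟩ := (Ultrafilter.finite_biUnion_mem_iff hfin).1 hmem
    exact ⟨v, hv⟩
  choose F hF using hsel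
  set C : ℝ := max (max C₁ M₁) 1 with hCdef
  have hCC₁ : C₁ ≤ C := le_trans (le_max_left _ _) (le_max_left _ _)
  have hCM₁ : M₁ ≤ C := le_trans (le_max_right _ _) (le_max_left _ _)
  have hC1 : 1 ≤ C := le_max_right _ _
  have hCpos : 0 < C := lt_of_lt_of_le one_pos hC1
  set K : ℝ := K₀ + M₁ + 2 with hKdef
  have hK1 : 1 ≤ K := by simp only [hKdef]; linarith
  refine ⟨F, C, K, hC1, by linarith, ?_, ?_⟩
  · intro g h
    have hE : ({n : ℕ | Fn n g = F g} ∩ {n : ℕ | Fn n h = F h} ∩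
        {n : ℕ | max (wordLength S g) (wordLength S h) ≤ n}) ∈ U :=
      Filter.inter_mem (Filter.inter_mem (hF g) (hF h)) (hUat _)
    obtain ⟨n, ⟨hng, hnh⟩, hnn⟩ := Filter.nonempty_of_mem hE
    simp only [Set.mem_setOf_eq] at hng hnh hnn
    have h1 := (hFn n).1 g h (le_trans (le_max_left _ _) hnn) (le_trans (le_max_right _ _) hnn)
    rw [hng, hnh] at h1
    have hx : (0:ℝ) ≤ (wordLength S (g⁻¹ * h) : ℝ) := Nat.cast_nonneg _
    constructor
    · -- lower bound
      have h2 := h1.2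
      have h3 : (1 / M₁) * (wordLength S (g⁻¹ * h) : ℝ) ≤
          (wordLength T ((F g)⁻¹ * F h) : ℝ) + 1 := by
        have h4 : (1 / M₁) * (wordLength S (g⁻¹ * h) : ℝ) ≤
            (1 / M₁) * (M₁ * ((wordLength T ((F g)⁻¹ * F h) : ℝ) + 1)) :=
          mul_le_mul_of_nonneg_left h2 (by positivity)
        rwa [← mul_assoc, one_div_mul_cancel hM₁pos.ne', one_mul] at h4
      have h5 : (1 / C) * (wordLength S (g⁻¹ * h) : ℝ) ≤
          (1 / M₁) * (wordLength S (g⁻¹ * h) : ℝ) :=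
        mul_le_mul_of_nonneg_right (one_div_le_one_div_of_le hM₁pos hCM₁) hx
      simp only [hKdef]
      linarith
    · -- upper bound
      have h2 := h1.1
      have h3 : C₁ * (wordLength S (g⁻¹ * h) : ℝ) ≤ C * (wordLength S (g⁻¹ * h) : ℝ) :=
        mul_le_mul_of_nonneg_right hCC₁ hx
      simp only [hKdef]
      linarith
  · intro l
    set gg : ℕ → Γ := fun n => if hc : wordLength T l ≤ n then ((hFn n).2.2 l hc).choose else 1
      with hggdef
    have hggspec : ∀ n : ℕ, wordLength T l ≤ n →
        (wordLength S (gg n) : ℝ) ≤ M₁ * ((wordLength T l : ℝ) + 1) ∧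
        (wordLength T ((Fn n (gg n))⁻¹ * l) : ℝ) ≤ K₀ := by
      intro n hc
      simp only [hggdef, dif_pos hc]
      exact ((hFn n).2.2 l hc).choose_spec
    set βl : ℕ := ⌈M₁ * ((wordLength T l : ℝ) + 1)⌉₊ with hβl
    have hfin : {v : Γ | wordLength S v ≤ βl}.Finite := WL.ball_finite hSsymm hSgen βl
    have hsub : {n : ℕ | wordLength T l ≤ n} ⊆
        ⋃ v ∈ {v : Γ | wordLength S v ≤ βl}, {n : ℕ | gg n = v} := by
      intro n hn
      refine Set.mem_biUnion (?_ : wordLength S (gg n) ≤ βl) rfl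
      have h1 := (hggspec n hn).1
      have hceil : M₁ * ((wordLength T l : ℝ) + 1) ≤ (βl : ℝ) := Nat.le_ceil _
      exact_mod_cast le_trans h1 hceil
    have hmem : (⋃ v ∈ {v : Γ | wordLength S v ≤ βl}, {n : ℕ | gg n = v}) ∈ U :=
      Filter.mem_of_superset (hUat (wordLength T l)) hsub
    obtain ⟨gstar, -, hgstar⟩ := (Ultrafilter.finite_biUnion_mem_iff hfin).1 hmem
    refine ⟨gstar, ?_⟩
    have hE : ({n : ℕ | gg n = gstar} ∩ {n : ℕ | Fn n gstar = F gstar} ∩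
        {n : ℕ | wordLength T l ≤ n}) ∈ U :=
      Filter.inter_mem (Filter.inter_mem hgstar (hF gstar)) (hUat _)
    obtain ⟨n, ⟨hn1, hn2⟩, hn3⟩ := Filter.nonempty_of_mem hE
    simp only [Set.mem_setOf_eq] at hn1 hn2 hn3
    have h1 := (hggspec n hn3).2
    rw [hn1, hn2] at h1
    simp only [hKdef]
    linarith
end
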